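/- arXiv:2310.08269 — 11 statements merged into one kernel-verified Lean document; each statement's English description precedes it below -/
import Mathlib

section
/- Let p be a prime, let F be a finite group whose order is coprime to p, let H = ⊕_{n∈ℕ} ℤ/pℤ be the direct sum of countably many copies of the cyclic group of order p, and let G = H × F. Then every group topology τ on G is a product topology: there exist a group topology τ_H on H and a group topology τ_F on F such that τ coincides with the product topology of (H, τ_H) and (F, τ_F). -/
/-- The pullback of a group topology along a group homomorphism. -/
def GroupTopology.comapHom {A B : Type} [Group A] [Group B] (f : A →* B)
    (τ : GroupTopology B) : GroupTopology A :=
  letI := τ.toTopologicalSpace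
  haveI := τ.toIsTopologicalGroup
  { toTopologicalSpace := TopologicalSpace.induced f τ.toTopologicalSpace
    toIsTopologicalGroup := topologicalGroup_induced f }

/-- If the two "coordinate projection" maps of a topological group structure on a
product group are continuous, then the topology is the product of the induced
topologies on the factors. -/
theorem prod_topology_of_proj_continuous {A B : Type} [Group A] [Group B]
    [t : TopologicalSpace (A × B)] [IsTopologicalGroup (A × B)]
    (h1 : Continuous (fun g : A × B => ((g.1, (1 : B)) : A × B)))
    (h2 : Continuous (fun g : A × B => (((1 : A), g.2) : A × B))) :
    t = @instTopologicalSpaceProd A B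
        (t.induced (fun a : A => ((a, (1 : B)) : A × B)))
        (t.induced (fun b : B => (((1 : A), b) : A × B))) := by
  set t1 : TopologicalSpace A := t.induced (fun a : A => ((a, (1 : B)) : A × B)) with ht1
  set t2 : TopologicalSpace B := t.induced (fun b : B => (((1 : A), b) : A × B)) with ht2
  apply le_antisymm
  · refine le_inf ?_ ?_
    · rw [ht1, induced_compose]
      exact continuous_iff_le_induced.mp h1
    · rw [ht2, induced_compose]
      exact continuous_iff_le_induced.mp h2
  · set tp : TopologicalSpace (A × B) := @instTopologicalSpaceProd A B t1 t2 with htp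
    have f1 : @Continuous A (A × B) t1 t (fun a : A => ((a, (1 : B)) : A × B)) :=
      continuous_induced_dom
    have f2 : @Continuous B (A × B) t2 t (fun b : B => (((1 : A), b) : A × B)) :=
      continuous_induced_dom
    have p1 : @Continuous (A × B) A tp t1 Prod.fst := @continuous_fst A B t1 t2
    have p2 : @Continuous (A × B) B tp t2 Prod.snd := @continuous_snd A B t1 t2
    have m1 : @Continuous (A × B) (A × B) tp t (fun g : A × B => ((g.1, (1 : B)) : A × B)) :=
      @Continuous.comp (A × B) A (A × B) tp t1 t _ _ f1 p1
    have m2 : @Continuous (A × B) (A × B) tp t (fun g : A × B => (((1 : A), g.2) : A × B)) :=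
      @Continuous.comp (A × B) B (A × B) tp t2 t _ _ f2 p2
    have mm : @Continuous (A × B) (A × B) tp t
        (fun g : A × B => ((g.1, (1 : B)) : A × B) * (((1 : A), g.2) : A × B)) :=
      @Continuous.mul (A × B) t _ _ (A × B) tp _ _ m1 m2
    have hid : (fun g : A × B => ((g.1, (1 : B)) : A × B) * (((1 : A), g.2) : A × B))
        = (id : A × B → A × B) := by
      funext g
      simp [Prod.ext_iff]
    rw [hid] at mm
    exact continuous_id_iff_le.mp mm

/-- Let `p` be a prime, `F` a finite group of order coprime to `p`,
`H = ⊕_{n ∈ ℕ} ℤ/pℤ` the direct sum of countably many copies of the cyclic group of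
order `p` (written multiplicatively, so that it can be paired with `F`), and
`G = H × F`. Then every group topology `τ` on `G` is a product topology: there are a
group topology `τ_H` on `H` and a group topology `τ_F` on `F` such that `τ` is the
product topology of `(H, τ_H)` and `(F, τ_F)`. -/
theorem groupTopology_on_product_is_product (p : ℕ) (hp : p.Prime)
    (F : Type) [Group F] [Finite F] (hcop : Nat.Coprime (Nat.card F) p)
    (τ : GroupTopology (Multiplicative (DirectSum ℕ fun _ : ℕ => ZMod p) × F)) :
    ∃ (τH : GroupTopology (Multiplicative (DirectSum ℕ fun _ : ℕ => ZMod p)))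
      (τF : GroupTopology F),
      τ.toTopologicalSpace =
        @instTopologicalSpaceProd _ _ τH.toTopologicalSpace τF.toTopologicalSpace := by
  classical
  set H := Multiplicative (DirectSum ℕ fun _ : ℕ => ZMod p) with hHdef
  letI t : TopologicalSpace (H × F) := τ.toTopologicalSpace
  haveI : IsTopologicalGroup (H × F) := τ.toIsTopologicalGroup
  -- every element of H has order dividing p
  have hHp : ∀ h : H, h ^ p = 1 := by
    intro h
    have hx : ∀ x : DirectSum ℕ (fun _ : ℕ => ZMod p), p • x = 0 := by
      intro x
      rw [← Nat.cast_smul_eq_nsmul (ZMod p)]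
      simp [ZMod.natCast_self]
    have : (h ^ p).toAdd = 0 := by
      rw [toAdd_pow]
      exact hx _
    exact toAdd_eq_zero.mp this
  have hFN : ∀ f : F, f ^ Nat.card F = 1 := fun f => pow_card_eq_one'
  -- the first coordinate projection is continuous
  have h1 : Continuous (fun g : H × F => ((g.1, (1 : F)) : H × F)) := by
    obtain ⟨e, he1, he2⟩ := Nat.chineseRemainder hcop 0 1
    have hfun : (fun g : H × F => ((g.1, (1 : F)) : H × F)) = fun g => g ^ e := by
      funext g
      have hc1 : g.1 ^ e = g.1 := by
        have hm : e % p = 1 % p := he2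
        calc g.1 ^ e = g.1 ^ (e % p) := pow_eq_pow_mod e (hHp g.1)
          _ = g.1 ^ (1 % p) := by rw [hm]
          _ = g.1 ^ 1 := (pow_eq_pow_mod 1 (hHp g.1)).symm
          _ = g.1 := pow_one _
      have hc2 : g.2 ^ e = 1 := by
        obtain ⟨c, rfl⟩ := (Nat.modEq_zero_iff_dvd.mp he1)
        rw [pow_mul, hFN, one_pow]
      refine Prod.ext ?_ ?_
      · rw [Prod.pow_fst, hc1]
      · rw [Prod.pow_snd, hc2]
    rw [hfun]
    exact continuous_pow e
  -- the second coordinate projection is continuous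
  have h2 : Continuous (fun g : H × F => (((1 : H), g.2) : H × F)) := by
    obtain ⟨d, hd1, hd2⟩ := Nat.chineseRemainder hcop 1 0
    have hfun : (fun g : H × F => (((1 : H), g.2) : H × F)) = fun g => g ^ d := by
      funext g
      have hc1 : g.1 ^ d = 1 := by
        have hm : d % p = 0 % p := hd2
        calc g.1 ^ d = g.1 ^ (d % p) := pow_eq_pow_mod d (hHp g.1)
          _ = g.1 ^ (0 % p) := by rw [hm]
          _ = g.1 ^ 0 := by rw [Nat.zero_mod]
          _ = 1 := pow_zero _
      have hc2 : g.2 ^ d = g.2 := by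
        have hm : d % Nat.card F = 1 % Nat.card F := hd1
        calc g.2 ^ d = g.2 ^ (d % Nat.card F) := pow_eq_pow_mod d (hFN g.2)
          _ = g.2 ^ (1 % Nat.card F) := by rw [hm]
          _ = g.2 ^ 1 := (pow_eq_pow_mod 1 (hFN g.2)).symm
          _ = g.2 := pow_one _
      refine Prod.ext ?_ ?_
      · rw [Prod.pow_fst, hc1]
      · rw [Prod.pow_snd, hc2]
    rw [hfun]
    exact continuous_pow d
  refine ⟨GroupTopology.comapHom (MonoidHom.inl H F) τ,
    GroupTopology.comapHom (MonoidHom.inr H F) τ, ?_⟩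
  have e1 : ⇑(MonoidHom.inl H F) = fun a : H => ((a, (1 : F)) : H × F) := rfl
  have e2 : ⇑(MonoidHom.inr H F) = fun b : F => (((1 : H), b) : H × F) := rfl
  show t = _
  rw [show (GroupTopology.comapHom (MonoidHom.inl H F) τ).toTopologicalSpace
      = t.induced (fun a : H => ((a, (1 : F)) : H × F)) by rw [← e1]; rfl,
    show (GroupTopology.comapHom (MonoidHom.inr H F) τ).toTopologicalSpace
      = t.induced (fun b : F => (((1 : H), b) : H × F)) by rw [← e2]; rfl]
  exact prod_topology_of_proj_continuous h1 h2
end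

section
/- (Merzon's lemma) Let G be a group and N a (not necessarily normal) subgroup of G. Let σ and τ be group topologies on G such that: (i) σ ≤ τ (τ is finer than σ); (ii) the subspace topologies induced by σ and τ on N coincide; and (iii) the quotient topologies induced by σ and τ on the left coset space G/N coincide. Then σ = τ. -/
open OrderDual Pointwise

/-- The lattice `𝓛_G` of all group topologies on `G`, ordered as in the paper:
`τ ≤ σ` iff `σ` is finer than `τ` (so the discrete topology is the top element).
This is the order dual of Mathlib's `GroupTopology G`. -/
abbrev GroupTopLattice (G : Type*) [Group G] : Type _ := (GroupTopology G)ᵒᵈ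

/-- The underlying topology of an element of `𝓛_G`. -/
def topOf {G : Type*} [Group G] (τ : GroupTopLattice G) : TopologicalSpace G :=
  (ofDual τ).toTopologicalSpace

private lemma merzon_mul_shrink {G : Type*} [Group G] [TopologicalSpace G] [IsTopologicalGroup G]
    {U : Set G} (hU : U ∈ nhds 1) : ∃ V : Set G, IsOpen V ∧ (1 : G) ∈ V ∧ V * V ⊆ U :=
  exists_open_nhds_one_mul_subset hU

private lemma merzon_inv_shrink {G : Type*} [Group G] [TopologicalSpace G] [IsTopologicalGroup G]
    {W : Set G} (hWo : IsOpen W) (hW1 : (1 : G) ∈ W) :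
    ∃ W₁ : Set G, IsOpen W₁ ∧ (1 : G) ∈ W₁ ∧ ∀ a ∈ W₁, ∀ b ∈ W₁, a⁻¹ * b ∈ W := by
  obtain ⟨V₂, hV₂o, hV₂1, hV₂⟩ := exists_open_nhds_one_mul_subset (hWo.mem_nhds hW1)
  refine ⟨V₂ ∩ V₂⁻¹, hV₂o.inter hV₂o.inv, ⟨hV₂1, by simp [hV₂1]⟩, ?_⟩
  rintro a ⟨-, ha⟩ b ⟨hb, -⟩
  exact hV₂ (Set.mul_mem_mul (Set.mem_inv.1 ha) hb)

private lemma merzon_sat_open {G : Type*} [Group G] [TopologicalSpace G] [IsTopologicalGroup G]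
    (N : Subgroup G) {V : Set G} (hV : IsOpen V) :
    IsOpen ((QuotientGroup.mk : G → G ⧸ N) ⁻¹' (QuotientGroup.mk '' V)) := by
  rw [QuotientGroup.preimage_image_mk]
  exact isOpen_iUnion fun n => hV.preimage (continuous_mul_right _)

private lemma merzon_open_mem_nhds {G : Type*} [TopologicalSpace G] {S U : Set G} {x : G}
    (hSo : IsOpen S) (hx : x ∈ S) (h : S ⊆ U) : U ∈ nhds x :=
  Filter.mem_of_superset (hSo.mem_nhds hx) h

private lemma merzon_aux {G : Type*} [Group G] (N : Subgroup G)
    (tσ tτ : TopologicalSpace G)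
    (hσ : @IsTopologicalGroup G tσ _) (hτ : @IsTopologicalGroup G tτ _)
    (hle : tτ ≤ tσ)
    (hres : TopologicalSpace.induced (Subtype.val : N → G) tσ =
      TopologicalSpace.induced (Subtype.val : N → G) tτ)
    (hquot : TopologicalSpace.coinduced (QuotientGroup.mk : G → G ⧸ N) tσ =
      TopologicalSpace.coinduced (QuotientGroup.mk : G → G ⧸ N) tτ)
    {U : Set G} (hU : U ∈ @nhds G tτ 1) : U ∈ @nhds G tσ 1 := by
  obtain ⟨V, hVo, hV1, hVU⟩ := @merzon_mul_shrink G _ tτ hτ U hU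
  -- transfer `V ∩ N` along `hres`
  have hVind : (TopologicalSpace.induced (Subtype.val : N → G) tτ).IsOpen
      ((Subtype.val : N → G) ⁻¹' V) := ⟨V, hVo, rfl⟩
  rw [← hres] at hVind
  obtain ⟨W, hWo, hWV⟩ := hVind
  have key : ∀ g, g ∈ N → g ∈ W → g ∈ V := by
    intro g hgN hgW
    exact (Set.ext_iff.1 hWV ⟨g, hgN⟩).1 hgW
  have h1W : (1 : G) ∈ W := by
    have := (Set.ext_iff.1 hWV (1 : N)).2
    simpa using this (by simpa using hV1)
  obtain ⟨W₁, hW₁o, hW₁1, hW₁⟩ := @merzon_inv_shrink G _ tσ hσ W hWo h1W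
  have hW₁τ : tτ.IsOpen W₁ := (TopologicalSpace.le_def.1 hle) W₁ hW₁o
  set V' := V ∩ W₁ with hV'def
  have hV'o : tτ.IsOpen V' := tτ.isOpen_inter V W₁ hVo hW₁τ
  have hsat : tτ.IsOpen ((QuotientGroup.mk : G → G ⧸ N) ⁻¹' (QuotientGroup.mk '' V')) :=
    @merzon_sat_open G _ tτ hτ N V' hV'o
  have hco : (TopologicalSpace.coinduced (QuotientGroup.mk : G → G ⧸ N) tτ).IsOpen
      (QuotientGroup.mk '' V') := hsat
  rw [← hquot] at hco
  have hsatσ : tσ.IsOpen ((QuotientGroup.mk : G → G ⧸ N) ⁻¹' (QuotientGroup.mk '' V')) := hco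
  set S := ((QuotientGroup.mk : G → G ⧸ N) ⁻¹' (QuotientGroup.mk '' V')) ∩ W₁ with hSdef
  have hSo : tσ.IsOpen S := tσ.isOpen_inter _ _ hsatσ hW₁o
  have hS1 : (1 : G) ∈ S := ⟨Set.mem_image_of_mem _ ⟨hV1, hW₁1⟩, hW₁1⟩
  have hSU : S ⊆ U := by
    rintro x ⟨hx1, hxW₁⟩
    obtain ⟨v, hv, hmk⟩ := hx1
    have hn : v⁻¹ * x ∈ N := QuotientGroup.eq.1 hmk
    have hnW : v⁻¹ * x ∈ W := hW₁ v hv.2 x hxW₁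
    have hnV : v⁻¹ * x ∈ V := key _ hn hnW
    have : v * (v⁻¹ * x) ∈ U := hVU (Set.mul_mem_mul hv.1 hnV)
    simpa using this
  exact @merzon_open_mem_nhds G tσ S U 1 hSo hS1 hSU

/-- Merzon's lemma. Let `G` be a group and `N` a (not necessarily normal)
subgroup of `G`. Let `σ` and `τ` be group topologies on `G` such that: (i) `σ ≤ τ`
(`τ` is finer than `σ`); (ii) the subspace topologies induced by `σ` and `τ` on `N`
coincide; (iii) the quotient topologies induced by `σ` and `τ` on the left coset space
`G ⧸ N` coincide. Then `σ = τ`. -/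
theorem merzon_lemma {G : Type*} [Group G] (N : Subgroup G) (σ τ : GroupTopLattice G)
    (hle : σ ≤ τ)
    (hres : TopologicalSpace.induced (Subtype.val : N → G) (topOf σ) =
      TopologicalSpace.induced (Subtype.val : N → G) (topOf τ))
    (hquot : TopologicalSpace.coinduced (QuotientGroup.mk : G → G ⧸ N) (topOf σ) =
      TopologicalSpace.coinduced (QuotientGroup.mk : G → G ⧸ N) (topOf τ)) :
    σ = τ := by
  have hle' : topOf τ ≤ topOf σ := hle
  have hσ : @IsTopologicalGroup G (topOf σ) _ := (ofDual σ).toIsTopologicalGroup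
  have hτ : @IsTopologicalGroup G (topOf τ) _ := (ofDual τ).toIsTopologicalGroup
  have hnhds : @nhds G (topOf σ) 1 = @nhds G (topOf τ) 1 := by
    refine le_antisymm (fun U hU => ?_) (nhds_mono hle')
    exact merzon_aux N (topOf σ) (topOf τ) hσ hτ hle' hres hquot hU
  have htop : topOf σ = topOf τ := IsTopologicalGroup.ext hσ hτ hnhds
  exact GroupTopology.toTopologicalSpace_injective htop
end

section
/- Let G be a group and N a normal subgroup of G. For every pair of group topologies σ, τ on G, the quotient topology on G/N induced by the meet σ ∧ τ (taken in the lattice of group topologies on G) equals the meet, in the lattice of group topologies on G/N, of the quotient topologies σ/N and τ/N; that is, (σ ∧ τ)/N = σ/N ∧ τ/N. -/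
open OrderDual

/-- The quotient group topology `τ/N` on `G ⧸ N`, for `N` a normal subgroup,
as an element of `𝓛_{G/N}`. -/
def quotTop {G : Type*} [Group G] (τ : GroupTopLattice G) (N : Subgroup G) [N.Normal] :
    GroupTopLattice (G ⧸ N) :=
  toDual <|
    letI := (ofDual τ).toTopologicalSpace
    haveI := (ofDual τ).toIsTopologicalGroup
    ({ toTopologicalSpace := inferInstance, toIsTopologicalGroup := inferInstance } :
      GroupTopology (G ⧸ N))

section Aux
variable {G : Type*} [Group G] (N : Subgroup G) [N.Normal]

/-- Quotient map on `GroupTopology`. -/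
def qmap (t : GroupTopology G) : GroupTopology (G ⧸ N) :=
  letI := t.toTopologicalSpace
  haveI := t.toIsTopologicalGroup
  { toTopologicalSpace := inferInstance, toIsTopologicalGroup := inferInstance }

/-- Pullback map on `GroupTopology`. -/
def rmap (s : GroupTopology (G ⧸ N)) : GroupTopology G :=
  letI := s.toTopologicalSpace
  haveI := s.toIsTopologicalGroup
  { toTopologicalSpace := TopologicalSpace.induced (QuotientGroup.mk : G → G ⧸ N) inferInstance,
    toIsTopologicalGroup := topologicalGroup_induced (QuotientGroup.mk' N) }

lemma qmap_toTop (t : GroupTopology G) :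
    (qmap N t).toTopologicalSpace =
      TopologicalSpace.coinduced (QuotientGroup.mk : G → G ⧸ N) t.toTopologicalSpace := rfl

lemma gc_qr : GaloisConnection (qmap N) (rmap N) := by
  intro t s
  rw [← GroupTopology.toTopologicalSpace_le, ← GroupTopology.toTopologicalSpace_le,
    qmap_toTop]
  exact coinduced_le_iff_le_induced

lemma quotTop_eq (τ : GroupTopLattice G) : quotTop τ N = toDual (qmap N (ofDual τ)) := rfl

end Aux

/-- Let `G` be a group and `N` a normal subgroup of `G`. For every pair of
group topologies `σ, τ` on `G`, the quotient topology on `G ⧸ N` induced by the meet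
`σ ⊓ τ` (in the lattice of group topologies on `G`) equals the meet, in the lattice of
group topologies on `G ⧸ N`, of the quotient topologies: `(σ ⊓ τ)/N = σ/N ⊓ τ/N`. -/
theorem quot_inf (G : Type*) [Group G] (N : Subgroup G) [N.Normal]
    (σ τ : GroupTopLattice G) :
    quotTop (σ ⊓ τ) N = quotTop σ N ⊓ quotTop τ N := by
  rw [quotTop_eq, quotTop_eq, quotTop_eq]
  change toDual (qmap N (ofDual σ ⊔ ofDual τ)) = toDual (qmap N (ofDual σ) ⊔ qmap N (ofDual τ))
  rw [(gc_qr N).l_sup]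
end

section
/- Let G be an infinite group and N a normal subgroup of G. Suppose σ, τ are group topologies on G such that τ covers σ in the lattice 𝓛_G of group topologies on G. Then: (a) in the lattice 𝓛_{G/N} of group topologies on G/N, either σ/N = τ/N or τ/N covers σ/N; and (b) if moreover N is contained in the centre of G, then in the lattice 𝓛_N of group topologies on N, either σ|_N = τ|_N or τ|_N covers σ|_N. -/
open OrderDual

open OrderDual Filter Set Topology Pointwise TopologicalSpace

section AuxLemmas

theorem aux_eq_or_covBy {α : Type*} [PartialOrder α] {a b : α} (hab : a ≤ b)
    (H : ∀ c, a ≤ c → c ≤ b → c = a ∨ c = b) : a = b ∨ a ⋖ b := by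
  rcases hab.lt_or_eq with hl | he
  · refine Or.inr ⟨hl, fun c hac hcb => ?_⟩
    rcases H c hac.le hcb.le with rfl | rfl
    · exact lt_irrefl _ hac
    · exact lt_irrefl _ hcb
  · exact Or.inl he

variable {G : Type*} [Group G]

theorem aux_open_mem_nhds {X : Type*} (t : TopologicalSpace X) {s : Set X} {x : X}
    (hs : IsOpen[t] s) (hx : x ∈ s) : s ∈ @nhds X t x := by
  letI := t; exact hs.mem_nhds hx

theorem aux_mem_of_mem_nhds {X : Type*} (t : TopologicalSpace X) {s : Set X} {x : X}
    (hs : s ∈ @nhds X t x) : x ∈ s := by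
  letI := t; exact mem_of_mem_nhds hs

theorem aux_nhds_induced {X Y : Type*} (t : TopologicalSpace X) (f : Y → X) (a : Y) :
    @nhds Y (t.induced f) a = Filter.comap f (@nhds X t (f a)) := by
  letI := t; exact nhds_induced f a

theorem aux_le_of_nhds_one {t t' : TopologicalSpace G}
    (ht : @IsTopologicalGroup G t _) (ht' : @IsTopologicalGroup G t' _)
    (h : @nhds G t 1 ≤ @nhds G t' 1) : t ≤ t' := by
  rw [le_iff_nhds]
  intro x
  have e1 : @nhds G t x = Filter.map (x * ·) (@nhds G t 1) := by
    letI := t; haveI := ht; exact (map_mul_left_nhds_one x).symm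
  have e2 : @nhds G t' x = Filter.map (x * ·) (@nhds G t' 1) := by
    letI := t'; haveI := ht'; exact (map_mul_left_nhds_one x).symm
  rw [e1, e2]
  exact Filter.map_mono h

theorem aux_quot (N : Subgroup G) [N.Normal]
    {S T : TopologicalSpace G} (hS : @IsTopologicalGroup G S _) (hT : @IsTopologicalGroup G T _)
    (hTS : T ≤ S)
    {R : TopologicalSpace (G ⧸ N)} (hR : @IsTopologicalGroup (G ⧸ N) R _)
    (h1 : TopologicalSpace.coinduced (QuotientGroup.mk (s := N)) T ≤ R)
    (h2 : R ≤ TopologicalSpace.coinduced (QuotientGroup.mk (s := N)) S) :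
    ∃ P : TopologicalSpace G, @IsTopologicalGroup G P _ ∧ T ≤ P ∧ P ≤ S ∧
      TopologicalSpace.coinduced (QuotientGroup.mk (s := N)) P = R := by
  set q : G → G ⧸ N := QuotientGroup.mk (s := N) with hq
  have hqsurj : Function.Surjective q := QuotientGroup.mk_surjective
  set Pind : TopologicalSpace G := TopologicalSpace.induced q R with hPind
  have hPindGrp : @IsTopologicalGroup G Pind _ := by
    letI := R; haveI := hR
    exact topologicalGroup_induced (QuotientGroup.mk' N)
  refine ⟨S ⊓ Pind, topologicalGroup_inf hS hPindGrp,
    le_inf hTS (coinduced_le_iff_le_induced.mp h1), inf_le_left, le_antisymm ?_ ?_⟩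
  · calc TopologicalSpace.coinduced q (S ⊓ Pind)
        ≤ TopologicalSpace.coinduced q Pind := coinduced_mono inf_le_right
      _ ≤ R := coinduced_le_iff_le_induced.mpr le_rfl
  · -- R ≤ coinduced q (S ⊓ Pind)
    intro U hU
    -- hU : IsOpen[coinduced q (S ⊓ Pind)] U, goal IsOpen[R] U
    have hU' : IsOpen[S ⊓ Pind] (q ⁻¹' U) := hU
    letI := R; haveI := hR
    rw [isOpen_iff_mem_nhds]
    rintro y hy
    obtain ⟨x, rfl⟩ := hqsurj y
    have hx : q ⁻¹' U ∈ @nhds G (S ⊓ Pind) x := by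
      have : x ∈ q ⁻¹' U := hy
      exact aux_open_mem_nhds (S ⊓ Pind) hU' this
    rw [_root_.nhds_inf (t₁ := S) (t₂ := Pind)] at hx
    rcases Filter.mem_inf_iff.mp hx with ⟨A, hA, B, hB, hAB⟩
    rw [hPind, nhds_induced] at hB
    rcases Filter.mem_comap.mp hB with ⟨C, hC, hCB⟩
    obtain ⟨O, hOA, hOopen, hxO⟩ : ∃ O, O ⊆ A ∧ IsOpen[S] O ∧ x ∈ O := by
      letI := S; exact mem_nhds_iff.mp hA
    have hqO : IsOpen (q '' O) := by
      have hco : IsOpen[TopologicalSpace.coinduced q S] (q '' O) := by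
        letI := S; haveI := hS
        exact QuotientGroup.isOpenMap_coe O hOopen
      exact hco.mono h2
    have hsub : q '' O ∩ C ⊆ U := by
      rintro z ⟨⟨o, hoO, rfl⟩, hzC⟩
      have hoB : o ∈ B := hCB hzC
      have : o ∈ A ∩ B := ⟨hOA hoO, hoB⟩
      rw [← hAB] at this
      exact this
    exact Filter.mem_of_superset (Filter.inter_mem (hqO.mem_nhds ⟨x, hxO, rfl⟩) hC) hsub

theorem aux_restrict (N : Subgroup G) (hc : N ≤ Subgroup.center G)
    {S T : TopologicalSpace G} (hS : @IsTopologicalGroup G S _) (hT : @IsTopologicalGroup G T _)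
    (hTS : T ≤ S)
    {R : TopologicalSpace N} (hR : @IsTopologicalGroup N R _)
    (h1 : TopologicalSpace.induced Subtype.val T ≤ R)
    (h2 : R ≤ TopologicalSpace.induced Subtype.val S) :
    ∃ P : TopologicalSpace G, @IsTopologicalGroup G P _ ∧ T ≤ P ∧ P ≤ S ∧
      TopologicalSpace.induced Subtype.val P = R := by
  classical
  set nT : Filter G := @nhds G T 1 with hnT
  set nS : Filter G := @nhds G S 1 with hnS
  set nR : Filter N := @nhds N R 1 with hnR
  have swap : ∀ (u : G) (n : N), u * (n : G) = (n : G) * u := fun u n =>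
    Subgroup.mem_center_iff.mp (hc n.2) u
  have oneT : ∀ U ∈ nT, (1 : G) ∈ U := fun U hU => aux_mem_of_mem_nhds T hU
  have oneR : ∀ V ∈ nR, (1 : N) ∈ V := fun V hV => aux_mem_of_mem_nhds R hV
  have splitT : ∀ U ∈ nT, ∃ U' ∈ nT, ∀ a ∈ U', ∀ b ∈ U', a * b ∈ U := by
    letI := T; haveI := hT; intro U hU; exact exists_nhds_one_split hU
  have splitS : ∀ U ∈ nS, ∃ U' ∈ nS, ∀ a ∈ U', ∀ b ∈ U', a * b ∈ U := by
    letI := S; haveI := hS; intro U hU; exact exists_nhds_one_split hU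
  have splitR : ∀ V ∈ nR, ∃ V' ∈ nR, ∀ a ∈ V', ∀ b ∈ V', a * b ∈ V := by
    letI := R; haveI := hR; intro V hV; exact exists_nhds_one_split hV
  have invT : ∀ U ∈ nT, ∃ U' ∈ nT, ∀ a ∈ U', a⁻¹ ∈ U := by
    letI := T; haveI := hT; intro U hU
    have htd : Filter.Tendsto (fun x : G => x⁻¹) (𝓝 1) (𝓝 1) := by
      simpa using continuous_inv.tendsto (1 : G)
    exact ⟨(fun x : G => x⁻¹) ⁻¹' U, htd hU, fun a ha => ha⟩
  have invR : ∀ V ∈ nR, ∃ V' ∈ nR, ∀ a ∈ V', a⁻¹ ∈ V := by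
    letI := R; haveI := hR; intro V hV
    have htd : Filter.Tendsto (fun x : N => x⁻¹) (𝓝 1) (𝓝 1) := by
      simpa using continuous_inv.tendsto (1 : N)
    exact ⟨(fun x : N => x⁻¹) ⁻¹' V, htd hV, fun a ha => ha⟩
  have conjT : ∀ (x₀ : G), ∀ U ∈ nT, ∃ U' ∈ nT, ∀ a ∈ U', x₀ * a * x₀⁻¹ ∈ U := by
    letI := T; haveI := hT; intro x₀ U hU
    have htd : Filter.Tendsto (fun x : G => x₀ * x * x₀⁻¹) (𝓝 1) (𝓝 1) := by
      have h : Continuous (fun x : G => x₀ * x * x₀⁻¹) :=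
        (continuous_const.mul continuous_id).mul continuous_const
      simpa using h.tendsto (1 : G)
    exact ⟨(fun x : G => x₀ * x * x₀⁻¹) ⁻¹' U, htd hU, fun a ha => ha⟩
  -- the group filter basis
  set Bsets : Set (Set G) :=
    {s | ∃ U ∈ nT, ∃ V ∈ nR, s = U * (Subtype.val '' V)} with hBsets
  have memBsets : ∀ U ∈ nT, ∀ V ∈ nR, U * (Subtype.val '' V) ∈ Bsets :=
    fun U hU V hV => ⟨U, hU, V, hV, rfl⟩
  set B : GroupFilterBasis G :=
    { sets := Bsets
      nonempty := ⟨Set.univ * (Subtype.val '' Set.univ), Set.univ, univ_mem, Set.univ, univ_mem,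
        rfl⟩
      inter_sets := by
        rintro s₁ s₂ ⟨U₁, hU₁, V₁, hV₁, rfl⟩ ⟨U₂, hU₂, V₂, hV₂, rfl⟩
        refine ⟨(U₁ ∩ U₂) * (Subtype.val '' (V₁ ∩ V₂)),
          memBsets _ (inter_mem hU₁ hU₂) _ (inter_mem hV₁ hV₂), subset_inter ?_ ?_⟩
        · exact Set.mul_subset_mul inter_subset_left (Set.image_mono inter_subset_left)
        · exact Set.mul_subset_mul inter_subset_right (Set.image_mono inter_subset_right)
      one' := by
        rintro s ⟨U, hU, V, hV, rfl⟩
        simpa using Set.mul_mem_mul (oneT U hU) (Set.mem_image_of_mem Subtype.val (oneR V hV))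
      mul' := by
        rintro s ⟨U, hU, V, hV, rfl⟩
        obtain ⟨U', hU', hU'mul⟩ := splitT U hU
        obtain ⟨V', hV', hV'mul⟩ := splitR V hV
        refine ⟨U' * (Subtype.val '' V'), memBsets _ hU' _ hV', ?_⟩
        rintro z hz
        rw [Set.mem_mul] at hz
        obtain ⟨a, ha, b, hb, rfl⟩ := hz
        rw [Set.mem_mul] at ha hb
        obtain ⟨u₁, hu₁, _, ⟨n₁, hn₁, rfl⟩, rfl⟩ := ha
        obtain ⟨u₂, hu₂, _, ⟨n₂, hn₂, rfl⟩, rfl⟩ := hb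
        have key : u₁ * (n₁ : G) * (u₂ * (n₂ : G))
            = (u₁ * u₂) * ((n₁ * n₂ : N) : G) := by
          push_cast
          rw [mul_assoc u₁, ← mul_assoc ((n₁ : G)) u₂ ((n₂ : G)), ← swap u₂ n₁,
            mul_assoc u₂, ← mul_assoc u₁]
        rw [key]
        exact Set.mul_mem_mul (hU'mul _ hu₁ _ hu₂)
          (Set.mem_image_of_mem _ (hV'mul _ hn₁ _ hn₂))
      inv' := by
        rintro s ⟨U, hU, V, hV, rfl⟩
        obtain ⟨U', hU', hU'inv⟩ := invT U hU
        obtain ⟨V', hV', hV'inv⟩ := invR V hV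
        refine ⟨U' * (Subtype.val '' V'), memBsets _ hU' _ hV', ?_⟩
        rintro z hz
        rw [Set.mem_mul] at hz
        obtain ⟨u, hu, _, ⟨n, hn, rfl⟩, rfl⟩ := hz
        have key : (u * (n : G))⁻¹ = u⁻¹ * ((n⁻¹ : N) : G) := by
          rw [mul_inv_rev]
          exact (swap u⁻¹ n⁻¹).symm
        show (u * (n : G))⁻¹ ∈ U * (Subtype.val '' V)
        rw [key]
        exact Set.mul_mem_mul (hU'inv _ hu) (Set.mem_image_of_mem _ (hV'inv _ hn))
      conj' := by
        intro x₀
        rintro s ⟨U, hU, V, hV, rfl⟩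
        obtain ⟨U', hU', hU'conj⟩ := conjT x₀ U hU
        refine ⟨U' * (Subtype.val '' V), memBsets _ hU' _ hV, ?_⟩
        rintro z hz
        rw [Set.mem_mul] at hz
        obtain ⟨u, hu, _, ⟨n, hn, rfl⟩, rfl⟩ := hz
        have key : x₀ * (u * (n : G)) * x₀⁻¹ = (x₀ * u * x₀⁻¹) * (n : G) := by
          rw [← mul_assoc x₀ u ((n : G)), mul_assoc (x₀ * u) ((n : G)) x₀⁻¹,
            ← swap x₀⁻¹ n, ← mul_assoc]
        show x₀ * (u * (n : G)) * x₀⁻¹ ∈ U * (Subtype.val '' V)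
        rw [key]
        exact Set.mul_mem_mul (hU'conj _ hu) (Set.mem_image_of_mem _ hn) } with hB
  set P : TopologicalSpace G := B.topology with hP
  have hPGrp : @IsTopologicalGroup G P _ := B.isTopologicalGroup
  have hnP : @nhds G P 1 = B.toFilterBasis.filter := B.nhds_one_eq
  have memP : ∀ s : Set G, s ∈ B.toFilterBasis.filter ↔ ∃ t ∈ Bsets, t ⊆ s := fun s =>
    B.toFilterBasis.mem_filter_iff
  -- T ≤ P
  have hTP : T ≤ P := by
    apply aux_le_of_nhds_one hT hPGrp
    rw [hnP]
    intro s hs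
    obtain ⟨t, ⟨U, hU, V, hV, rfl⟩, hts⟩ := (memP s).mp hs
    refine Filter.mem_of_superset hU (Set.Subset.trans ?_ hts)
    intro a ha
    simpa using Set.mul_mem_mul ha (Set.mem_image_of_mem Subtype.val (oneR V hV))
  -- P ≤ S
  have hPS : P ≤ S := by
    apply aux_le_of_nhds_one hPGrp hS
    intro W hW
    obtain ⟨A, hA, hAmul⟩ := splitS W hW
    have hA' : A ∈ nT := nhds_mono hTS hA
    have hVmem : Subtype.val ⁻¹' A ∈ nR := by
      apply (le_iff_nhds R (TopologicalSpace.induced Subtype.val S)).mp h2 1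
      have : @nhds N (TopologicalSpace.induced Subtype.val S) 1
          = Filter.comap Subtype.val nS := aux_nhds_induced S Subtype.val 1
      rw [this]
      exact Filter.preimage_mem_comap hA
    rw [hnP]
    refine (memP W).mpr ⟨A * (Subtype.val '' (Subtype.val ⁻¹' A)),
      memBsets _ hA' _ hVmem, ?_⟩
    rintro z hz
    rw [Set.mem_mul] at hz
    obtain ⟨a, ha, _, ⟨n, hn, rfl⟩, rfl⟩ := hz
    exact hAmul _ ha _ hn
  -- induced val P = R
  have hind : TopologicalSpace.induced Subtype.val P = R := by
    have hindGrp : @IsTopologicalGroup N (TopologicalSpace.induced Subtype.val P) _ := by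
      letI := P; haveI := hPGrp
      exact topologicalGroup_induced N.subtype
    apply IsTopologicalGroup.ext hindGrp hR
    have e : @nhds N (TopologicalSpace.induced Subtype.val P) 1
        = Filter.comap Subtype.val B.toFilterBasis.filter :=
      (aux_nhds_induced P Subtype.val 1).trans
        (congrArg (Filter.comap Subtype.val) hnP)
    rw [e]
    apply le_antisymm
    · -- comap ≤ nR
      intro V₀ hV₀
      obtain ⟨V₁, hV₁, hV₁mul⟩ := splitR V₀ hV₀
      have hV₁' : V₁ ∈ @nhds N (TopologicalSpace.induced Subtype.val T) 1 :=
        nhds_mono h1 hV₁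
      have e' : @nhds N (TopologicalSpace.induced Subtype.val T) 1
          = Filter.comap Subtype.val nT := aux_nhds_induced T Subtype.val 1
      rw [e'] at hV₁'
      obtain ⟨U, hU, hUV₁⟩ := Filter.mem_comap.mp hV₁'
      refine Filter.mem_comap.mpr ⟨U * (Subtype.val '' V₁),
        B.toFilterBasis.mem_filter_of_mem (memBsets _ hU _ hV₁), ?_⟩
      rintro n hn
      have hn' : (n : G) ∈ U * (Subtype.val '' V₁) := hn
      rw [Set.mem_mul] at hn'
      obtain ⟨u, hu, _, ⟨m, hm, rfl⟩, heq⟩ := hn'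
      have hk : ((n * m⁻¹ : N) : G) = u := by
        push_cast
        rw [← heq]
        group
      have hkV : (n * m⁻¹ : N) ∈ V₁ := hUV₁ (by rw [Set.mem_preimage, hk]; exact hu)
      have : (n * m⁻¹) * m ∈ V₀ := hV₁mul _ hkV _ hm
      simpa using this
    · -- nR ≤ comap
      intro t ht
      obtain ⟨s, hs, hst⟩ := Filter.mem_comap.mp ht
      obtain ⟨t', ⟨U, hU, V, hV, rfl⟩, hsub⟩ := (memP s).mp hs
      refine Filter.mem_of_superset hV ?_
      intro m hm
      apply hst
      apply hsub
      show (m : G) ∈ U * (Subtype.val '' V)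
      have : (1 : G) * (m : G) ∈ U * (Subtype.val '' V) :=
        Set.mul_mem_mul (oneT U hU) (Set.mem_image_of_mem _ hm)
      simpa using this
  exact ⟨P, hPGrp, hTP, hPS, hind⟩

end AuxLemmas


/-- The subspace group topology `τ|_N` on a subgroup `N`, as an element of `𝓛_N`. -/
def restrictTop {G : Type*} [Group G] (τ : GroupTopLattice G) (N : Subgroup G) :
    GroupTopLattice N :=
  toDual <|
    letI := (ofDual τ).toTopologicalSpace
    haveI := (ofDual τ).toIsTopologicalGroup
    ({ toTopologicalSpace := inferInstance, toIsTopologicalGroup := inferInstance } :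
      GroupTopology N)

/-- Let `G` be an infinite group and `N` a normal subgroup. Suppose `σ, τ`
are group topologies on `G` such that `τ` covers `σ` in the lattice `𝓛_G`. Then:
(a) in `𝓛_{G/N}`, either `σ/N = τ/N` or `τ/N` covers `σ/N`; and
(b) if moreover `N` is contained in the centre of `G`, then in `𝓛_N`, either
`σ|_N = τ|_N` or `τ|_N` covers `σ|_N`. -/
theorem covBy_quot_and_restrict {G : Type*} [Group G] [Infinite G]
    (N : Subgroup G) [N.Normal] (σ τ : GroupTopLattice G) (h : σ ⋖ τ) :
    (quotTop σ N = quotTop τ N ∨ quotTop σ N ⋖ quotTop τ N) ∧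
      (N ≤ Subgroup.center G →
        (restrictTop σ N = restrictTop τ N ∨ restrictTop σ N ⋖ restrictTop τ N)) := by
  have hlt : ofDual τ < ofDual σ := h.1
  have hmid : ∀ ρ : GroupTopology G, ofDual τ ≤ ρ → ρ ≤ ofDual σ →
      ρ = ofDual τ ∨ ρ = ofDual σ := by
    intro ρ h₁ h₂
    rcases h₁.lt_or_eq with hl₁ | he₁
    · rcases h₂.lt_or_eq with hl₂ | he₂
      · exact absurd (show toDual ρ < τ from hl₁) (h.2 (show σ < toDual ρ from hl₂))
      · exact Or.inr he₂
    · exact Or.inl he₁.symm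
  constructor
  · -- part (a)
    refine aux_eq_or_covBy ?_ ?_
    · show TopologicalSpace.coinduced (QuotientGroup.mk (s := N))
          (ofDual τ).toTopologicalSpace ≤
        TopologicalSpace.coinduced (QuotientGroup.mk (s := N)) (ofDual σ).toTopologicalSpace
      exact coinduced_mono
        (show (ofDual τ).toTopologicalSpace ≤ (ofDual σ).toTopologicalSpace from hlt.le)
    · intro c hac hcb
      obtain ⟨P, hP, hTP, hPS, hPco⟩ := aux_quot N (ofDual σ).toIsTopologicalGroup
        (ofDual τ).toIsTopologicalGroup
        (show (ofDual τ).toTopologicalSpace ≤ (ofDual σ).toTopologicalSpace from hlt.le)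
        (ofDual c).toIsTopologicalGroup
        (show TopologicalSpace.coinduced (QuotientGroup.mk (s := N))
            (ofDual τ).toTopologicalSpace ≤ (ofDual c).toTopologicalSpace from hcb)
        (show (ofDual c).toTopologicalSpace ≤
          TopologicalSpace.coinduced (QuotientGroup.mk (s := N))
            (ofDual σ).toTopologicalSpace from hac)
      rcases hmid ⟨P, hP⟩ (show (ofDual τ).toTopologicalSpace ≤ P from hTP)
          (show P ≤ (ofDual σ).toTopologicalSpace from hPS) with he | he
      · refine Or.inr (OrderDual.ofDual.injective (GroupTopology.toTopologicalSpace_injective ?_))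
        show (ofDual c).toTopologicalSpace = (ofDual (quotTop τ N)).toTopologicalSpace
        rw [← hPco]
        show TopologicalSpace.coinduced (QuotientGroup.mk (s := N)) P =
          TopologicalSpace.coinduced (QuotientGroup.mk (s := N)) (ofDual τ).toTopologicalSpace
        exact congrArg _ (congrArg GroupTopology.toTopologicalSpace he)
      · refine Or.inl (OrderDual.ofDual.injective (GroupTopology.toTopologicalSpace_injective ?_))
        show (ofDual c).toTopologicalSpace = (ofDual (quotTop σ N)).toTopologicalSpace
        rw [← hPco]
        show TopologicalSpace.coinduced (QuotientGroup.mk (s := N)) P =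
          TopologicalSpace.coinduced (QuotientGroup.mk (s := N)) (ofDual σ).toTopologicalSpace
        exact congrArg _ (congrArg GroupTopology.toTopologicalSpace he)
  · -- part (b)
    intro hcent
    refine aux_eq_or_covBy ?_ ?_
    · show TopologicalSpace.induced (Subtype.val : N → G) (ofDual τ).toTopologicalSpace ≤
        TopologicalSpace.induced (Subtype.val : N → G) (ofDual σ).toTopologicalSpace
      exact induced_mono
        (show (ofDual τ).toTopologicalSpace ≤ (ofDual σ).toTopologicalSpace from hlt.le)
    · intro c hac hcb
      obtain ⟨P, hP, hTP, hPS, hPind⟩ := aux_restrict N hcent (ofDual σ).toIsTopologicalGroup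
        (ofDual τ).toIsTopologicalGroup
        (show (ofDual τ).toTopologicalSpace ≤ (ofDual σ).toTopologicalSpace from hlt.le)
        (ofDual c).toIsTopologicalGroup
        (show TopologicalSpace.induced (Subtype.val : N → G)
            (ofDual τ).toTopologicalSpace ≤ (ofDual c).toTopologicalSpace from hcb)
        (show (ofDual c).toTopologicalSpace ≤
          TopologicalSpace.induced (Subtype.val : N → G)
            (ofDual σ).toTopologicalSpace from hac)
      rcases hmid ⟨P, hP⟩ (show (ofDual τ).toTopologicalSpace ≤ P from hTP)
          (show P ≤ (ofDual σ).toTopologicalSpace from hPS) with he | he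
      · refine Or.inr (OrderDual.ofDual.injective (GroupTopology.toTopologicalSpace_injective ?_))
        show (ofDual c).toTopologicalSpace = (ofDual (restrictTop τ N)).toTopologicalSpace
        rw [← hPind]
        show TopologicalSpace.induced (Subtype.val : N → G) P =
          TopologicalSpace.induced (Subtype.val : N → G) (ofDual τ).toTopologicalSpace
        exact congrArg _ (congrArg GroupTopology.toTopologicalSpace he)
      · refine Or.inl (OrderDual.ofDual.injective (GroupTopology.toTopologicalSpace_injective ?_))
        show (ofDual c).toTopologicalSpace = (ofDual (restrictTop σ N)).toTopologicalSpace
        rw [← hPind]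
        show TopologicalSpace.induced (Subtype.val : N → G) P =
          TopologicalSpace.induced (Subtype.val : N → G) (ofDual σ).toTopologicalSpace
        exact congrArg _ (congrArg GroupTopology.toTopologicalSpace he)
end

section
/- Let G be a group, N a central subgroup of G, and σ ≤ τ group topologies on G. Then τ covers σ in the lattice 𝓛_G of group topologies on G if and only if one of the following holds: (a) σ|_N = τ|_N and τ/N covers σ/N in 𝓛_{G/N}; or (b) τ|_N covers σ|_N in 𝓛_N and σ/N = τ/N. -/
open OrderDual

namespace StatementSeven

open TopologicalSpace Pointwise Topology

section Basic

variable {G : Type*} [Group G] (N : Subgroup G)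

/-- The restriction of a group topology to a subgroup, as a `GroupTopology`. -/
def Rg (u : GroupTopology G) : GroupTopology N :=
  letI := u.toTopologicalSpace
  haveI := u.toIsTopologicalGroup
  { toTopologicalSpace := inferInstance, toIsTopologicalGroup := inferInstance }

/-- The quotient of a group topology by a normal subgroup, as a `GroupTopology`. -/
def Qg [N.Normal] (u : GroupTopology G) : GroupTopology (G ⧸ N) :=
  letI := u.toTopologicalSpace
  haveI := u.toIsTopologicalGroup
  { toTopologicalSpace := inferInstance, toIsTopologicalGroup := inferInstance }

/-- Comparison of group topologies is determined by neighbourhood filters of `1`. -/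
lemma gt_le_iff {X : Type*} [Group X] (a b : GroupTopology X) :
    a ≤ b ↔ @nhds X a.toTopologicalSpace 1 ≤ @nhds X b.toTopologicalSpace 1 := by
  constructor
  · intro h
    exact nhds_mono h
  · intro h
    have h2 : (a ⊓ b).toTopologicalSpace = a.toTopologicalSpace :=
      IsTopologicalGroup.ext (a ⊓ b).toIsTopologicalGroup a.toIsTopologicalGroup
        (by rw [GroupTopology.toTopologicalSpace_inf, _root_.nhds_inf, inf_eq_left.mpr h])
    exact inf_eq_left.mp (GroupTopology.toTopologicalSpace_injective h2)

lemma nhds_Rg (u : GroupTopology G) :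
    @nhds _ (Rg N u).toTopologicalSpace 1
      = Filter.comap Subtype.val (@nhds G u.toTopologicalSpace 1) := by
  letI := u.toTopologicalSpace
  have h : (Rg N u).toTopologicalSpace
      = TopologicalSpace.induced Subtype.val u.toTopologicalSpace := rfl
  rw [h, nhds_induced]
  rfl

lemma nhds_Qg [N.Normal] (u : GroupTopology G) :
    @nhds _ (Qg N u).toTopologicalSpace 1
      = Filter.map (QuotientGroup.mk) (@nhds G u.toTopologicalSpace 1) := by
  letI := u.toTopologicalSpace
  haveI := u.toIsTopologicalGroup
  exact QuotientGroup.nhds_eq N 1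

lemma Rg_mono {a b : GroupTopology G} (h : a ≤ b) : Rg N a ≤ Rg N b :=
  GroupTopology.toTopologicalSpace_le.mp (induced_mono h)

lemma Qg_mono [N.Normal] {a b : GroupTopology G} (h : a ≤ b) : Qg N a ≤ Qg N b :=
  GroupTopology.toTopologicalSpace_le.mp (coinduced_mono h)

lemma Rg_inf (a b : GroupTopology G) : Rg N (a ⊓ b) = Rg N a ⊓ Rg N b := by
  apply GroupTopology.toTopologicalSpace_injective
  show TopologicalSpace.induced _ _ = _
  rw [show (a ⊓ b).toTopologicalSpace = a.toTopologicalSpace ⊓ b.toTopologicalSpace from rfl,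
    induced_inf]
  rfl

lemma exists_nhds_inv_mul {X : Type*} [Group X] [TopologicalSpace X] [IsTopologicalGroup X]
    {s : Set X} (hs : s ∈ 𝓝 (1 : X)) :
    ∃ V ∈ 𝓝 (1 : X), ∀ v ∈ V, ∀ w ∈ V, v⁻¹ * w ∈ s := by
  have : (fun p : X × X => p.1⁻¹ * p.2) ⁻¹' s ∈ 𝓝 ((1, 1) : X × X) :=
    (continuousAt_fst.inv.mul continuousAt_snd).preimage_mem_nhds (by simpa)
  simpa only [nhds_prod_eq, Filter.mem_prod_self_iff, Set.prod_subset_iff, Set.mem_preimage]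
    using this

/-- **Lemma A**: between two comparable group topologies, equality of the restriction to a
normal subgroup and of the quotient topology forces equality. -/
lemma eq_of_Rg_eq_of_Qg_eq [N.Normal] {t s : GroupTopology G} (h : t ≤ s)
    (hR : Rg N t = Rg N s) (hQ : Qg N t = Qg N s) : t = s := by
  refine le_antisymm h ((gt_le_iff s t).mpr ?_)
  intro U hU
  obtain ⟨U₁, hU₁, hU₁U⟩ := @exists_nhds_one_split G t.toTopologicalSpace _
    t.toIsTopologicalGroup.toContinuousMul U hU
  have hcomap : Filter.comap Subtype.val (@nhds G t.toTopologicalSpace 1)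
      = Filter.comap (Subtype.val : N → G) (@nhds G s.toTopologicalSpace 1) := by
    rw [← nhds_Rg, ← nhds_Rg, hR]
  have hmem : (Subtype.val : N → G) ⁻¹' U₁ ∈
      Filter.comap (Subtype.val : N → G) (@nhds G s.toTopologicalSpace 1) := by
    rw [← hcomap]; exact Filter.preimage_mem_comap hU₁
  obtain ⟨V, hV, hVU₁⟩ := Filter.mem_comap.mp hmem
  obtain ⟨V₁, hV₁, hV₁V⟩ := @exists_nhds_inv_mul G _ s.toTopologicalSpace
    s.toIsTopologicalGroup V hV
  have hmap : Filter.map (QuotientGroup.mk (s := N)) (@nhds G t.toTopologicalSpace 1)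
      = Filter.map (QuotientGroup.mk (s := N)) (@nhds G s.toTopologicalSpace 1) := by
    rw [← nhds_Qg, ← nhds_Qg, hQ]
  have hV₁t : V₁ ∈ @nhds G t.toTopologicalSpace 1 := nhds_mono h hV₁
  have hT : U₁ ∩ V₁ ∈ @nhds G t.toTopologicalSpace 1 := Filter.inter_mem hU₁ hV₁t
  have hW : (QuotientGroup.mk (s := N)) ⁻¹' (QuotientGroup.mk '' (U₁ ∩ V₁)) ∈
      @nhds G s.toTopologicalSpace 1 := by
    have : QuotientGroup.mk '' (U₁ ∩ V₁) ∈
        Filter.map (QuotientGroup.mk (s := N)) (@nhds G t.toTopologicalSpace 1) :=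
      Filter.mem_map.mpr (Filter.mem_of_superset hT (Set.subset_preimage_image _ _))
    rw [hmap] at this
    exact this
  refine Filter.mem_of_superset (Filter.inter_mem hW hV₁) ?_
  rintro x ⟨hxW, hxV₁⟩
  obtain ⟨a, ⟨haU₁, haV₁⟩, hax⟩ := hxW
  have hnN : a⁻¹ * x ∈ N := QuotientGroup.eq.mp hax
  have hnV : a⁻¹ * x ∈ V := hV₁V a haV₁ x hxV₁
  have hnU₁ : a⁻¹ * x ∈ U₁ := hVU₁ (show (⟨a⁻¹ * x, hnN⟩ : N) ∈ _ from hnV)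
  have : a * (a⁻¹ * x) ∈ U := hU₁U a haU₁ _ hnU₁
  rwa [mul_inv_cancel_left] at this

end Basic

section Pull

variable {G : Type*} [Group G] (N : Subgroup G) [N.Normal]

/-- Pull back a group topology along the quotient map. -/
def pullQ (w : GroupTopology (G ⧸ N)) : GroupTopology G where
  toTopologicalSpace := TopologicalSpace.induced (QuotientGroup.mk) w.toTopologicalSpace
  toIsTopologicalGroup := by
    letI := w.toTopologicalSpace
    haveI := w.toIsTopologicalGroup
    exact topologicalGroup_induced (QuotientGroup.mk' N)

variable {t s : GroupTopology G} {w' : GroupTopology (G ⧸ N)}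

lemma le_P (h : t ≤ s) (hw1 : Qg N t ≤ w') : t ≤ s ⊓ pullQ N w' := by
  refine le_inf h ?_
  show t.toTopologicalSpace ≤ (pullQ N w').toTopologicalSpace
  exact coinduced_le_iff_le_induced.mp hw1

lemma Rg_P : Rg N (s ⊓ pullQ N w') = Rg N s := by
  apply GroupTopology.toTopologicalSpace_injective
  show TopologicalSpace.induced Subtype.val (s.toTopologicalSpace ⊓ _)
    = TopologicalSpace.induced Subtype.val s.toTopologicalSpace
  rw [induced_inf,
    show (pullQ N w').toTopologicalSpace
      = TopologicalSpace.induced (QuotientGroup.mk) w'.toTopologicalSpace from rfl,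
    induced_compose]
  have hconst : (QuotientGroup.mk ∘ (Subtype.val : N → G)) = fun _ => (1 : G ⧸ N) :=
    funext fun n => (QuotientGroup.eq_one_iff (n : G)).mpr n.2
  rw [hconst, @induced_const _ _ w'.toTopologicalSpace, inf_top_eq]

lemma Qg_P (hw2 : w' ≤ Qg N s) : Qg N (s ⊓ pullQ N w') = w' := by
  apply GroupTopology.toTopologicalSpace_injective
  refine IsTopologicalGroup.ext (Qg N (s ⊓ pullQ N w')).toIsTopologicalGroup
    w'.toIsTopologicalGroup ?_
  rw [nhds_Qg]
  have h1 : @nhds G (s ⊓ pullQ N w').toTopologicalSpace 1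
      = @nhds G s.toTopologicalSpace 1 ⊓
        Filter.comap (QuotientGroup.mk) (@nhds _ w'.toTopologicalSpace 1) := by
    rw [GroupTopology.toTopologicalSpace_inf, _root_.nhds_inf]
    congr 1
    letI := w'.toTopologicalSpace
    rw [show (pullQ N w').toTopologicalSpace
      = TopologicalSpace.induced (QuotientGroup.mk) w'.toTopologicalSpace from rfl, nhds_induced]
    rfl
  rw [h1, Filter.push_pull]
  have h2 : @nhds _ w'.toTopologicalSpace 1
      ≤ Filter.map (QuotientGroup.mk) (@nhds G s.toTopologicalSpace 1) := by
    rw [← nhds_Qg]; exact (gt_le_iff _ _).mp hw2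
  exact inf_eq_right.mpr h2

end Pull

section Mix

variable {G : Type*} [Group G] {N : Subgroup G}

lemma mem_of_nhds' {X : Type*} (T : TopologicalSpace X) {x : X} {s : Set X}
    (h : s ∈ @nhds X T x) : x ∈ s := letI := T; mem_of_mem_nhds h

/-- split lemma for a bundled group topology -/
lemma nhds_split {X : Type*} [Group X] (u : GroupTopology X) {S : Set X}
    (h : S ∈ @nhds X u.toTopologicalSpace 1) :
    ∃ V ∈ @nhds X u.toTopologicalSpace 1, ∀ v ∈ V, ∀ w ∈ V, v * w ∈ S := by
  letI := u.toTopologicalSpace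
  haveI := u.toIsTopologicalGroup
  exact exists_nhds_one_split h

lemma nhds_inv_mem {X : Type*} [Group X] (u : GroupTopology X) {S : Set X}
    (h : S ∈ @nhds X u.toTopologicalSpace 1) : S⁻¹ ∈ @nhds X u.toTopologicalSpace 1 := by
  letI := u.toTopologicalSpace
  haveI := u.toIsTopologicalGroup
  exact inv_mem_nhds_one X h

lemma nhds_conj_mem {X : Type*} [Group X] (u : GroupTopology X) (x₀ : X) {S : Set X}
    (h : S ∈ @nhds X u.toTopologicalSpace 1) :
    (fun g => x₀ * g * x₀⁻¹) ⁻¹' S ∈ @nhds X u.toTopologicalSpace 1 := by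
  letI := u.toTopologicalSpace
  haveI := u.toIsTopologicalGroup
  refine (((continuous_mul_left x₀).mul continuous_const).continuousAt).preimage_mem_nhds ?_
  simpa using h

/-- The "central extension" filter basis: sets `V * M` with `V` a `t`-neighbourhood of `1`
and `M` a `w`-neighbourhood of `1` in the central subgroup `N`. -/
def mixBasis (hc : N ≤ Subgroup.center G) (t : GroupTopology G) (w : GroupTopology N) :
    GroupFilterBasis G where
  sets := {A | ∃ V ∈ @nhds G t.toTopologicalSpace 1, ∃ M ∈ @nhds N w.toTopologicalSpace 1,
    A = V * (Subtype.val '' M)}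
  nonempty := ⟨_, Set.univ, Filter.univ_mem, Set.univ, Filter.univ_mem, rfl⟩
  inter_sets := by
    rintro A₁ A₂ ⟨V₁, hV₁, M₁, hM₁, rfl⟩ ⟨V₂, hV₂, M₂, hM₂, rfl⟩
    refine ⟨(V₁ ∩ V₂) * (Subtype.val '' (M₁ ∩ M₂)),
      ⟨V₁ ∩ V₂, Filter.inter_mem hV₁ hV₂, M₁ ∩ M₂, Filter.inter_mem hM₁ hM₂, rfl⟩,
      Set.subset_inter ?_ ?_⟩
    · exact Set.mul_subset_mul Set.inter_subset_left (Set.image_mono Set.inter_subset_left)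
    · exact Set.mul_subset_mul Set.inter_subset_right (Set.image_mono Set.inter_subset_right)
  one' := by
    rintro U ⟨V, hV, M, hM, rfl⟩
    have h1 : (1 : G) ∈ V := mem_of_nhds' t.toTopologicalSpace hV
    have h2 : ((1 : N) : G) ∈ Subtype.val '' M :=
      Set.mem_image_of_mem _ (mem_of_nhds' w.toTopologicalSpace hM)
    simpa using Set.mul_mem_mul h1 h2
  mul' := by
    rintro U ⟨V, hV, M, hM, rfl⟩
    obtain ⟨V₂, hV₂, hV₂V⟩ := nhds_split t hV
    obtain ⟨M₂, hM₂, hM₂M⟩ := nhds_split w hM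
    refine ⟨V₂ * (Subtype.val '' M₂), ⟨V₂, hV₂, M₂, hM₂, rfl⟩, ?_⟩
    intro x hx
    obtain ⟨y, hy, z, hz, rfl⟩ := Set.mem_mul.mp hx
    obtain ⟨v₁, hv₁, m₁, hm₁, rfl⟩ := Set.mem_mul.mp hy
    obtain ⟨v₂, hv₂, m₂, hm₂, rfl⟩ := Set.mem_mul.mp hz
    obtain ⟨n₁, hn₁, rfl⟩ := hm₁
    obtain ⟨n₂, hn₂, rfl⟩ := hm₂
    have hcomm : v₂ * (n₁ : G) = (n₁ : G) * v₂ := Subgroup.mem_center_iff.mp (hc n₁.2) v₂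
    have key : (v₁ * (n₁ : G)) * (v₂ * (n₂ : G)) = (v₁ * v₂) * ((n₁ * n₂ : N) : G) := by
      rw [Subgroup.coe_mul, mul_assoc v₁, ← mul_assoc (n₁ : G) v₂, ← hcomm, mul_assoc v₂,
        ← mul_assoc v₁]
    exact key ▸ Set.mul_mem_mul (hV₂V v₁ hv₁ v₂ hv₂)
      (Set.mem_image_of_mem _ (hM₂M n₁ hn₁ n₂ hn₂))
  inv' := by
    rintro U ⟨V, hV, M, hM, rfl⟩
    refine ⟨V⁻¹ * (Subtype.val '' M⁻¹), ⟨V⁻¹, nhds_inv_mem t hV, M⁻¹, nhds_inv_mem w hM, rfl⟩, ?_⟩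
    intro x hx
    obtain ⟨v, hv, m, hm, rfl⟩ := Set.mem_mul.mp hx
    obtain ⟨n, hn, rfl⟩ := hm
    show (v * (n : G))⁻¹ ∈ V * (Subtype.val '' M)
    have key : (v * (n : G))⁻¹ = v⁻¹ * ((n⁻¹ : N) : G) := by
      rw [mul_inv_rev, Subgroup.coe_inv]
      exact (Subgroup.mem_center_iff.mp (hc (n⁻¹).2) v⁻¹).symm
    rw [key]
    exact Set.mul_mem_mul (Set.mem_inv.mp hv) (Set.mem_image_of_mem _ (Set.mem_inv.mp hn))
  conj' := by
    rintro x₀ U ⟨V, hV, M, hM, rfl⟩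
    refine ⟨((fun g => x₀ * g * x₀⁻¹) ⁻¹' V) * (Subtype.val '' M),
      ⟨_, nhds_conj_mem t x₀ hV, M, hM, rfl⟩, ?_⟩
    intro x hx
    obtain ⟨v, hv, m, hm, rfl⟩ := Set.mem_mul.mp hx
    obtain ⟨n, hn, rfl⟩ := hm
    show x₀ * (v * (n : G)) * x₀⁻¹ ∈ V * (Subtype.val '' M)
    have hcomm : (n : G) * x₀⁻¹ = x₀⁻¹ * (n : G) :=
      (Subgroup.mem_center_iff.mp (hc n.2) x₀⁻¹).symm
    have key : x₀ * (v * (n : G)) * x₀⁻¹ = (x₀ * v * x₀⁻¹) * (n : G) := by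
      rw [← mul_assoc x₀ v (n : G), mul_assoc (x₀ * v) (n : G) x₀⁻¹, hcomm,
        ← mul_assoc (x₀ * v) x₀⁻¹ (n : G)]
    rw [key]
    exact Set.mul_mem_mul hv (Set.mem_image_of_mem _ hn)

/-- The extension topology. -/
def mixE (hc : N ≤ Subgroup.center G) (t : GroupTopology G) (w : GroupTopology N) :
    GroupTopology G :=
  ⟨(mixBasis hc t w).topology, (mixBasis hc t w).isTopologicalGroup⟩

lemma le_mixE (hc : N ≤ Subgroup.center G) (t : GroupTopology G) (w : GroupTopology N) :
    t ≤ mixE hc t w := by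
  rw [gt_le_iff]
  have he : @nhds G (mixE hc t w).toTopologicalSpace 1 = (mixBasis hc t w).toFilterBasis.filter :=
    (mixBasis hc t w).nhds_one_eq
  rw [he]
  intro A hA
  obtain ⟨A₀, ⟨V, hV, M, hM, rfl⟩, hsub⟩ := FilterBasis.mem_filter_iff _ |>.mp hA
  refine Filter.mem_of_superset hV (fun v hv => hsub ?_)
  have : v * ((1 : N) : G) ∈ V * (Subtype.val '' M) :=
    Set.mul_mem_mul hv (Set.mem_image_of_mem _ (mem_of_nhds' w.toTopologicalSpace hM))
  simpa using this

lemma Rg_mixE (hc : N ≤ Subgroup.center G) {t : GroupTopology G} {w : GroupTopology N}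
    (hw1 : Rg N t ≤ w) : Rg N (mixE hc t w) = w := by
  apply GroupTopology.toTopologicalSpace_injective
  refine IsTopologicalGroup.ext (Rg N (mixE hc t w)).toIsTopologicalGroup w.toIsTopologicalGroup ?_
  rw [nhds_Rg]
  have hfil : @nhds G (mixE hc t w).toTopologicalSpace 1
      = (mixBasis hc t w).toFilterBasis.filter := (mixBasis hc t w).nhds_one_eq
  rw [hfil]
  apply le_antisymm
  · intro M₀ hM₀
    obtain ⟨M₁, hM₁, hM₁M₀⟩ := nhds_split w hM₀
    have hM₁t : M₁ ∈ @nhds N (Rg N t).toTopologicalSpace 1 := (gt_le_iff _ _).mp hw1 hM₁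
    rw [nhds_Rg] at hM₁t
    obtain ⟨V, hV, hVM₁⟩ := Filter.mem_comap.mp hM₁t
    refine Filter.mem_comap.mpr ⟨V * (Subtype.val '' M₁),
      FilterBasis.mem_filter_of_mem _ ⟨V, hV, M₁, hM₁, rfl⟩, ?_⟩
    intro n hn
    obtain ⟨v, hv, m, hm, hvm⟩ := Set.mem_mul.mp hn
    obtain ⟨m', hm', rfl⟩ := hm
    have hcoe : ((n * m'⁻¹ : N) : G) = v := by
      push_cast
      rw [← hvm, mul_inv_cancel_right]
    have h1 : (n * m'⁻¹ : N) ∈ M₁ := hVM₁ (show ((n * m'⁻¹ : N) : G) ∈ V from hcoe ▸ hv)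
    have h2 := hM₁M₀ _ h1 m' hm'
    rwa [inv_mul_cancel_right] at h2
  · intro A hA
    obtain ⟨T, hT, hTA⟩ := Filter.mem_comap.mp hA
    obtain ⟨T₀, ⟨V, hV, M, hM, rfl⟩, hsub⟩ := FilterBasis.mem_filter_iff _ |>.mp hT
    refine Filter.mem_of_superset hM (fun m hm => hTA (hsub ?_))
    have : (1 : G) * ((m : N) : G) ∈ V * (Subtype.val '' M) :=
      Set.mul_mem_mul (mem_of_nhds' t.toTopologicalSpace hV) (Set.mem_image_of_mem _ hm)
    simpa using this

end Mix

/-- The main theorem, stated for Mathlib's `GroupTopology` order (`t ≤ s` means `t` is finer). -/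
theorem main {G : Type*} [Group G] (N : Subgroup G) [N.Normal] (hc : N ≤ Subgroup.center G)
    {t s : GroupTopology G} (h : t ≤ s) :
    t ⋖ s ↔ ((Rg N t = Rg N s ∧ Qg N t ⋖ Qg N s) ∨ (Rg N t ⋖ Rg N s ∧ Qg N t = Qg N s)) := by
  constructor
  · intro hcov
    by_cases hq : Qg N t = Qg N s
    · right
      have hrne : Rg N t ≠ Rg N s := fun hr => hcov.ne (eq_of_Rg_eq_of_Qg_eq N h hr hq)
      refine ⟨⟨lt_of_le_of_ne (Rg_mono N h) hrne, ?_⟩, hq⟩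
      intro w hw1 hw2
      have hRx : Rg N (s ⊓ mixE hc t w) = w := by
        rw [Rg_inf, Rg_mixE hc hw1.le]
        exact inf_eq_right.mpr hw2.le
      have hxt : t < s ⊓ mixE hc t w :=
        lt_of_le_of_ne (le_inf h (le_mixE hc t w)) (fun e => hw1.ne ((congrArg (Rg N) e).trans hRx))
      have hxs : s ⊓ mixE hc t w < s :=
        lt_of_le_of_ne inf_le_left (fun e => hw2.ne (hRx.symm.trans (congrArg (Rg N) e)))
      exact hcov.2 hxt hxs
    · left
      have hR : Rg N t = Rg N s := by
        by_contra hrne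
        have ht_le : t ≤ s ⊓ pullQ N (Qg N t) := le_P N h le_rfl
        have hRP : Rg N (s ⊓ pullQ N (Qg N t)) = Rg N s := Rg_P N
        have hQP : Qg N (s ⊓ pullQ N (Qg N t)) = Qg N t := Qg_P N (Qg_mono N h)
        have h1 : t < s ⊓ pullQ N (Qg N t) :=
          lt_of_le_of_ne ht_le (fun e => hrne ((congrArg (Rg N) e).trans hRP))
        have h2 : s ⊓ pullQ N (Qg N t) < s :=
          lt_of_le_of_ne inf_le_left (fun e => hq (hQP.symm.trans (congrArg (Qg N) e)))
        exact hcov.2 h1 h2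
      refine ⟨hR, ⟨lt_of_le_of_ne (Qg_mono N h) hq, ?_⟩⟩
      intro w' hw1 hw2
      have ht_le : t ≤ s ⊓ pullQ N w' := le_P N h hw1.le
      have hQP : Qg N (s ⊓ pullQ N w') = w' := Qg_P N hw2.le
      have h1 : t < s ⊓ pullQ N w' :=
        lt_of_le_of_ne ht_le (fun e => hw1.ne ((congrArg (Qg N) e).trans hQP))
      have h2 : s ⊓ pullQ N w' < s :=
        lt_of_le_of_ne inf_le_left (fun e => hw2.ne (hQP.symm.trans (congrArg (Qg N) e)))
      exact hcov.2 h1 h2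
  · rintro (⟨hR, hqcov⟩ | ⟨hrcov, hQ⟩)
    · refine ⟨lt_of_le_of_ne h (fun e => hqcov.ne (congrArg (Qg N) e)), ?_⟩
      intro c hc1 hc2
      have hcR : Rg N t = Rg N c :=
        le_antisymm (Rg_mono N hc1.le) (by rw [hR]; exact Rg_mono N hc2.le)
      rcases (Qg_mono N hc1.le).lt_or_eq with hql | hqe
      · have hnlt : ¬ Qg N c < Qg N s := hqcov.2 hql
        have hqcs : Qg N c = Qg N s := (Qg_mono N hc2.le).lt_or_eq.resolve_left hnlt
        exact hc2.ne (eq_of_Rg_eq_of_Qg_eq N hc2.le (by rw [← hcR, hR]) hqcs)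
      · exact hc1.ne (eq_of_Rg_eq_of_Qg_eq N hc1.le hcR hqe)
    · refine ⟨lt_of_le_of_ne h (fun e => hrcov.ne (congrArg (Rg N) e)), ?_⟩
      intro c hc1 hc2
      have hcQ : Qg N t = Qg N c :=
        le_antisymm (Qg_mono N hc1.le) (by rw [hQ]; exact Qg_mono N hc2.le)
      rcases (Rg_mono N hc1.le).lt_or_eq with hrl | hre
      · have hnlt : ¬ Rg N c < Rg N s := hrcov.2 hrl
        have hrcs : Rg N c = Rg N s := (Rg_mono N hc2.le).lt_or_eq.resolve_left hnlt
        exact hc2.ne (eq_of_Rg_eq_of_Qg_eq N hc2.le hrcs (by rw [← hcQ, hQ]))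
      · exact hc1.ne (eq_of_Rg_eq_of_Qg_eq N hc1.le hre hcQ)

end StatementSeven

/-- Let `G` be a group, `N` a central subgroup of `G` (a central subgroup
is automatically normal), and `σ ≤ τ` group topologies on `G`. Then `τ` covers `σ` in
`𝓛_G` if and only if one of the following holds:
(a) `σ|_N = τ|_N` and `τ/N` covers `σ/N` in `𝓛_{G/N}`; or
(b) `τ|_N` covers `σ|_N` in `𝓛_N` and `σ/N = τ/N`. -/
theorem covBy_iff_restrict_quot {G : Type*} [Group G] (N : Subgroup G) [N.Normal]
    (hc : N ≤ Subgroup.center G) (σ τ : GroupTopLattice G) (hle : σ ≤ τ) :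
    σ ⋖ τ ↔
      ((restrictTop σ N = restrictTop τ N ∧ quotTop σ N ⋖ quotTop τ N) ∨
        (restrictTop σ N ⋖ restrictTop τ N ∧ quotTop σ N = quotTop τ N)) := by
  have hle' : ofDual τ ≤ ofDual σ := hle
  have key := StatementSeven.main N hc hle'
  have e1 : restrictTop σ N = toDual (StatementSeven.Rg N (ofDual σ)) := rfl
  have e2 : restrictTop τ N = toDual (StatementSeven.Rg N (ofDual τ)) := rfl
  have e3 : quotTop σ N = toDual (StatementSeven.Qg N (ofDual σ)) := rfl
  have e4 : quotTop τ N = toDual (StatementSeven.Qg N (ofDual τ)) := rfl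
  rw [e1, e2, e3, e4, show σ = toDual (ofDual σ) from rfl, show τ = toDual (ofDual τ) from rfl,
    toDual_covBy_toDual_iff, toDual_covBy_toDual_iff, toDual_covBy_toDual_iff,
    toDual_inj, toDual_inj, key]
  constructor
  · rintro (⟨h1, h2⟩ | ⟨h1, h2⟩)
    exacts [Or.inl ⟨h1.symm, h2⟩, Or.inr ⟨h1, h2.symm⟩]
  · rintro (⟨h1, h2⟩ | ⟨h1, h2⟩)
    exacts [Or.inl ⟨h1.symm, h2⟩, Or.inr ⟨h1, h2.symm⟩]
end

section
/- Let G be a group with a central subgroup N, and let τ, σ be group topologies on G such that σ/N ≤ τ/N in the lattice of group topologies on G/N. If 𝓑_τ is a neighbourhood basis at the identity e in (G, τ) and 𝓑_σ is a neighbourhood basis at e in (G, σ), then the family 𝓑 = { U·V : U ∈ 𝓑_τ, V ∈ 𝓑_σ } of pointwise products forms a neighbourhood basis at e for the topology σ ∧ τ, the meet of σ and τ in the lattice of group topologies on G. -/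
open OrderDual Pointwise

open Filter Set

section Aux

variable {G : Type*} [Group G]

private lemma le_of_nhds_le (t₁ t₂ : TopologicalSpace G)
    (h₁ : @IsTopologicalGroup G t₁ _) (h₂ : @IsTopologicalGroup G t₂ _)
    (h : @nhds G t₁ 1 ≤ @nhds G t₂ 1) : t₁ ≤ t₂ := by
  rw [← @continuous_id_iff_le G t₁ t₂]
  have : @Continuous G G t₁ t₂ (MonoidHom.id G) := by
    refine @continuous_of_continuousAt_one G t₁ _ h₁ G (G →* G) _ t₂ h₂.toContinuousMul _ _
      (MonoidHom.id G) ?_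
    simpa [ContinuousAt, Filter.tendsto_id'] using h
  exact this

private lemma exists_symm_cube (t : TopologicalSpace G) (ht : @IsTopologicalGroup G t _)
    {V : Set G} (hV : V ∈ @nhds G t 1) :
    ∃ W ∈ @nhds G t 1, W⁻¹ = W ∧ W * W * W ⊆ V := by
  letI := t
  obtain ⟨V₂, hV₂, h2⟩ := exists_nhds_one_split hV
  obtain ⟨V₃, hV₃, h3⟩ := exists_nhds_one_split hV₂
  refine ⟨(V₃ ∩ V₂) ∩ (V₃ ∩ V₂)⁻¹, ?_, ?_, ?_⟩
  · exact Filter.inter_mem (Filter.inter_mem hV₃ hV₂)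
      (inv_mem_nhds_one G (Filter.inter_mem hV₃ hV₂))
  · ext x; simp [and_comm]
  · rintro x ⟨y, hy, c, hc, rfl⟩
    obtain ⟨a, ha, b, hb, rfl⟩ := hy
    exact h2 _ (h3 _ ha.1.1 _ hb.1.1) _ hc.1.2

private lemma conj_tendsto (t : TopologicalSpace G) (ht : @IsTopologicalGroup G t _) (x₀ : G) :
    Filter.Tendsto (fun x => x₀ * x * x₀⁻¹) (@nhds G t 1) (@nhds G t 1) := by
  letI := t
  have hcont : Continuous (fun x : G => x₀ * x * x₀⁻¹) :=
    (continuous_const.mul continuous_id).mul continuous_const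
  have := hcont.continuousAt (x := 1)
  simpa [ContinuousAt] using this

/-- The key swap lemma, using centrality of `N` and the saturation property coming
from the quotient topology comparison. -/
private lemma swap_lemma (N : Subgroup G) [N.Normal] (hc : N ≤ Subgroup.center G)
    (tτ tσ : TopologicalSpace G)
    (hτ : @IsTopologicalGroup G tτ _) (hσ : @IsTopologicalGroup G tσ _)
    (hsat : ∀ s : Set G, s ∈ @nhds G tσ 1 →
      ((QuotientGroup.mk : G → G ⧸ N) ⁻¹' (QuotientGroup.mk '' s)) ∈ @nhds G tτ 1)
    {U V : Set G} (hU : U ∈ @nhds G tτ 1) (hV : V ∈ @nhds G tσ 1) :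
    ∃ U' ∈ @nhds G tτ 1, ∃ V' ∈ @nhds G tσ 1,
      V' * U' ⊆ U * V ∧ U' * V' ⊆ V * U := by
  obtain ⟨W, hW, hWsymm, hWcube⟩ := exists_symm_cube tσ hσ hV
  refine ⟨U ∩ ((QuotientGroup.mk : G → G ⧸ N) ⁻¹' (QuotientGroup.mk '' W)),
    Filter.inter_mem hU (hsat W hW), W, hW, ?_, ?_⟩
  · rintro x ⟨v, hv, u, hu, rfl⟩
    obtain ⟨w, hw, hww⟩ := hu.2
    have hn : w⁻¹ * u ∈ N := QuotientGroup.eq.mp hww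
    have hcen : ∀ g : G, g * (w⁻¹ * u) = (w⁻¹ * u) * g :=
      Subgroup.mem_center_iff.mp (hc hn)
    have hwinv : w⁻¹ ∈ W := by rw [← hWsymm]; exact Set.inv_mem_inv.mpr hw
    have key : v * u = u * (w⁻¹ * v * w) := by
      apply mul_left_cancel (a := w⁻¹)
      have e1 : w⁻¹ * (v * u) = (w⁻¹ * v * w) * (w⁻¹ * u) := by group
      have e2 : (w⁻¹ * u) * (w⁻¹ * v * w) = w⁻¹ * (u * (w⁻¹ * v * w)) := by group
      rw [e1, hcen (w⁻¹ * v * w), e2]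
    show v * u ∈ U * V
    rw [key]
    exact Set.mul_mem_mul hu.1
      (hWcube (Set.mul_mem_mul (Set.mul_mem_mul hwinv hv) hw))
  · rintro x ⟨u, hu, v, hv, rfl⟩
    obtain ⟨w, hw, hww⟩ := hu.2
    have hn : w⁻¹ * u ∈ N := QuotientGroup.eq.mp hww
    have hcen : ∀ g : G, g * (w⁻¹ * u) = (w⁻¹ * u) * g :=
      Subgroup.mem_center_iff.mp (hc hn)
    have hwinv : w⁻¹ ∈ W := by rw [← hWsymm]; exact Set.inv_mem_inv.mpr hw
    have key : u * v = (w * v * w⁻¹) * u := by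
      apply mul_left_cancel (a := w⁻¹)
      have e1 : w⁻¹ * (u * v) = (w⁻¹ * u) * v := by group
      have e2 : v * (w⁻¹ * u) = w⁻¹ * ((w * v * w⁻¹) * u) := by group
      rw [e1, ← hcen v, e2]
    show u * v ∈ V * U
    rw [key]
    exact Set.mul_mem_mul
      (hWcube (Set.mul_mem_mul (Set.mul_mem_mul hw hv) hwinv)) hu.1

/-- The product filter basis, as a group filter basis. -/
private def prodBasis (N : Subgroup G) [N.Normal] (hc : N ≤ Subgroup.center G)
    (tτ tσ : TopologicalSpace G)
    (hτ : @IsTopologicalGroup G tτ _) (hσ : @IsTopologicalGroup G tσ _)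
    (hsat : ∀ s : Set G, s ∈ @nhds G tσ 1 →
      ((QuotientGroup.mk : G → G ⧸ N) ⁻¹' (QuotientGroup.mk '' s)) ∈ @nhds G tτ 1) :
    GroupFilterBasis G where
  sets := Set.image2 (· * ·) {U | U ∈ @nhds G tτ 1} {V | V ∈ @nhds G tσ 1}
  nonempty := ⟨Set.univ * Set.univ, Set.mem_image2_of_mem univ_mem univ_mem⟩
  inter_sets := by
    rintro x y ⟨U₁, hU₁, V₁, hV₁, rfl⟩ ⟨U₂, hU₂, V₂, hV₂, rfl⟩
    refine ⟨(U₁ ∩ U₂) * (V₁ ∩ V₂),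
      Set.mem_image2_of_mem (Filter.inter_mem hU₁ hU₂) (Filter.inter_mem hV₁ hV₂),
      Set.subset_inter
        (Set.mul_subset_mul Set.inter_subset_left Set.inter_subset_left)
        (Set.mul_subset_mul Set.inter_subset_right Set.inter_subset_right)⟩
  one' := by
    rintro s ⟨U, hU, V, hV, rfl⟩
    have h1U : (1 : G) ∈ U := by letI := tτ; exact mem_of_mem_nhds hU
    have h1V : (1 : G) ∈ V := by letI := tσ; exact mem_of_mem_nhds hV
    exact ⟨1, h1U, 1, h1V, one_mul 1⟩
  mul' := by
    rintro s ⟨U, hU, V, hV, rfl⟩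
    obtain ⟨U₁, hU₁, hU₁s⟩ := @exists_nhds_one_split G tτ _ hτ.toContinuousMul U hU
    obtain ⟨V₁, hV₁, hV₁s⟩ := @exists_nhds_one_split G tσ _ hσ.toContinuousMul V hV
    obtain ⟨U₂, hU₂, V₂, hV₂, hswap, -⟩ := swap_lemma N hc tτ tσ hτ hσ hsat hU₁ hV₁
    refine ⟨(U₁ ∩ U₂) * (V₁ ∩ V₂),
      Set.mem_image2_of_mem (Filter.inter_mem hU₁ hU₂) (Filter.inter_mem hV₁ hV₂), ?_⟩
    rintro x ⟨y, hy, z, hz, rfl⟩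
    obtain ⟨a₁, ha₁, b₁, hb₁, rfl⟩ := hy
    obtain ⟨a₂, ha₂, b₂, hb₂, rfl⟩ := hz
    obtain ⟨u', hu', v', hv', huv⟩ := hswap (Set.mul_mem_mul hb₁.2 ha₂.2)
    have huv' : u' * v' = b₁ * a₂ := huv
    have heq : a₁ * b₁ * (a₂ * b₂) = (a₁ * u') * (v' * b₂) := by
      rw [show a₁ * b₁ * (a₂ * b₂) = a₁ * (b₁ * a₂) * b₂ by group, ← huv']; group
    show a₁ * b₁ * (a₂ * b₂) ∈ U * V
    rw [heq]
    exact Set.mul_mem_mul (hU₁s _ ha₁.1 _ hu') (hV₁s _ hv' _ hb₂.1)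
  inv' := by
    rintro s ⟨U, hU, V, hV, rfl⟩
    have hUi : U⁻¹ ∈ @nhds G tτ 1 := @inv_mem_nhds_one G tτ _ hτ U hU
    have hVi : V⁻¹ ∈ @nhds G tσ 1 := @inv_mem_nhds_one G tσ _ hσ V hV
    obtain ⟨U₂, hU₂, V₂, hV₂, -, hswap⟩ := swap_lemma N hc tτ tσ hτ hσ hsat hUi hVi
    refine ⟨U₂ * V₂, Set.mem_image2_of_mem hU₂ hV₂, ?_⟩
    intro x hx
    obtain ⟨a, ha, b, hb, rfl⟩ := hswap hx
    show (a * b)⁻¹ ∈ U * V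
    rw [mul_inv_rev]
    exact Set.mul_mem_mul (Set.mem_inv.mp hb) (Set.mem_inv.mp ha)
  conj' := by
    rintro x₀ s ⟨U, hU, V, hV, rfl⟩
    refine ⟨((fun x => x₀ * x * x₀⁻¹) ⁻¹' U) * ((fun x => x₀ * x * x₀⁻¹) ⁻¹' V),
      Set.mem_image2_of_mem (conj_tendsto tτ hτ x₀ hU) (conj_tendsto tσ hσ x₀ hV), ?_⟩
    rintro x ⟨a, ha, b, hb, rfl⟩
    show x₀ * (a * b) * x₀⁻¹ ∈ U * V
    have heq : x₀ * (a * b) * x₀⁻¹ = (x₀ * a * x₀⁻¹) * (x₀ * b * x₀⁻¹) := by group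
    rw [heq]
    exact Set.mul_mem_mul ha hb

end Aux

/-- Let `G` be a group with a central subgroup `N` (automatically normal),
and let `τ, σ` be group topologies on `G` such that `σ/N ≤ τ/N` in the lattice of group
topologies on `G ⧸ N`. If `𝓑_τ` is a neighbourhood basis at the identity in `(G, τ)` and
`𝓑_σ` is a neighbourhood basis at the identity in `(G, σ)`, then the family
`{U * V : U ∈ 𝓑_τ, V ∈ 𝓑_σ}` of pointwise products is a neighbourhood basis at the
identity for the meet `σ ⊓ τ` in the lattice of group topologies on `G`. -/
theorem nhds_basis_of_inf {G : Type*} [Group G] (N : Subgroup G) [N.Normal]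
    (hc : N ≤ Subgroup.center G) (τ σ : GroupTopLattice G)
    (hq : quotTop σ N ≤ quotTop τ N)
    (Bτ Bσ : Set (Set G))
    (hBτ : (@nhds G (topOf τ) 1).HasBasis (· ∈ Bτ) id)
    (hBσ : (@nhds G (topOf σ) 1).HasBasis (· ∈ Bσ) id) :
    (@nhds G (topOf (σ ⊓ τ)) 1).HasBasis
      (fun P : Set G × Set G => P.1 ∈ Bτ ∧ P.2 ∈ Bσ) (fun P => P.1 * P.2) := by
  have hτg : @IsTopologicalGroup G (topOf τ) _ := (ofDual τ).toIsTopologicalGroup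
  have hσg : @IsTopologicalGroup G (topOf σ) _ := (ofDual σ).toIsTopologicalGroup
  -- the saturation property
  have hsat : ∀ s : Set G, s ∈ @nhds G (topOf σ) 1 →
      ((QuotientGroup.mk : G → G ⧸ N) ⁻¹' (QuotientGroup.mk '' s)) ∈ @nhds G (topOf τ) 1 := by
    intro s hs
    have hqle : (topOf τ).coinduced (QuotientGroup.mk : G → G ⧸ N) ≤
        (topOf σ).coinduced (QuotientGroup.mk : G → G ⧸ N) := hq
    have h1 : (QuotientGroup.mk '' s : Set (G ⧸ N)) ∈
        @nhds (G ⧸ N) ((topOf σ).coinduced QuotientGroup.mk) 1 := by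
      letI := topOf σ
      have := (@QuotientGroup.isOpenMap_coe G (topOf σ) _ (by haveI := hσg; infer_instance) N).image_mem_nhds hs
      simpa using this
    have h2 : (QuotientGroup.mk '' s : Set (G ⧸ N)) ∈
        @nhds (G ⧸ N) ((topOf τ).coinduced QuotientGroup.mk) 1 :=
      nhds_mono hqle h1
    letI := topOf τ
    have hcont : @Continuous G (G ⧸ N) (topOf τ) ((topOf τ).coinduced QuotientGroup.mk)
        QuotientGroup.mk := continuous_coinduced_rng
    have := hcont.continuousAt (x := (1 : G))
    exact this (by simpa using h2)
  set B := prodBasis N hc (topOf τ) (topOf σ) hτg hσg hsat with hB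
  -- the group topology associated to B
  let ρ' : GroupTopology G := ⟨B.topology, B.isTopologicalGroup⟩
  have key : ofDual (σ ⊓ τ) = ρ' := by
    have h1 : ofDual (σ ⊓ τ) = ofDual σ ⊔ ofDual τ := rfl
    rw [h1]
    apply le_antisymm
    · apply sup_le
      · -- ofDual σ ≤ ρ' : tσ finer than B.topology
        show (ofDual σ).toTopologicalSpace ≤ ρ'.toTopologicalSpace
        refine le_of_nhds_le _ _ hσg B.isTopologicalGroup ?_
        rw [show ρ'.toTopologicalSpace = B.topology from rfl, B.nhds_one_eq]
        intro t ht
        obtain ⟨u, hu, hut⟩ := B.toFilterBasis.mem_filter_iff.mp ht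
        obtain ⟨U, hU, V, hV, rfl⟩ := hu
        refine Filter.mem_of_superset ?_ hut
        exact Filter.mem_of_superset hV fun v hv =>
          ⟨1, (by letI := topOf τ; exact mem_of_mem_nhds hU), v, hv, one_mul v⟩
      · show (ofDual τ).toTopologicalSpace ≤ ρ'.toTopologicalSpace
        refine le_of_nhds_le _ _ hτg B.isTopologicalGroup ?_
        rw [show ρ'.toTopologicalSpace = B.topology from rfl, B.nhds_one_eq]
        intro t ht
        obtain ⟨u, hu, hut⟩ := B.toFilterBasis.mem_filter_iff.mp ht
        obtain ⟨U, hU, V, hV, rfl⟩ := hu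
        refine Filter.mem_of_superset ?_ hut
        exact Filter.mem_of_superset hU fun u hu =>
          ⟨u, hu, 1, (by letI := topOf σ; exact mem_of_mem_nhds hV), mul_one u⟩
    · -- ρ' ≤ sup
      show ρ'.toTopologicalSpace ≤ (ofDual σ ⊔ ofDual τ).toTopologicalSpace
      refine le_of_nhds_le _ _ B.isTopologicalGroup (ofDual σ ⊔ ofDual τ).toIsTopologicalGroup ?_
      rw [show ρ'.toTopologicalSpace = B.topology from rfl, B.nhds_one_eq]
      intro t ht
      have hστ : @nhds G (topOf σ) 1 ≤ @nhds G (ofDual σ ⊔ ofDual τ).toTopologicalSpace 1 :=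
        _root_.nhds_mono (GroupTopology.toTopologicalSpace_le.mpr
          (le_sup_left : ofDual σ ≤ ofDual σ ⊔ ofDual τ))
      have hττ : @nhds G (topOf τ) 1 ≤ @nhds G (ofDual σ ⊔ ofDual τ).toTopologicalSpace 1 :=
        _root_.nhds_mono (GroupTopology.toTopologicalSpace_le.mpr
          (le_sup_right : ofDual τ ≤ ofDual σ ⊔ ofDual τ))
      letI := (ofDual σ ⊔ ofDual τ).toTopologicalSpace
      haveI := (ofDual σ ⊔ ofDual τ).toIsTopologicalGroup
      obtain ⟨W, hW, hWs⟩ := exists_nhds_one_split ht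
      refine B.toFilterBasis.mem_filter_iff.mpr ⟨W * W,
        Set.mem_image2_of_mem (hττ hW) (hστ hW), ?_⟩
      rintro x ⟨a, ha, b, hb, rfl⟩
      exact hWs _ ha _ hb
  have htop : topOf (σ ⊓ τ) = B.topology := congrArg GroupTopology.toTopologicalSpace key
  rw [htop, B.nhds_one_eq]
  rw [Filter.hasBasis_iff]
  intro t
  constructor
  · intro ht
    obtain ⟨u, hu, hut⟩ := B.toFilterBasis.mem_filter_iff.mp ht
    obtain ⟨U, hU, V, hV, rfl⟩ := hu
    obtain ⟨U₀, hU₀, hU₀U⟩ := hBτ.mem_iff.mp hU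
    obtain ⟨V₀, hV₀, hV₀V⟩ := hBσ.mem_iff.mp hV
    exact ⟨(U₀, V₀), ⟨hU₀, hV₀⟩,
      (Set.mul_subset_mul hU₀U hV₀V).trans hut⟩
  · rintro ⟨⟨U₀, V₀⟩, ⟨hU₀, hV₀⟩, hsub⟩
    refine B.toFilterBasis.mem_filter_iff.mpr ⟨U₀ * V₀,
      Set.mem_image2_of_mem (hBτ.mem_of_mem hU₀) (hBσ.mem_of_mem hV₀), hsub⟩
end

section
/- Let G be a group, N a normal subgroup of G, and σ, τ group topologies on G. Let τ* denote the group topology on G obtained as the initial topology induced by the canonical projection G → (G/N, τ/N); equivalently, τ* has as a neighbourhood basis at the identity the family {U·N : U is a τ-neighbourhood of the identity}. Then (σ ∨ τ*)/N = σ/N ∨ τ/N, where the joins are taken in the lattices of group topologies on G and on G/N respectively. -/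
open OrderDual

/-- Key topological fact: if `q` is a surjection which is an open map from `s` to
`coinduced q s`, then the quotient topology of `s ⊓ induced q b` is
`coinduced q s ⊓ b`. -/
lemma coinduced_inf_induced_of_openMap {G H : Type*} (q : G → H)
    (hq : Function.Surjective q) (s : TopologicalSpace G) (b : TopologicalSpace H)
    (hopen : ∀ U : Set G, s.IsOpen U → (s.coinduced q).IsOpen (q '' U)) :
    (s ⊓ TopologicalSpace.induced q b).coinduced q = s.coinduced q ⊓ b := by
  refine le_antisymm ?_ ?_
  · refine le_inf (coinduced_mono inf_le_left) ?_
    exact le_trans (coinduced_mono inf_le_right) (coinduced_le_iff_le_induced.mpr le_rfl)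
  · intro W hW
    rw [isOpen_coinduced] at hW
    rw [@isOpen_iff_mem_nhds _ (s.coinduced q ⊓ b)]
    intro y hy
    obtain ⟨x, rfl⟩ := hq y
    have hx : q ⁻¹' W ∈ @nhds _ (s ⊓ TopologicalSpace.induced q b) x :=
      @IsOpen.mem_nhds _ (s ⊓ TopologicalSpace.induced q b) _ _ hW hy
    rw [nhds_inf] at hx
    obtain ⟨U, hU, V, hV, hUV⟩ := Filter.mem_inf_iff.mp hx
    obtain ⟨U', hU'U, hU'open, hxU'⟩ := (@mem_nhds_iff _ s _ _).mp hU
    rw [@nhds_induced _ _ b q x, Filter.mem_comap] at hV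
    obtain ⟨V', hV', hV'V⟩ := hV
    rw [@nhds_inf _ (s.coinduced q) b (q x)]
    refine Filter.mem_of_superset (Filter.inter_mem_inf
      (@IsOpen.mem_nhds _ (s.coinduced q) _ _ (hopen U' hU'open) ⟨x, hxU', rfl⟩) hV') ?_
    rintro z ⟨⟨u, huU', rfl⟩, hzV'⟩
    have hu : u ∈ U ∩ V := ⟨hU'U huU', hV'V hzV'⟩
    rw [← hUV] at hu
    exact hu

/-- Let `G` be a group, `N` a normal subgroup, and `σ, τ` group topologies
on `G`. Let `τ*` be the group topology on `G` whose underlying topology is the initial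
topology induced by the canonical projection `G → (G ⧸ N, τ/N)`. Then
`(σ ⊔ τ*)/N = σ/N ⊔ τ/N`, the joins being taken in the lattices of group topologies on
`G` and on `G ⧸ N` respectively. -/
theorem quot_sup_initial {G : Type*} [Group G] (N : Subgroup G) [N.Normal]
    (σ τ τstar : GroupTopLattice G)
    (hstar : topOf τstar =
      TopologicalSpace.induced (QuotientGroup.mk : G → G ⧸ N) (topOf (quotTop τ N))) :
    quotTop (σ ⊔ τstar) N = quotTop σ N ⊔ quotTop τ N := by
  apply GroupTopology.toTopologicalSpace_injective
  show ((ofDual σ ⊓ ofDual τstar).toTopologicalSpace).coinduced (QuotientGroup.mk (s := N))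
      = _
  have hopen : ∀ U : Set G, ((ofDual σ).toTopologicalSpace).IsOpen U →
      (((ofDual σ).toTopologicalSpace).coinduced (QuotientGroup.mk (s := N))).IsOpen
        ((QuotientGroup.mk (s := N)) '' U) := by
    letI := (ofDual σ).toTopologicalSpace
    haveI := (ofDual σ).toIsTopologicalGroup
    exact fun U hU => QuotientGroup.isOpenMap_coe U hU
  have h1 : (ofDual τstar).toTopologicalSpace =
      TopologicalSpace.induced (QuotientGroup.mk (s := N))
        (((ofDual τ).toTopologicalSpace).coinduced (QuotientGroup.mk (s := N))) := hstar
  rw [GroupTopology.toTopologicalSpace_inf, h1,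
    coinduced_inf_induced_of_openMap _ (QuotientGroup.mk_surjective) _ _ hopen]
  show _ = ((_ : GroupTopology (G ⧸ N)) ⊓ (_ : GroupTopology (G ⧸ N))).toTopologicalSpace
  erw [GroupTopology.toTopologicalSpace_inf]
  rfl
end

section
/- Let p be a prime and let G = (ℤ/pℤ)^ℕ be the countable power of the cyclic group of order p, equipped with the product topology (each factor discrete). Then there exist subgroups A ≤ B of G, with A dense in G, and two non-refinable chains of subgroups of G with smallest element A and largest element B, all of whose members are dense in G, such that one chain has cardinality ℵ₀ and the other has cardinality 2^ℵ₀. -/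
/-- `C` is a non-refinable (i.e. maximal) chain in the interval `[a, b]` with smallest
element `a` and largest element `b`: it is a chain contained in `[a, b]`, containing both
endpoints, and admitting no proper refinement, i.e. no chain in `[a, b]` properly
contains it. -/
def IsNonrefinableChainBetween {L : Type*} [PartialOrder L] (a b : L) (C : Set L) : Prop :=
  a ∈ C ∧ b ∈ C ∧ C ⊆ Set.Icc a b ∧ IsChain (· ≤ ·) C ∧
    ∀ C' : Set L, C ⊆ C' → C' ⊆ Set.Icc a b → IsChain (· ≤ ·) C' → C' = C

/-- The product topology on `G = (ℤ/pℤ)^ℕ`, each factor being discrete. -/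
def prodTop (p : ℕ) : TopologicalSpace (ℕ → ZMod p) :=
  @Pi.topologicalSpace ℕ (fun _ => ZMod p) (fun _ => ⊥)




namespace Statement13

variable (p : ℕ) [Fact p.Prime]

/-- The submodule of finitely supported functions. -/
def finSupp : Submodule (ZMod p) (ℕ → ZMod p) where
  carrier := {f | (Function.support f).Finite}
  add_mem' := fun hf hg => ((hf.union hg).subset (Function.support_add _ _))
  zero_mem' := by simp
  smul_mem' := fun c f hf => hf.subset fun m hm h => by
    simp only [Function.mem_support, Pi.smul_apply, smul_eq_mul, h, mul_zero,
      not_true_eq_false] at hm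
    exact hm rfl

lemma mem_finSupp {f : ℕ → ZMod p} : f ∈ finSupp p ↔ (Function.support f).Finite := Iff.rfl

def v (n : ℕ) : ℕ → ZMod p := fun m => if (Nat.unpair m).1 = n then 1 else 0

noncomputable def eQ : ℚ ≃ ℕ := Denumerable.eqv ℚ

noncomputable def w (q : ℚ) : ℕ → ZMod p := v p (eQ q)

noncomputable def KK (s : Set ℚ) : Submodule (ZMod p) (ℕ → ZMod p) :=
  finSupp p ⊔ Submodule.span (ZMod p) (w p '' s)

/-- The submodule of functions vanishing on pairs with first component `n`. -/
def vanish (n : ℕ) : Submodule (ZMod p) (ℕ → ZMod p) where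
  carrier := {f | ∀ m, (Nat.unpair m).1 = n → f m = 0}
  add_mem' := fun hf hg m hm => by simp [hf m hm, hg m hm]
  zero_mem' := fun m _ => rfl
  smul_mem' := fun c f hf m hm => by simp [hf m hm]

lemma span_le_vanish (s : Set ℚ) (q : ℚ) (hq : q ∉ s) :
    Submodule.span (ZMod p) (w p '' s) ≤ vanish p (eQ q) := by
  rw [Submodule.span_le]
  rintro _ ⟨q', hq', rfl⟩ m hm
  have hne : eQ q ≠ eQ q' := fun h => hq (eQ.injective h.symm ▸ hq')
  simp only [w, v, hm]
  exact if_neg hne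

lemma w_notMem (s : Set ℚ) (q : ℚ) (hq : q ∉ s) : w p q ∉ KK p s := by
  intro hmem
  obtain ⟨a, ha, y, hy, hay⟩ := Submodule.mem_sup.1 hmem
  have key : ∀ k : ℕ, Nat.pair (eQ q) k ∈ Function.support a := by
    intro k
    have hm : (Nat.unpair (Nat.pair (eQ q) k)).1 = eQ q := by simp
    have hy0 : y (Nat.pair (eQ q) k) = 0 := span_le_vanish p s q hq hy _ hm
    have hw1 : w p q (Nat.pair (eQ q) k) = 1 := by simp [w, v, hm]
    have := congrFun hay (Nat.pair (eQ q) k)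
    simp only [Pi.add_apply, hy0, add_zero, hw1] at this
    simp [Function.mem_support, this]
  have hinj : Function.Injective (fun k => Nat.pair (eQ q) k) := by
    intro a b h
    have := congrArg (fun m => (Nat.unpair m).2) h
    simpa using this
  exact (Set.infinite_of_injective_forall_mem hinj key) ((mem_finSupp p).1 ha)

lemma w_mem (s : Set ℚ) (q : ℚ) (hq : q ∈ s) : w p q ∈ KK p s :=
  le_sup_right (α := Submodule (ZMod p) (ℕ → ZMod p))
    (Submodule.subset_span (Set.mem_image_of_mem _ hq))

lemma KK_mono {s t : Set ℚ} (h : s ⊆ t) : KK p s ≤ KK p t :=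
  sup_le_sup le_rfl (Submodule.span_mono (Set.image_mono h))

lemma finSupp_le_KK (s : Set ℚ) : finSupp p ≤ KK p s := le_sup_left

lemma KK_empty : KK p ∅ = finSupp p := by
  simp [KK]

lemma w_mem_iff (s : Set ℚ) (q : ℚ) : w p q ∈ KK p s ↔ q ∈ s :=
  ⟨fun h => by by_contra hq; exact w_notMem p s q hq h, w_mem p s q⟩

lemma KK_injective : Function.Injective (KK p) := by
  intro s t h
  ext q
  rw [← w_mem_iff p s q, ← w_mem_iff p t q, h]


lemma mem_KK_univ_iff (x : ℕ → ZMod p) :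
    x ∈ KK p Set.univ ↔ ∃ a ∈ finSupp p, ∃ c : ℚ →₀ ZMod p,
      x = a + c.sum fun q r => r • w p q := by
  constructor
  · intro hx
    obtain ⟨a, ha, y, hy, hay⟩ := Submodule.mem_sup.1 hx
    rw [Set.image_univ, Finsupp.mem_span_range_iff_exists_finsupp] at hy
    obtain ⟨c, hc⟩ := hy
    exact ⟨a, ha, c, by rw [hc, hay]⟩
  · rintro ⟨a, ha, c, rfl⟩
    refine Submodule.add_mem _ (finSupp_le_KK p _ ha) (Submodule.sum_mem _ fun q hq => ?_)
    exact Submodule.smul_mem _ _ (w_mem p _ q (Set.mem_univ q))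

/-- The sandwich / covering lemma for one-dimensional extensions. -/
lemma sandwich (X W : Submodule (ZMod p) (ℕ → ZMod p)) (x : ℕ → ZMod p)
    (h1 : X ≤ W) (h2 : W ≤ X ⊔ Submodule.span (ZMod p) {x}) :
    W = X ∨ W = X ⊔ Submodule.span (ZMod p) {x} := by
  by_cases hWX : W ≤ X
  · exact Or.inl (le_antisymm hWX h1)
  · right
    obtain ⟨z, hzW, hzX⟩ := SetLike.not_le_iff_exists.1 hWX
    obtain ⟨y, hy, u, hu, huy⟩ := Submodule.mem_sup.1 (h2 hzW)
    obtain ⟨c, rfl⟩ := Submodule.mem_span_singleton.1 hu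
    have hc : c ≠ 0 := by
      rintro rfl
      rw [zero_smul, add_zero] at huy
      exact hzX (huy ▸ hy)
    have hxW : x ∈ W := by
      have : c • x = z - y := by rw [← huy]; abel
      have h' : c • x ∈ W := this ▸ Submodule.sub_mem _ hzW (h1 hy)
      have := Submodule.smul_mem _ c⁻¹ h'
      rwa [inv_smul_smul₀ hc] at this
    refine le_antisymm h2 (sup_le h1 ?_)
    rw [Submodule.span_le, Set.singleton_subset_iff]
    exact hxW

/-- Key maximality lemma: any intermediate submodule comparable with all
`KK p (Iio q)` is of the form `KK p s`. -/
lemma eq_KK_of_comparable (W : Submodule (ZMod p) (ℕ → ZMod p))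
    (hA : finSupp p ≤ W) (hB : W ≤ KK p Set.univ)
    (hcomp : ∀ q : ℚ, KK p (Set.Iio q) ≤ W ∨ W ≤ KK p (Set.Iio q)) :
    W = KK p {q | w p q ∈ W} := by
  set sW : Set ℚ := {q | w p q ∈ W} with hsW
  refine le_antisymm ?_ (sup_le hA ?_)
  swap
  · rw [Submodule.span_le]
    rintro _ ⟨q, hq, rfl⟩
    exact hq
  intro x hx
  obtain ⟨a, ha, c, rfl⟩ := (mem_KK_univ_iff p x).1 (hB hx)
  classical
  set T : Finset ℚ := c.support.filter (fun q => w p q ∉ W) with hT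
  have hTe : T = ∅ := by
    by_contra hne
    have hTne : T.Nonempty := Finset.nonempty_of_ne_empty hne
    set q₀ : ℚ := T.max' hTne with hq₀
    have hq₀T : q₀ ∈ T := T.max'_mem hTne
    have hq₀W : w p q₀ ∉ W := (Finset.mem_filter.1 hq₀T).2
    have hq₀s : q₀ ∈ c.support := (Finset.mem_filter.1 hq₀T).1
    have hsplit : c q₀ • w p q₀ =
        (a + c.sum fun q r => r • w p q) - a - ∑ q ∈ c.support.erase q₀, c q • w p q := by
      rw [Finsupp.sum, ← Finset.add_sum_erase _ _ hq₀s]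
      abel
    have hcne : c q₀ ≠ 0 := Finsupp.mem_support_iff.1 hq₀s
    rcases hcomp q₀ with hle | hle
    · -- K(Iio q₀) ≤ W : all other terms in W, so w q₀ ∈ W, contradiction
      have hterms : ∀ q ∈ c.support.erase q₀, w p q ∈ W := by
        intro q hq
        by_cases hW : w p q ∈ W
        · exact hW
        · have hqT : q ∈ T := Finset.mem_filter.2 ⟨Finset.mem_of_mem_erase hq, hW⟩
          have hlt : q < q₀ := lt_of_le_of_ne (T.le_max' q hqT) (Finset.ne_of_mem_erase hq)
          exact hle (w_mem p _ q hlt)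
      have hmem : c q₀ • w p q₀ ∈ W := by
        rw [hsplit]
        exact Submodule.sub_mem _ (Submodule.sub_mem _ hx (hA ha))
          (Submodule.sum_mem _ fun q hq => Submodule.smul_mem _ _ (hterms q hq))
      have := Submodule.smul_mem _ (c q₀)⁻¹ hmem
      rw [inv_smul_smul₀ hcne] at this
      exact hq₀W this
    · -- W ≤ K(Iio q₀) : then w q₀ ∈ KK of a set avoiding q₀, contradiction
      set u : Set ℚ := Set.Iio q₀ ∪ (↑c.support \ {q₀}) with hu
      have hq₀u : q₀ ∉ u := by
        intro h
        rcases h with h | h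
        · exact absurd h (lt_irrefl q₀)
        · exact h.2 rfl
      have hWu : W ≤ KK p u := le_trans hle (KK_mono p Set.subset_union_left)
      have hmem : c q₀ • w p q₀ ∈ KK p u := by
        rw [hsplit]
        refine Submodule.sub_mem _ (Submodule.sub_mem _ (hWu hx) (finSupp_le_KK p u ha))
          (Submodule.sum_mem _ fun q hq => Submodule.smul_mem _ _ (w_mem p u q ?_))
        exact Or.inr ⟨Finset.mem_of_mem_erase hq, Finset.ne_of_mem_erase hq⟩
      have := Submodule.smul_mem _ (c q₀)⁻¹ hmem
      rw [inv_smul_smul₀ hcne] at this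
      exact w_notMem p u q₀ hq₀u this
  -- T empty: every support element is in sW
  refine Submodule.add_mem _ (finSupp_le_KK p _ ha) (Submodule.sum_mem _ fun q hq => ?_)
  refine Submodule.smul_mem _ _ (w_mem p _ q ?_)
  by_contra hW
  have : q ∈ T := Finset.mem_filter.2 ⟨hq, hW⟩
  rw [hTe] at this
  exact absurd this (Finset.notMem_empty q)


/-- Initial segments under the enumeration. -/
noncomputable def I (n : ℕ) : Set ℚ := {q | eQ q < n}

lemma I_zero : I 0 = ∅ := by ext q; simp [I]

lemma I_succ (n : ℕ) : I (n + 1) = insert (eQ.symm n) (I n) := by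
  ext q
  simp only [I, Set.mem_setOf_eq, Set.mem_insert_iff, Nat.lt_succ_iff_lt_or_eq]
  constructor
  · rintro (h | h)
    · exact Or.inr h
    · exact Or.inl (by rw [← h]; exact (eQ.symm_apply_apply q).symm)
  · rintro (h | h)
    · exact Or.inr (by rw [h]; simp)
    · exact Or.inl h

lemma I_mono : Monotone I := fun n m h q hq => lt_of_lt_of_le hq h

lemma I_injective : Function.Injective I := by
  intro n m h
  by_contra hne
  rcases Nat.lt_or_ge n m with hlt | hge
  · have : eQ.symm n ∈ I m := by simp [I, hlt]
    rw [← h] at this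
    simp [I] at this
  · have hlt : m < n := lt_of_le_of_ne hge (Ne.symm hne)
    have : eQ.symm m ∈ I n := by simp [I, hlt]
    rw [h] at this
    simp [I] at this

lemma KK_insert (q : ℚ) (s : Set ℚ) :
    KK p (insert q s) = KK p s ⊔ Submodule.span (ZMod p) {w p q} := by
  rw [KK, Set.image_insert_eq, Submodule.span_insert, KK]
  rw [sup_comm (Submodule.span (ZMod p) {w p q}), ← sup_assoc]

lemma KK_univ_le (W : Submodule (ZMod p) (ℕ → ZMod p)) (hA : finSupp p ≤ W)
    (hw : ∀ q : ℚ, w p q ∈ W) : KK p Set.univ ≤ W := by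
  refine sup_le hA ?_
  rw [Submodule.span_le]
  rintro _ ⟨q, _, rfl⟩
  exact hw q

/-- Maximality of the countable chain. -/
lemma max_chain_one (C' : Set (Submodule (ZMod p) (ℕ → ZMod p)))
    (hsub : KK p '' (insert Set.univ (Set.range I)) ⊆ C')
    (hIcc : C' ⊆ Set.Icc (finSupp p) (KK p Set.univ))
    (hch : IsChain (· ≤ ·) C') :
    C' = KK p '' (insert Set.univ (Set.range I)) := by
  classical
  refine Set.Subset.antisymm (fun W hW => ?_) hsub
  have hWIcc := hIcc hW
  have hcomp : ∀ X ∈ KK p '' (insert Set.univ (Set.range I)), X ≤ W ∨ W ≤ X := by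
    intro X hX
    rcases eq_or_ne X W with rfl | hne
    · exact Or.inl le_rfl
    · exact hch (hsub hX) hW hne
  by_cases hall : ∀ n, KK p (I n) ≤ W
  · have : KK p Set.univ ≤ W := by
      refine KK_univ_le p W hWIcc.1 fun q => ?_
      exact hall (eQ q + 1) (w_mem p _ q (by simp [I]))
    have hWeq : W = KK p Set.univ := le_antisymm hWIcc.2 this
    exact ⟨Set.univ, Set.mem_insert _ _, hWeq.symm⟩
  · push_neg at hall
    have hex := hall
    set n₀ := Nat.find hex with hn₀
    have hn₀W : ¬ KK p (I n₀) ≤ W := Nat.find_spec hex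
    have hWle : W ≤ KK p (I n₀) := by
      rcases hcomp (KK p (I n₀)) ⟨I n₀, Set.mem_insert_of_mem _ ⟨n₀, rfl⟩, rfl⟩ with h | h
      · exact absurd h hn₀W
      · exact h
    rcases Nat.eq_zero_or_pos n₀ with hz | hpos
    · exfalso
      apply hn₀W
      rw [hz, I_zero, KK_empty]
      exact hWIcc.1
    · obtain ⟨m, hm⟩ : ∃ m, n₀ = m + 1 := ⟨n₀ - 1, (Nat.succ_pred_eq_of_pos hpos).symm⟩
      rw [hm] at hn₀W hWle
      have hmW : KK p (I m) ≤ W := by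
        by_contra h
        have h2 : Nat.find hex ≤ m := Nat.find_le h
        omega
      have hsand := sandwich p (KK p (I m)) W (w p (eQ.symm m)) hmW
        (by rwa [← KK_insert, ← I_succ])
      rcases hsand with h | h
      · exact ⟨I m, Set.mem_insert_of_mem _ ⟨m, rfl⟩, h.symm⟩
      · exfalso
        apply hn₀W
        rw [I_succ, KK_insert]
        exact le_of_eq h.symm

/-- Maximality of the continuum chain. -/
lemma max_chain_two (C' : Set (Submodule (ZMod p) (ℕ → ZMod p)))
    (hsub : KK p '' {s | IsLowerSet s} ⊆ C')
    (hIcc : C' ⊆ Set.Icc (finSupp p) (KK p Set.univ))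
    (hch : IsChain (· ≤ ·) C') :
    C' = KK p '' {s | IsLowerSet s} := by
  refine Set.Subset.antisymm (fun W hW => ?_) hsub
  have hWIcc := hIcc hW
  have hcomp : ∀ q : ℚ, KK p (Set.Iio q) ≤ W ∨ W ≤ KK p (Set.Iio q) := by
    intro q
    have hmem : KK p (Set.Iio q) ∈ C' := hsub ⟨Set.Iio q, fun a b hb ha => lt_of_le_of_lt hb ha, rfl⟩
    rcases eq_or_ne (KK p (Set.Iio q)) W with h | hne
    · exact Or.inl (le_of_eq h)
    · exact hch hmem hW hne
  have hWeq := eq_KK_of_comparable p W hWIcc.1 hWIcc.2 hcomp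
  refine ⟨{q | w p q ∈ W}, ?_, hWeq.symm⟩
  -- lower set
  intro b q hq hb
  rcases eq_or_lt_of_le hq with rfl | hlt
  · exact hb
  rcases hcomp b with hle | hle
  · exact hle (w_mem p _ q hlt)
  · exact absurd ((w_mem_iff p _ b).1 (hle hb)) (lt_irrefl b)


lemma finSupp_dense : @Dense (ℕ → ZMod p) (prodTop p) ((finSupp p : Set (ℕ → ZMod p))) := by
  letI : TopologicalSpace (ZMod p) := ⊥
  haveI : DiscreteTopology (ZMod p) := ⟨rfl⟩
  have : Dense ((finSupp p : Set (ℕ → ZMod p))) := by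
    intro g
    have htend : Filter.Tendsto (fun (n : ℕ) (m : ℕ) => if m < n then g m else 0)
        Filter.atTop (nhds g) := by
      rw [tendsto_pi_nhds]
      intro m
      have hconst : Filter.Tendsto (fun _ : ℕ => g m) Filter.atTop (nhds (g m)) :=
        tendsto_const_nhds
      refine Filter.Tendsto.congr' ?_ hconst
      filter_upwards [Filter.eventually_ge_atTop (m + 1)] with n hn
      exact (if_pos (by omega)).symm
    refine mem_closure_of_tendsto htend ?_
    filter_upwards with n
    refine (mem_finSupp p).2 (Set.Finite.subset (Set.finite_Iio n) fun m hm => ?_)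
    simp only [Function.mem_support] at hm
    by_contra h
    exact hm (if_neg (by simpa using h))
  exact this

/-- Order isomorphisms transport non-refinable chains. -/
lemma isNonrefinable_map {L L' : Type*} [PartialOrder L] [PartialOrder L'] (φ : L ≃o L')
    {a b : L} {C : Set L} (h : IsNonrefinableChainBetween a b C) :
    IsNonrefinableChainBetween (φ a) (φ b) (φ '' C) := by
  obtain ⟨ha, hb, hIcc, hch, hmax⟩ := h
  refine ⟨⟨a, ha, rfl⟩, ⟨b, hb, rfl⟩, ?_, ?_, ?_⟩
  · rintro _ ⟨x, hx, rfl⟩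
    exact ⟨φ.monotone (hIcc hx).1, φ.monotone (hIcc hx).2⟩
  · rintro _ ⟨x, hx, rfl⟩ _ ⟨y, hy, rfl⟩ hne
    have hxy : x ≠ y := fun h => hne (by rw [h])
    rcases hch hx hy hxy with h | h
    · exact Or.inl (φ.monotone h)
    · exact Or.inr (φ.monotone h)
  · intro C' hCC' hIcc' hch'
    have hD : φ ⁻¹' C' = C := by
      refine hmax (φ ⁻¹' C') (fun x hx => by exact hCC' ⟨x, hx, rfl⟩) ?_ ?_
      · intro x hx
        have := hIcc' hx
        exact ⟨φ.le_iff_le.1 this.1, φ.le_iff_le.1 this.2⟩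
      · intro x hx y hy hne
        have hxy : φ x ≠ φ y := fun h => hne (φ.injective h)
        rcases hch' hx hy hxy with h | h
        · exact Or.inl (φ.le_iff_le.1 h)
        · exact Or.inr (φ.le_iff_le.1 h)
    ext y
    constructor
    · intro hy
      refine ⟨φ.symm y, ?_, φ.apply_symm_apply y⟩
      rw [← hD]
      simpa [Set.mem_preimage, φ.apply_symm_apply] using hy
    · rintro ⟨x, hx, rfl⟩
      exact hCC' ⟨x, hx, rfl⟩

lemma card_lowerSet : Cardinal.mk {s : Set ℚ | IsLowerSet s} = 2 ^ Cardinal.aleph0 := by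
  refine le_antisymm ?_ ?_
  · calc Cardinal.mk {s : Set ℚ | IsLowerSet s} ≤ Cardinal.mk (Set ℚ) := Cardinal.mk_set_le _
    _ = 2 ^ Cardinal.mk ℚ := Cardinal.mk_set
    _ = 2 ^ Cardinal.aleph0 := by rw [Cardinal.mk_denumerable]
  · have hlow : ∀ r : ℝ, IsLowerSet {q : ℚ | (q : ℝ) < r} := by
      intro r a b hb ha
      have hba : (b : ℝ) ≤ (a : ℝ) := by exact_mod_cast hb
      have har : (a : ℝ) < r := ha
      exact show (b : ℝ) < r from lt_of_le_of_lt hba har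
    have hf : Function.Injective (fun r : ℝ => (⟨{q : ℚ | (q : ℝ) < r}, hlow r⟩ :
        {s : Set ℚ | IsLowerSet s})) := by
      intro r r' h
      by_contra hne
      have key : ∀ u u' : ℝ, u < u' → ({q : ℚ | (q : ℝ) < u} : Set ℚ) ≠ {q : ℚ | (q : ℝ) < u'} := by
        intro u u' hu hset
        obtain ⟨q, hq1, hq2⟩ := exists_rat_btwn hu
        have : q ∈ ({q : ℚ | (q : ℝ) < u} : Set ℚ) := hset ▸ hq2
        exact absurd this (by simpa using hq1.le)
      have hsets := congrArg Subtype.val h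
      rcases lt_or_gt_of_ne hne with hlt | hlt
      · exact key r r' hlt hsets
      · exact key r' r hlt hsets.symm
    calc 2 ^ Cardinal.aleph0 = Cardinal.mk ℝ := by
          rw [Cardinal.mk_real, Cardinal.two_power_aleph0]
    _ ≤ Cardinal.mk {s : Set ℚ | IsLowerSet s} := Cardinal.mk_le_of_injective hf

lemma card_segs : Cardinal.mk (insert Set.univ (Set.range I) : Set (Set ℚ)) =
    Cardinal.aleph0 := by
  refine le_antisymm ?_ ?_
  · exact Cardinal.le_aleph0_iff_set_countable.2 ((Set.countable_range I).insert _)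
  · rw [Cardinal.aleph0_le_mk_iff, Set.infinite_coe_iff]
    exact ((Set.infinite_range_of_injective I_injective).mono (Set.subset_insert _ _))

lemma chain_one' : IsNonrefinableChainBetween (finSupp p) (KK p Set.univ)
    (KK p '' (insert Set.univ (Set.range I))) := by
  refine ⟨⟨I 0, Set.mem_insert_of_mem _ ⟨0, rfl⟩, by rw [I_zero, KK_empty]⟩,
    ⟨Set.univ, Set.mem_insert _ _, rfl⟩, ?_, ?_, max_chain_one p⟩
  · rintro _ ⟨s, _, rfl⟩
    exact ⟨finSupp_le_KK p s, KK_mono p (Set.subset_univ s)⟩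
  · rintro _ ⟨s, hs, rfl⟩ _ ⟨t, ht, rfl⟩ _
    have htot : s ⊆ t ∨ t ⊆ s := by
      rcases hs with rfl | ⟨n, rfl⟩
      · exact Or.inr (Set.subset_univ t)
      rcases ht with rfl | ⟨m, rfl⟩
      · exact Or.inl (Set.subset_univ _)
      rcases le_total n m with h | h
      · exact Or.inl (I_mono h)
      · exact Or.inr (I_mono h)
    rcases htot with h | h
    · exact Or.inl (KK_mono p h)
    · exact Or.inr (KK_mono p h)

lemma chain_two' : IsNonrefinableChainBetween (finSupp p) (KK p Set.univ)
    (KK p '' {s | IsLowerSet s}) := by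
  refine ⟨⟨∅, fun a b _ hb => absurd hb (Set.notMem_empty a), by rw [KK_empty]⟩,
    ⟨Set.univ, fun a b _ _ => Set.mem_univ b, rfl⟩, ?_, ?_, max_chain_two p⟩
  · rintro _ ⟨s, _, rfl⟩
    exact ⟨finSupp_le_KK p s, KK_mono p (Set.subset_univ s)⟩
  · rintro _ ⟨s, hs, rfl⟩ _ ⟨t, ht, rfl⟩ _
    rcases hs.total ht with h | h
    · exact Or.inl (KK_mono p h)
    · exact Or.inr (KK_mono p h)

end Statement13


/-- Let `p` be a prime and `G = (ℤ/pℤ)^ℕ` the countable power of the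
cyclic group of order `p`, with the product topology (each factor discrete). Then there
exist subgroups `A ≤ B` of `G`, with `A` dense in `G`, and two non-refinable chains of
subgroups of `G` with smallest element `A` and largest element `B`, all of whose members
are dense in `G`, such that one chain has cardinality `ℵ₀` and the other `2 ^ ℵ₀`. -/
theorem exists_nonrefinable_chains_of_dense_subgroups (p : ℕ) (hp : p.Prime) :
    ∃ A B : AddSubgroup (ℕ → ZMod p), A ≤ B ∧
      @Dense (ℕ → ZMod p) (prodTop p) (A : Set (ℕ → ZMod p)) ∧
      ∃ C₁ C₂ : Set (AddSubgroup (ℕ → ZMod p)),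
        IsNonrefinableChainBetween A B C₁ ∧ IsNonrefinableChainBetween A B C₂ ∧
        (∀ K ∈ C₁ ∪ C₂, @Dense (ℕ → ZMod p) (prodTop p) (K : Set (ℕ → ZMod p))) ∧
        Cardinal.mk C₁ = Cardinal.aleph0 ∧ Cardinal.mk C₂ = 2 ^ Cardinal.aleph0 := by
  haveI : Fact p.Prime := ⟨hp⟩
  open Statement13 in
  let ψ : Submodule (ZMod p) (ℕ → ZMod p) ≃o AddSubgroup (ℕ → ZMod p) :=
    (AddSubgroup.toZModSubmodule p).symm
  have hψcoe : ∀ S : Submodule (ZMod p) (ℕ → ZMod p), ((ψ S : AddSubgroup _) : Set _) = (S : Set (ℕ → ZMod p)) := by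
    intro S
    rfl
  refine ⟨ψ (Statement13.finSupp p), ψ (Statement13.KK p Set.univ),
    ψ.monotone (Statement13.finSupp_le_KK p Set.univ), ?_, ?_⟩
  · rw [hψcoe]
    exact Statement13.finSupp_dense p
  · refine ⟨ψ '' (Statement13.KK p '' (insert Set.univ (Set.range Statement13.I))),
      ψ '' (Statement13.KK p '' {s | IsLowerSet s}), ?_, ?_, ?_, ?_, ?_⟩
    · exact Statement13.isNonrefinable_map ψ (Statement13.chain_one' p)
    · exact Statement13.isNonrefinable_map ψ (Statement13.chain_two' p)
    · intro K hK
      have hAK : ψ (Statement13.finSupp p) ≤ K := by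
        rcases hK with hK | hK
        · exact ((Statement13.isNonrefinable_map ψ (Statement13.chain_one' p)).2.2.1 hK).1
        · exact ((Statement13.isNonrefinable_map ψ (Statement13.chain_two' p)).2.2.1 hK).1
      have hsub : ((ψ (Statement13.finSupp p) : AddSubgroup (ℕ → ZMod p)) : Set (ℕ → ZMod p))
          ⊆ (K : Set (ℕ → ZMod p)) := SetLike.coe_subset_coe.2 hAK
      have hd := Statement13.finSupp_dense p
      rw [← hψcoe (Statement13.finSupp p)] at hd
      exact Dense.mono (X := ℕ → ZMod p) (s₁ := _) hsub hd
    · rw [Cardinal.mk_image_eq ψ.injective,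
        Cardinal.mk_image_eq (Statement13.KK_injective p)]
      exact Statement13.card_segs
    · rw [Cardinal.mk_image_eq ψ.injective,
        Cardinal.mk_image_eq (Statement13.KK_injective p)]
      exact Statement13.card_lowerSet
end

section
/- Let G be an abelian group endowed with a maximal group topology τ (i.e., τ is a Hausdorff non-discrete group topology such that the only group topology strictly finer than τ is the discrete topology). Then the topological group (G, τ) is not first-countable. -/
open OrderDual

open Filter Set Topology Pointwise

namespace MaxTopAux

variable {G : Type*} [CommGroup G]

/-- Coefficient bound for the sets `B m`. -/
def bd (m l : ℕ) : ℕ := if l < m then 0 else 2 ^ (l - m)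

lemma bd_zero (l : ℕ) : bd 0 l = 2 ^ l := by simp [bd]

lemma bd_succ_add (m l : ℕ) : bd (m + 1) l + bd (m + 1) l ≤ bd m l := by
  unfold bd
  rcases lt_or_ge l (m + 1) with h | h
  · rw [if_pos h]
    simp
  · rw [if_neg (by omega), if_neg (by omega)]
    have : l - m = (l - (m + 1)) + 1 := by omega
    rw [this, pow_succ]
    omega

lemma bd_anti {m m' : ℕ} (h : m ≤ m') (l : ℕ) : bd m' l ≤ bd m l := by
  unfold bd
  rcases lt_or_ge l m' with h' | h'
  · simp [h']
  · rw [if_neg (by omega), if_neg (by omega)]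
    exact Nat.pow_le_pow_right (by norm_num) (by omega)

lemma one_le_bd {m l : ℕ} (h : m ≤ l) : 1 ≤ bd m l := by
  unfold bd
  rw [if_neg (by omega)]
  exact Nat.one_le_two_pow

/-- The basic neighborhoods of the new group topology. -/
def BSet (d : ℕ → G) (m : ℕ) : Set G :=
  { g | ∃ (N : ℕ) (c : ℕ → ℤ), (∀ l, |c l| ≤ (bd m l : ℤ)) ∧ (∀ l, N ≤ l → c l = 0)
      ∧ g = ∏ l ∈ Finset.range N, d l ^ c l }

/-- The finite "head" sets. -/
def FSet (d : ℕ → G) (n : ℕ) : Set G :=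
  { g | ∃ c : ℕ → ℤ, (∀ l, |c l| ≤ ((2 : ℤ) ^ l)) ∧ g = ∏ l ∈ Finset.range n, d l ^ c l }

lemma prod_range_ext (d : ℕ → G) (c : ℕ → ℤ) {N N' : ℕ} (h : N ≤ N')
    (hc : ∀ l, N ≤ l → c l = 0) :
    ∏ l ∈ Finset.range N', d l ^ c l = ∏ l ∈ Finset.range N, d l ^ c l := by
  induction N', h using Nat.le_induction with
  | base => rfl
  | succ n hn ih => rw [Finset.prod_range_succ, hc n hn, zpow_zero, mul_one, ih]

lemma one_mem_BSet (d : ℕ → G) (m : ℕ) : (1 : G) ∈ BSet d m :=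
  ⟨0, 0, by simp, by simp, by simp⟩

lemma BSet_anti (d : ℕ → G) {m m' : ℕ} (h : m ≤ m') : BSet d m' ⊆ BSet d m := by
  rintro g ⟨N, c, h1, h2, h3⟩
  exact ⟨N, c, fun l => (h1 l).trans (by exact_mod_cast bd_anti h l), h2, h3⟩

lemma mul_mem_BSet {d : ℕ → G} {m : ℕ} {a b : G} (ha : a ∈ BSet d (m + 1))
    (hb : b ∈ BSet d (m + 1)) : a * b ∈ BSet d m := by
  obtain ⟨Na, ca, ha1, ha2, rfl⟩ := ha
  obtain ⟨Nb, cb, hb1, hb2, rfl⟩ := hb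
  refine ⟨max Na Nb, ca + cb, ?_, ?_, ?_⟩
  · intro l
    calc |(ca + cb) l| ≤ |ca l| + |cb l| := abs_add_le _ _
      _ ≤ (bd (m+1) l : ℤ) + bd (m+1) l := add_le_add (ha1 l) (hb1 l)
      _ ≤ (bd m l : ℤ) := by exact_mod_cast bd_succ_add m l
  · intro l hl
    simp [ha2 l (le_trans (le_max_left _ _) hl), hb2 l (le_trans (le_max_right _ _) hl)]
  · rw [← prod_range_ext d ca (le_max_left Na Nb) ha2,
      ← prod_range_ext d cb (le_max_right Na Nb) hb2, ← Finset.prod_mul_distrib]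
    exact Finset.prod_congr rfl fun l _ => (zpow_add _ _ _).symm

lemma inv_mem_BSet {d : ℕ → G} {m : ℕ} {a : G} (ha : a ∈ BSet d m) : a⁻¹ ∈ BSet d m := by
  obtain ⟨N, c, h1, h2, rfl⟩ := ha
  refine ⟨N, -c, fun l => by simpa using h1 l, fun l hl => by simp [h2 l hl], ?_⟩
  rw [← Finset.prod_inv_distrib]
  exact Finset.prod_congr rfl fun l _ => by simp [zpow_neg]

lemma mem_BSet_self (d : ℕ → G) {m n : ℕ} (h : m ≤ n) : d n ∈ BSet d m := by
  refine ⟨n + 1, fun l => if l = n then 1 else 0, ?_, ?_, ?_⟩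
  · intro l
    by_cases hl : l = n
    · subst hl; simpa using by exact_mod_cast one_le_bd h
    · simp [hl]
  · intro l hl
    show (if l = n then (1:ℤ) else 0) = 0
    rw [if_neg (by omega)]
  · show d n = ∏ l ∈ Finset.range (n+1), d l ^ (if l = n then (1:ℤ) else 0)
    rw [Finset.prod_range_succ, if_pos rfl, zpow_one,
      Finset.prod_eq_one fun l hl => by
        rw [if_neg (Finset.mem_range.1 hl).ne, zpow_zero],
      one_mul]

lemma FSet_finite (d : ℕ → G) (n : ℕ) : (FSet d n).Finite := by
  have hsub : FSet d n ⊆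
      (fun c : Fin n → ℤ => ∏ l : Fin n, d l ^ c l) ''
        (Set.pi Set.univ fun l : Fin n => Set.Icc (-(2 ^ (l : ℕ)) : ℤ) (2 ^ (l : ℕ))) := by
    rintro g ⟨c, hc, rfl⟩
    refine ⟨fun l => c l, fun l _ => abs_le.1 (hc l), ?_⟩
    rw [Finset.prod_range fun l => d l ^ c l]
  exact Set.Finite.subset (Set.Finite.image _ (Set.Finite.pi fun l => Set.finite_Icc _ _)) hsub

lemma FSet_congr {d d' : ℕ → G} {n : ℕ} (h : ∀ l < n, d l = d' l) : FSet d n = FSet d' n := by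
  unfold FSet
  ext g
  constructor <;> rintro ⟨c, hc, rfl⟩ <;> refine ⟨c, hc, ?_⟩ <;>
    exact (Finset.prod_congr rfl fun l hl => by rw [h l (Finset.mem_range.1 hl)]).symm

lemma one_mem_FSet (d : ℕ → G) (n : ℕ) : (1 : G) ∈ FSet d n :=
  ⟨0, by simp, by simp⟩

section W

variable {W : ℕ → Set G}

lemma W_anti (hWone : ∀ n, (1 : G) ∈ W n)
    (hWmul : ∀ n, ∀ x ∈ W (n + 1), ∀ y ∈ W (n + 1), x * y ∈ W n)
    {n m : ℕ} (h : n ≤ m) : W m ⊆ W n := by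
  induction m, h using Nat.le_induction with
  | base => exact subset_rfl
  | succ m hm ih =>
    intro x hx
    exact ih (by simpa using hWmul m x hx 1 (hWone (m + 1)))

lemma pow_mem_W (hWone : ∀ n, (1 : G) ∈ W n)
    (hWmul : ∀ n, ∀ x ∈ W (n + 1), ∀ y ∈ W (n + 1), x * y ∈ W n) :
    ∀ (r k : ℕ) (x : G), x ∈ W (k + r) → ∀ c : ℕ, c ≤ 2 ^ r → x ^ c ∈ W k := by
  intro r
  induction r with
  | zero =>
    intro k x hx c hc
    interval_cases c
    · simpa using hWone k
    · simpa using hx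
  | succ r ih =>
    intro k x hx c hc
    have hx' : x ∈ W (k + 1 + r) := by rwa [show k + 1 + r = k + (r + 1) by omega]
    have h2r : 2 ^ (r + 1) = 2 ^ r + 2 ^ r := by rw [pow_succ]; omega
    have h1 : x ^ min c (2 ^ r) ∈ W (k + 1) := ih (k + 1) x hx' _ (min_le_right _ _)
    have h2 : x ^ (c - min c (2 ^ r)) ∈ W (k + 1) := ih (k + 1) x hx' _ (by omega)
    have := hWmul k _ h1 _ h2
    rwa [← pow_add, (by omega : min c (2 ^ r) + (c - min c (2 ^ r)) = c)] at this

lemma zpow_mem_W (hWone : ∀ n, (1 : G) ∈ W n)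
    (hWsymm : ∀ n, ∀ x ∈ W n, x⁻¹ ∈ W n)
    (hWmul : ∀ n, ∀ x ∈ W (n + 1), ∀ y ∈ W (n + 1), x * y ∈ W n)
    (r k : ℕ) (x : G) (hx : x ∈ W (k + r)) (c : ℤ) (hc : |c| ≤ 2 ^ r) : x ^ c ∈ W k := by
  rcases le_or_gt 0 c with h | h
  · have : x ^ c = x ^ c.toNat := by rw [← zpow_natCast, Int.toNat_of_nonneg h]
    rw [this]
    refine pow_mem_W hWone hWmul r k x hx c.toNat ?_
    have : c ≤ 2 ^ r := by rwa [abs_of_nonneg h] at hc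
    exact_mod_cast Int.toNat_le.2 (by exact_mod_cast this)
  · have hcc : x ^ c = (x ^ (-c).toNat)⁻¹ := by
      rw [← zpow_natCast x, Int.toNat_of_nonneg (by omega : (0:ℤ) ≤ -c), ← zpow_neg, neg_neg]
    rw [hcc]
    refine hWsymm k _ (pow_mem_W hWone hWmul r k x hx (-c).toNat ?_)
    have : -c ≤ 2 ^ r := by rwa [abs_of_neg h] at hc
    exact_mod_cast Int.toNat_le.2 (by exact_mod_cast this)

lemma tail_prod_mem_W (hWone : ∀ n, (1 : G) ∈ W n)
    (hWmul : ∀ n, ∀ x ∈ W (n + 1), ∀ y ∈ W (n + 1), x * y ∈ W n) :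
    ∀ (K s : ℕ) (g : ℕ → G), (∀ j < K, g j ∈ W (s + j + 1)) →
      (∏ j ∈ Finset.range K, g j) ∈ W s := by
  intro K
  induction K with
  | zero => intro s g _; simpa using hWone s
  | succ K ih =>
    intro s g hg
    rw [Finset.prod_range_succ']
    apply hWmul s
    · refine ih (s + 1) (fun j => g (j + 1)) fun j hj => ?_
      have := hg (j + 1) (by omega)
      rwa [show s + (j + 1) + 1 = s + 1 + j + 1 by omega] at this
    · simpa using hg 0 (by omega)

lemma mem_FSet_mul_W (hWone : ∀ n, (1 : G) ∈ W n)
    (hWsymm : ∀ n, ∀ x ∈ W n, x⁻¹ ∈ W n)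
    (hWmul : ∀ n, ∀ x ∈ W (n + 1), ∀ y ∈ W (n + 1), x * y ∈ W n)
    (d : ℕ → G) (q : ℕ → ℕ) (hq : ∀ n, q n < q (n + 1))
    (hd : ∀ n, d n ∈ W (q n + n + 1)) (n : ℕ) :
    ∀ b ∈ BSet d 0, ∃ f ∈ FSet d n, ∃ y ∈ W (q n), b = f * y := by
  have hqmono : ∀ a j, q a + j ≤ q (a + j) := by
    intro a j
    induction j with
    | zero => simp
    | succ j ih =>
      have h2 := hq (a + j)
      show q a + (j + 1) ≤ q (a + j + 1)
      omega
  rintro b ⟨N, c, hc1, hc2, rfl⟩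
  have hc1' : ∀ l, |c l| ≤ (2 : ℤ) ^ l := by
    intro l
    have := hc1 l
    rwa [bd_zero, Nat.cast_pow, Nat.cast_ofNat] at this
  have hN : N ≤ n + (max N n - n) := by omega
  rw [← prod_range_ext d c hN hc2, Finset.prod_range_add]
  refine ⟨_, ⟨c, hc1', rfl⟩, _, ?_, rfl⟩
  apply tail_prod_mem_W hWone hWmul _ (q n)
  intro j hj
  have h1 : d (n + j) ∈ W ((q (n + j) + 1) + (n + j)) := by
    have := hd (n + j)
    rwa [show q (n + j) + (n + j) + 1 = (q (n + j) + 1) + (n + j) by omega] at this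
  have h2 : d (n + j) ^ c (n + j) ∈ W (q (n + j) + 1) :=
    zpow_mem_W hWone hWsymm hWmul (n + j) (q (n + j) + 1) _ h1 _
      (le_trans (hc1' (n + j)) (by
        have : ((2:ℤ) ^ (n+j) : ℤ) ≤ 2 ^ (n + j) := le_refl _
        exact this))
  exact W_anti hWone hWmul (by have := hqmono n j; omega) h2

end W

end MaxTopAux
open OrderDual Filter Set Topology Pointwise MaxTopAux in
/-- Let `G` be an abelian group endowed with a maximal group topology
`τ`: a Hausdorff, non-discrete group topology such that the only group topology strictly
finer than `τ` is the discrete topology `⊤`. Then `(G, τ)` is not first-countable. -/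
theorem maximal_topology_not_firstCountable {G : Type*} [CommGroup G]
    (τ : GroupTopLattice G) (hH : @T2Space G (topOf τ)) (hnd : τ ≠ ⊤)
    (hmax : ∀ σ : GroupTopLattice G, τ < σ → σ = ⊤) :
    ¬ @FirstCountableTopology G (topOf τ) := by
  intro hFC
  letI : TopologicalSpace G := topOf τ
  haveI : IsTopologicalGroup G := (ofDual τ).toIsTopologicalGroup
  haveI := hH
  haveI := hFC
  obtain ⟨u, hu, hu2⟩ := IsTopologicalGroup.exists_antitone_basis_nhds_one G
  have humem : ∀ n, u n ∈ 𝓝 (1 : G) := fun n => hu.1.mem_of_mem trivial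
  set W : ℕ → Set G := fun n => u n ∩ (u n)⁻¹ with hWdef
  have hWmem : ∀ n, W n ∈ 𝓝 (1 : G) := fun n =>
    Filter.inter_mem (humem n) (inv_mem_nhds_one G (humem n))
  have hWone : ∀ n, (1 : G) ∈ W n := fun n => mem_of_mem_nhds (hWmem n)
  have hWsub : ∀ n, W n ⊆ u n := fun n => Set.inter_subset_left
  have hWsymm : ∀ n, ∀ x ∈ W n, x⁻¹ ∈ W n := by
    rintro n x ⟨h1, h2⟩
    exact ⟨Set.mem_inv.1 h2, by rw [Set.mem_inv, inv_inv]; exact h1⟩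
  have hWmul : ∀ n, ∀ x ∈ W (n + 1), ∀ y ∈ W (n + 1), x * y ∈ W n := by
    rintro n x ⟨hx1, hx2⟩ y ⟨hy1, hy2⟩
    refine ⟨hu2 n (Set.mul_mem_mul hx1 hy1), ?_⟩
    rw [Set.mem_inv, mul_inv]
    exact hu2 n (Set.mul_mem_mul (Set.mem_inv.1 hx2) (Set.mem_inv.1 hy2))
  have hnotbot : (topOf τ : TopologicalSpace G) ≠ ⊥ := by
    intro h
    apply hnd
    have hb : ofDual τ = (⊥ : GroupTopology G) :=
      GroupTopology.toTopologicalSpace_injective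
        (by rw [GroupTopology.toTopologicalSpace_bot]; exact h)
    simpa using congrArg OrderDual.toDual hb
  have hbig : ∀ A : Set G, A ∈ 𝓝 (1 : G) → ∀ s : Set G, s.Finite → ∃ x ∈ A, x ∉ s := by
    intro A hA s hs
    by_contra hcon
    push_neg at hcon
    have hAfin : A.Finite := hs.subset hcon
    have h1 : {(1 : G)} ∈ 𝓝 (1 : G) := by
      have hcl : IsClosed (A \ {1}) := (hAfin.subset Set.diff_subset).isClosed
      have hmem2 : A ∩ (A \ {1})ᶜ ∈ 𝓝 (1 : G) :=
        Filter.inter_mem hA (hcl.isOpen_compl.mem_nhds (by simp))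
      refine Filter.mem_of_superset hmem2 ?_
      rintro x ⟨hx1, hx2⟩
      simp only [Set.mem_compl_iff, Set.mem_diff, Set.mem_singleton_iff, not_and, not_not] at hx2
      simpa using hx2 hx1
    have hsing : ∀ x : G, {x} ∈ 𝓝 x := by
      intro x
      rw [← map_mul_left_nhds_one x, Filter.mem_map]
      refine Filter.mem_of_superset h1 ?_
      intro y hy
      simp only [Set.mem_singleton_iff] at hy
      simp [hy]
    have hdisc : DiscreteTopology G := discreteTopology_iff_nhds.2 fun x =>
      le_antisymm (Filter.le_pure_iff.2 (hsing x)) (pure_le_nhds x)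
    exact hnotbot hdisc.eq_bot
  have hT1 : ∀ x : G, x ≠ 1 → ∃ m, ∀ k, m ≤ k → x ∉ W k := by
    intro x hx
    have hxc : {x}ᶜ ∈ 𝓝 (1 : G) :=
      isOpen_compl_singleton.mem_nhds (by simp [hx.symm])
    obtain ⟨m, -, hm⟩ := hu.1.mem_iff.1 hxc
    exact ⟨m, fun k hk hxk => hm (hWsub m (W_anti hWone hWmul hk hxk)) rfl⟩
  have hpick : ∀ (n : ℕ) (df : ℕ → G) (qp : ℕ), ∃ wqd : G × ℕ × G,
      wqd.1 ∈ W n ∧ (∀ f ∈ FSet df n, ∀ y ∈ W wqd.2.1, wqd.1 ≠ f * y) ∧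
      qp < wqd.2.1 ∧ wqd.2.2 ∈ W (wqd.2.1 + n + 1) ∧ wqd.2.2 ≠ 1 := by
    intro n df qp
    obtain ⟨w, hwW, hwF⟩ := hbig (W n) (hWmem n) (FSet df n) (FSet_finite df n)
    have hsep : ∀ f ∈ (FSet_finite df n).toFinset, ∃ m, ∀ k, m ≤ k → ∀ y ∈ W k, w ≠ f * y := by
      intro f hf
      have hff : f ∈ FSet df n := (Set.Finite.mem_toFinset _).1 hf
      have hne : f⁻¹ * w ≠ 1 := by
        intro h
        exact hwF (by rwa [← inv_mul_eq_one.1 h])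
      obtain ⟨m, hm⟩ := hT1 _ hne
      refine ⟨m, fun k hk y hy hwfy => hm k hk ?_⟩
      rw [hwfy, inv_mul_cancel_left]
      exact hy
    choose! μ hμ using hsep
    set q := max (qp + 1) ((FSet_finite df n).toFinset.sup μ) with hqdef
    obtain ⟨dd, hdd, hdd1⟩ := hbig (W (q + n + 1)) (hWmem _) {1} (Set.finite_singleton 1)
    refine ⟨(w, q, dd), hwW, ?_,
      lt_of_lt_of_le (Nat.lt_succ_self qp) (le_max_left _ _), hdd, by simpa using hdd1⟩
    intro f hf y hy
    have hfT : f ∈ (FSet_finite df n).toFinset := (Set.Finite.mem_toFinset _).2 hf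
    exact hμ f hfT q (le_trans (Finset.le_sup hfT) (le_max_right _ _)) y hy
  choose pick hp1 hp2 hp3 hp4 hp5 using hpick
  let st : ℕ → ℕ × (ℕ → G) := fun n =>
    Nat.rec (motive := fun _ => ℕ × (ℕ → G)) (0, fun _ => 1)
      (fun k s => ((pick k s.2 s.1).2.1, Function.update s.2 k (pick k s.2 s.1).2.2)) n
  let D : ℕ → G := fun n => (pick n (st n).2 (st n).1).2.2
  let Q : ℕ → ℕ := fun n => (pick n (st n).2 (st n).1).2.1
  let Wt : ℕ → G := fun n => (pick n (st n).2 (st n).1).1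
  have hst : ∀ n, st (n + 1) = (Q n, Function.update (st n).2 n (D n)) := fun n => rfl
  have hagree : ∀ n m, n < m → (st m).2 n = D n := by
    intro n m
    induction m with
    | zero => omega
    | succ m ih =>
      intro hnm
      rw [hst m]
      rcases Nat.lt_succ_iff_lt_or_eq.1 hnm with h | h
      · simp only
        rw [Function.update_of_ne (by omega)]
        exact ih h
      · subst h
        simp only
        rw [Function.update_self]
  have hQ : ∀ n, Q n < Q (n + 1) := by
    intro n
    have h3 := hp3 (n + 1) (st (n + 1)).2 (st (n + 1)).1
    have h1 : (st (n + 1)).1 = Q n := by rw [hst n]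
    rw [h1] at h3
    exact h3
  have hD : ∀ n, D n ∈ W (Q n + n + 1) := fun n => hp4 n _ _
  have hD1 : ∀ n, D n ≠ 1 := fun n => hp5 n _ _
  have hWt : ∀ n, Wt n ∈ W n := fun n => hp1 n _ _
  have hWtF : ∀ n, ∀ f ∈ FSet D n, ∀ y ∈ W (Q n), Wt n ≠ f * y := by
    intro n
    have h2 := hp2 n (st n).2 (st n).1
    rwa [FSet_congr fun l hl => hagree l n hl] at h2
  let FB : GroupFilterBasis G := groupFilterBasisOfComm (Set.range (BSet D))
    ⟨BSet D 0, 0, rfl⟩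
    (by
      rintro x y ⟨m, rfl⟩ ⟨m', rfl⟩
      exact ⟨BSet D (max m m'), ⟨max m m', rfl⟩,
        Set.subset_inter (BSet_anti D (le_max_left _ _)) (BSet_anti D (le_max_right _ _))⟩)
    (by rintro U ⟨m, rfl⟩; exact one_mem_BSet D m)
    (by
      rintro U ⟨m, rfl⟩
      exact ⟨BSet D (m + 1), ⟨m + 1, rfl⟩,
        Set.mul_subset_iff.2 fun a ha b hb => mul_mem_BSet ha hb⟩)
    (by
      rintro U ⟨m, rfl⟩
      exact ⟨BSet D m, ⟨m, rfl⟩, fun a ha => inv_mem_BSet ha⟩)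
  let Teta : GroupTopology G := ⟨FB.topology, FB.isTopologicalGroup⟩
  let S : GroupTopology G := ofDual τ ⊓ Teta
  have hB0 : BSet D 0 ∉ 𝓝 (1 : G) := by
    intro hmem
    obtain ⟨j, -, hj⟩ := hu.1.mem_iff.1 hmem
    obtain ⟨f, hf, y, hy, hEq⟩ :=
      mem_FSet_mul_W hWone hWsymm hWmul D Q hQ hD j (Wt j) (hj (hWsub j (hWt j)))
    exact hWtF j f hf y hy hEq
  have hB0S : BSet D 0 ∈ @nhds G S.toTopologicalSpace 1 := by
    have hS : S.toTopologicalSpace = (topOf τ) ⊓ FB.topology := rfl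
    rw [hS, _root_.nhds_inf]
    exact Filter.mem_inf_of_right (FB.mem_nhds_one ⟨0, rfl⟩)
  have hlt : S < ofDual τ := by
    refine lt_of_le_of_ne inf_le_left fun h => ?_
    rw [h] at hB0S
    exact hB0 hB0S
  have htopS : OrderDual.toDual S = ⊤ := hmax (OrderDual.toDual S) hlt
  have hSbot : S = ⊥ := by simpa using congrArg OrderDual.ofDual htopS
  have htop : (topOf τ : TopologicalSpace G) ⊓ FB.topology = (⊥ : TopologicalSpace G) := by
    have h2 := congrArg GroupTopology.toTopologicalSpace hSbot
    rwa [GroupTopology.toTopologicalSpace_bot] at h2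
  have hone : ({(1 : G)} : Set G) ∈ 𝓝 (1 : G) ⊓ @nhds G FB.topology 1 := by
    rw [← _root_.nhds_inf]
    show ({(1 : G)} : Set G) ∈ @nhds G ((topOf τ : TopologicalSpace G) ⊓ FB.topology) 1
    rw [htop]
    have hdb : @DiscreteTopology G ⊥ := @DiscreteTopology.mk G ⊥ rfl
    rw [@nhds_discrete G ⊥ hdb]
    exact Filter.mem_pure.2 rfl
  obtain ⟨A, hA, Bs, hBs, hABs⟩ := Filter.mem_inf_iff.1 hone
  obtain ⟨jA, -, hjA⟩ := hu.1.mem_iff.1 hA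
  obtain ⟨V, hV, hVB⟩ := FB.nhds_one_hasBasis.mem_iff.1 hBs
  obtain ⟨m, rfl⟩ := hV
  set n := max jA m with hn
  have hDA : D n ∈ A := by
    apply hjA
    apply hu.2 (le_max_left jA m)
    exact hWsub n (W_anti hWone hWmul (by omega) (hD n))
  have hDB : D n ∈ Bs := hVB (mem_BSet_self D (le_max_right jA m))
  have : D n ∈ ({(1 : G)} : Set G) := by rw [hABs]; exact ⟨hDA, hDB⟩
  exact hD1 n (by simpa using this)
end

section
/- Let G be an abelian group endowed with a maximal group topology τ (i.e., τ is a Hausdorff non-discrete group topology such that the only group topology strictly finer than τ is the discrete topology). Then (G, τ) has no non-trivial convergent sequences: every sequence in G converging in (G, τ) is eventually constant. -/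
open OrderDual
open Filter Set Topology Pointwise

set_option linter.unusedSectionVars false
set_option linter.unusedVariables false

namespace MaxTopAux

variable {G : Type*} [CommGroup G]

/-- interpret an entry `(s, j)` as `b j` or `(b j)⁻¹`. -/
def trm (b : ℕ → G) (p : Bool × ℕ) : G := if p.1 then b p.2 else (b p.2)⁻¹

/-- product of a list of entries. -/
def eprod (b : ℕ → G) (L : List (Bool × ℕ)) : G := (L.map (trm b)).prod

@[simp] lemma eprod_nil (b : ℕ → G) : eprod b ([] : List (Bool × ℕ)) = 1 := rfl

@[simp] lemma eprod_cons (b : ℕ → G) (p : Bool × ℕ) (L : List (Bool × ℕ)) :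
    eprod b (p :: L) = trm b p * eprod b L := by simp [eprod]

lemma eprod_append (b : ℕ → G) (L₁ L₂ : List (Bool × ℕ)) :
    eprod b (L₁ ++ L₂) = eprod b L₁ * eprod b L₂ := by simp [eprod]

lemma eprod_congr {b b' : ℕ → G} : ∀ {L : List (Bool × ℕ)},
    (∀ p ∈ L, b p.2 = b' p.2) → eprod b L = eprod b' L := by
  intro L
  induction L with
  | nil => intro _; rfl
  | cons p L ih =>
    intro h
    have hp : b p.2 = b' p.2 := h p (by simp)
    simp only [eprod_cons, ih (fun q hq => h q (by simp [hq]))]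
    congr 1
    unfold trm
    rw [hp]

lemma eprod_filter (b : ℕ → G) (q : Bool × ℕ → Bool) :
    ∀ L : List (Bool × ℕ),
      eprod b L = eprod b (L.filter q) * eprod b (L.filter fun p => !q p) := by
  intro L
  induction L with
  | nil => simp
  | cons p L ih =>
    by_cases hq : q p
    · simp only [List.filter_cons, hq, Bool.not_true, if_true, eprod_cons, ih]
      simp [mul_assoc]
    · have hq' : q p = false := by simpa using hq
      simp only [List.filter_cons, hq', Bool.not_false, eprod_cons, ih]
      simp [mul_left_comm]

/-- admissibility at level `m`: among the entries with index `≤ t` there are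
at most `t / 2^m` many. -/
def adm (m : ℕ) (L : List (Bool × ℕ)) : Prop :=
  ∀ t : ℕ, L.countP (fun p => decide (p.2 ≤ t)) ≤ t / 2 ^ m

def Wset (b : ℕ → G) (m : ℕ) : Set G := {x | ∃ L, adm m L ∧ x = eprod b L}

def Hset (b : ℕ → G) (k : ℕ) : Set G :=
  {x | ∃ L : List (Bool × ℕ), (∀ p ∈ L, p.2 < k) ∧ L.length ≤ k ∧ x = eprod b L}

def Zset (b : ℕ → G) (cK : G) (k : ℕ) : Set G :=
  {x | ∀ h ∈ Hset b k, h * x ≠ cK}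

lemma one_mem_hset (b : ℕ → G) (k : ℕ) : (1 : G) ∈ Hset b k :=
  ⟨[], by simp, by simp, rfl⟩

lemma hset_congr {b b' : ℕ → G} {k : ℕ} (h : ∀ j, j < k → b j = b' j) :
    Hset b k = Hset b' k := by
  ext x
  constructor <;> rintro ⟨L, h1, h2, rfl⟩
  · exact ⟨L, h1, h2, eprod_congr (fun p hp => h p.2 (h1 p hp))⟩
  · exact ⟨L, h1, h2, eprod_congr (fun p hp => (h p.2 (h1 p hp)).symm)⟩

lemma zset_congr {b b' : ℕ → G} {cK : G} {k : ℕ} (h : ∀ j, j < k → b j = b' j) :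
    Zset b cK k = Zset b' cK k := by
  unfold Zset
  rw [hset_congr h]

lemma one_mem_wset (b : ℕ → G) (m : ℕ) : (1 : G) ∈ Wset b m :=
  ⟨[], fun t => by simp, rfl⟩

lemma wset_inv {b : ℕ → G} {m : ℕ} {x : G} (hx : x ∈ Wset b m) : x⁻¹ ∈ Wset b m := by
  obtain ⟨L, hL, rfl⟩ := hx
  refine ⟨L.map (fun p => (!p.1, p.2)), ?_, ?_⟩
  · intro t
    rw [List.countP_map]
    exact hL t
  · clear hL
    induction L with
    | nil => simp
    | cons p L ih =>
      simp only [List.map_cons, eprod_cons, mul_inv, ih]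
      have : trm b (!p.1, p.2) = (trm b p)⁻¹ := by
        cases hb : p.1 <;> simp [trm, hb]
      rw [this, mul_comm]

lemma wset_mul {b : ℕ → G} {m : ℕ} {x y : G}
    (hx : x ∈ Wset b (m + 1)) (hy : y ∈ Wset b (m + 1)) : x * y ∈ Wset b m := by
  obtain ⟨L₁, hL₁, rfl⟩ := hx
  obtain ⟨L₂, hL₂, rfl⟩ := hy
  refine ⟨L₁ ++ L₂, ?_, (eprod_append b L₁ L₂).symm⟩
  intro t
  rw [List.countP_append]
  have h1 := hL₁ t
  have h2 := hL₂ t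
  have hdd : t / 2 ^ (m + 1) = t / 2 ^ m / 2 := by
    rw [Nat.div_div_eq_div_mul, pow_succ]
  rw [hdd] at h1 h2
  omega

lemma wset_anti {b : ℕ → G} {m m' : ℕ} (h : m ≤ m') : Wset b m' ⊆ Wset b m := by
  rintro x ⟨L, hL, rfl⟩
  refine ⟨L, fun t => (hL t).trans ?_, rfl⟩
  exact Nat.div_le_div_left (Nat.pow_le_pow_right (by norm_num) h) (by positivity)

lemma mem_wset_single {b : ℕ → G} {m j : ℕ} (h : 2 ^ m ≤ j) : b j ∈ Wset b m := by
  refine ⟨[(true, j)], ?_, by simp [trm]⟩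
  intro t
  by_cases hj : j ≤ t
  · have : 2 ^ m ≤ t := le_trans h hj
    simp only [List.countP_cons, List.countP_nil]
    have h1 : 1 ≤ t / 2 ^ m := (Nat.one_le_div_iff (by positivity)).mpr this
    simp [hj]
    omega
  · simp [List.countP_cons, hj]

lemma eprod_const {b : ℕ → G} {i : ℕ} : ∀ L : List (Bool × ℕ), (∀ p ∈ L, p.2 = i) →
    ∃ s : ℤ, s.natAbs ≤ L.length ∧ eprod b L = b i ^ s := by
  intro L
  induction L with
  | nil => exact fun _ => ⟨0, by simp, by simp⟩
  | cons p L ih =>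
    intro h
    obtain ⟨s, hs, hsE⟩ := ih (fun q hq => h q (by simp [hq]))
    have hp2 : p.2 = i := h p (by simp)
    refine ⟨(if p.1 then 1 else -1) + s, ?_, ?_⟩
    · have := Int.natAbs_add_le (if p.1 then (1:ℤ) else -1) s
      have h1 : ((if p.1 then (1:ℤ) else -1)).natAbs = 1 := by cases hb : p.1 <;> simp
      simp only [List.length_cons]
      omega
    · rw [eprod_cons, hsE, zpow_add]
      congr 1
      cases hb : p.1 <;> simp [trm, hb, hp2]


/-- products of lists of length at most `n` with factors in a finite set form a finite set. -/
lemma finite_prods (T : Set G) (hT : T.Finite) :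
    ∀ n : ℕ, {x : G | ∃ L : List G, L.length ≤ n ∧ (∀ y ∈ L, y ∈ T) ∧ x = L.prod}.Finite := by
  intro n
  induction n with
  | zero =>
    refine Set.Finite.subset (Set.finite_singleton 1) ?_
    rintro x ⟨L, hlen, _, rfl⟩
    have : L = [] := List.length_eq_zero_iff.mp (Nat.le_zero.mp hlen)
    simp [this]
  | succ n ih =>
    refine Set.Finite.subset (ih.union (hT.image2 (· * ·) ih)) ?_
    rintro x ⟨L, hlen, hmem, rfl⟩
    cases L with
    | nil => exact Or.inl ⟨[], by simp⟩
    | cons y L' =>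
      refine Or.inr ?_
      refine Set.mem_image2.mpr ⟨y, hmem y (by simp), L'.prod, ?_, by simp⟩
      exact ⟨L', by simpa using hlen, fun z hz => hmem z (by simp [hz]), rfl⟩

lemma hset_finite (b : ℕ → G) (k : ℕ) : (Hset b k).Finite := by
  have hT : ((fun p => trm b p) '' {p : Bool × ℕ | p.2 < k}).Finite := by
    refine Set.Finite.image _ ?_
    have : {p : Bool × ℕ | p.2 < k} ⊆ (Set.univ : Set Bool) ×ˢ (Set.Iio k) := by
      rintro ⟨s, j⟩ hj
      exact ⟨trivial, hj⟩
    exact Set.Finite.subset (Set.finite_univ.prod (Set.finite_Iio k)) this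
  refine Set.Finite.subset (finite_prods _ hT k) ?_
  rintro x ⟨L, hmem, hlen, rfl⟩
  refine ⟨L.map (trm b), by simpa using hlen, ?_, rfl⟩
  rintro y hy
  obtain ⟨p, hp, rfl⟩ := List.mem_map.mp hy
  exact ⟨p, hmem p hp, rfl⟩

section Top

variable [TopologicalSpace G] [IsTopologicalGroup G]

lemma zset_mem_nhds [T1Space G] {b : ℕ → G} {cK : G} {k : ℕ} (hc : cK ∉ Hset b k) :
    Zset b cK k ∈ 𝓝 (1 : G) := by
  have : Zset b cK k = ⋂ h ∈ Hset b k, (fun x => h * x) ⁻¹' ({cK}ᶜ) := by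
    ext x
    simp only [Zset, Set.mem_setOf_eq, Set.mem_iInter, Set.mem_preimage, Set.mem_compl_iff,
      Set.mem_singleton_iff]
  rw [this]
  rw [Filter.biInter_mem (hset_finite b k)]
  intro h hh
  have hne : h ≠ cK := fun he => hc (he ▸ hh)
  have hcc : ({cK}ᶜ : Set G) ∈ 𝓝 h := compl_singleton_mem_nhds hne
  have hcont : Filter.Tendsto (fun x : G => h * x) (𝓝 1) (𝓝 h) := by
    simpa using (continuous_mul_left h).tendsto (1 : G)
  exact hcont hcc

lemma exists_pow_nbhd (k : ℕ) {P : Set G} (hP : P ∈ 𝓝 (1 : G)) :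
    ∃ R ∈ 𝓝 (1 : G), ∀ x ∈ R, ∀ z : ℤ, z.natAbs ≤ k → x ^ z ∈ P := by
  induction k generalizing P with
  | zero =>
    refine ⟨Set.univ, univ_mem, fun x _ z hz => ?_⟩
    have hz0 : z = 0 := by
      have : z.natAbs = 0 := Nat.le_zero.mp hz
      exact Int.natAbs_eq_zero.mp this
    rw [hz0, zpow_zero]
    exact mem_of_mem_nhds hP
  | succ k ih =>
    obtain ⟨V, hV, hVsplit⟩ := exists_nhds_one_split hP
    have hVP : V ⊆ P := fun v hv => by
      have := hVsplit v hv 1 (mem_of_mem_nhds hV)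
      rwa [mul_one] at this
    obtain ⟨R', hR', hR'pow⟩ := ih hV
    have hinv : (fun x : G => x⁻¹) ⁻¹' V ∈ 𝓝 (1 : G) := by
      have : Filter.Tendsto (fun x : G => x⁻¹) (𝓝 1) (𝓝 1) := by
        simpa using continuous_inv.tendsto (1 : G)
      exact this hV
    refine ⟨R' ∩ V ∩ ((fun x : G => x⁻¹) ⁻¹' V), inter_mem (inter_mem hR' hV) hinv, ?_⟩
    rintro x ⟨⟨hxR, hxV⟩, hxiV⟩ z hz
    by_cases h : z.natAbs ≤ k
    · exact hVP (hR'pow x hxR z h)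
    · have hz' : z.natAbs = k + 1 := by omega
      rcases Int.natAbs_eq z with hzz | hzz
      · rw [hzz, hz']
        push_cast
        rw [zpow_add_one]
        refine hVsplit _ ?_ _ hxV
        have : ((k : ℤ)).natAbs ≤ k := by simp
        exact hR'pow x hxR _ this
      · rw [hzz, hz']
        push_cast
        have : -((k : ℤ) + 1) = -(k : ℤ) - 1 := by ring
        rw [this, zpow_sub_one]
        refine hVsplit _ ?_ _ hxiV
        have : (-(k : ℤ)).natAbs ≤ k := by simp
        exact hR'pow x hxR _ this

end Top


lemma pd_mono {Pd : ℕ → Set G} (h1 : ∀ i, (1 : G) ∈ Pd i)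
    (h7 : ∀ i, Pd (i + 1) * Pd (i + 1) ⊆ Pd i) :
    ∀ i j, i ≤ j → Pd j ⊆ Pd i := by
  intro i j hij
  induction j, hij using Nat.le_induction with
  | base => exact subset_rfl
  | succ j hij ih =>
    refine subset_trans ?_ ih
    intro x hx
    have hx2 : x * 1 ∈ Pd (j + 1) * Pd (j + 1) := Set.mul_mem_mul hx (h1 (j + 1))
    rw [mul_one] at hx2
    exact h7 j hx2

lemma tail_small {B : ℕ → G} {Pd : ℕ → Set G}
    (h1 : ∀ i, (1 : G) ∈ Pd i)
    (h7 : ∀ i, Pd (i + 1) * Pd (i + 1) ⊆ Pd i)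
    (h8 : ∀ i, ∀ z : ℤ, z.natAbs ≤ i → B i ^ z ∈ Pd i) :
    ∀ (d r : ℕ) (L : List (Bool × ℕ)), (∀ p ∈ L, r ≤ p.2 ∧ p.2 < r + d) →
      (∀ i, L.countP (fun p => decide (p.2 = i)) ≤ i) →
      eprod B L ∈ Pd r * Pd r := by
  intro d
  induction d with
  | zero =>
    intro r L hmem _
    have hL : L = [] := by
      refine List.eq_nil_iff_forall_not_mem.mpr (fun p hp => ?_)
      have := hmem p hp
      omega
    rw [hL]
    have := Set.mul_mem_mul (h1 r) (h1 r)
    simpa using this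
  | succ d ih =>
    intro r L hmem hcnt
    set L₁ := L.filter (fun p => decide (p.2 = r)) with hL₁
    set L₂ := L.filter (fun p => !decide (p.2 = r)) with hL₂
    rw [eprod_filter B (fun p => decide (p.2 = r)) L]
    have hhead : eprod B L₁ ∈ Pd r := by
      obtain ⟨s, hs, hsE⟩ := eprod_const (b := B) (i := r) L₁ (fun p hp => by
        have := List.of_mem_filter hp
        simpa using this)
      have hlen : L₁.length ≤ r := by
        rw [hL₁, ← List.countP_eq_length_filter]
        exact hcnt r
      rw [hsE]
      exact h8 r s (le_trans hs hlen)
    have htail : eprod B L₂ ∈ Pd (r + 1) * Pd (r + 1) := by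
      refine ih (r + 1) L₂ ?_ ?_
      · intro p hp
        have hpL := List.mem_of_mem_filter hp
        have hne : p.2 ≠ r := by
          have := List.of_mem_filter hp
          simpa using this
        have := hmem p hpL
        omega
      · intro i
        exact le_trans (List.Sublist.countP_le (List.filter_sublist (l := L))) (hcnt i)
    exact Set.mul_mem_mul hhead (h7 r htail)

lemma exclusion {B C : ℕ → G} {Pd : ℕ → Set G}
    (h1 : ∀ i, (1 : G) ∈ Pd i)
    (h6 : ∀ i, Pd i * Pd i ⊆ Zset B (C i) i)
    (h7 : ∀ i, Pd (i + 1) * Pd (i + 1) ⊆ Pd i)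
    (h8 : ∀ i, ∀ z : ℤ, z.natAbs ≤ i → B i ^ z ∈ Pd i) :
    ∀ j, C j ∉ Wset B 0 := by
  rintro j ⟨L, hadm, hEq⟩
  set L₁ := L.filter (fun p => decide (p.2 < j)) with hL₁
  set L₂ := L.filter (fun p => !decide (p.2 < j)) with hL₂
  have hcnt : ∀ t : ℕ, L.countP (fun p => decide (p.2 ≤ t)) ≤ t := by
    intro t
    have := hadm t
    simpa using this
  have hhead : eprod B L₁ ∈ Hset B j := by
    refine ⟨L₁, fun p hp => by simpa using List.of_mem_filter hp, ?_, rfl⟩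
    rw [hL₁, ← List.countP_eq_length_filter]
    refine le_trans (List.countP_mono_left (fun p _ hp => ?_)) (hcnt j)
    simp only [decide_eq_true_eq] at hp ⊢
    omega
  have htail : eprod B L₂ ∈ Pd j * Pd j := by
    refine tail_small h1 h7 h8 ((L₂.map Prod.snd).sum + 1) j L₂ ?_ ?_
    · intro p hp
      have hge : j ≤ p.2 := by
        have := List.of_mem_filter hp
        simp only [Bool.not_eq_true', decide_eq_false_iff_not, not_lt] at this
        exact this
      have hle : p.2 ≤ (L₂.map Prod.snd).sum :=
        List.single_le_sum (fun x _ => Nat.zero_le x) _ (List.mem_map_of_mem (f := Prod.snd) hp)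
      omega
    · intro i
      refine le_trans (List.Sublist.countP_le (List.filter_sublist (l := L))) ?_
      refine le_trans (List.countP_mono_left (fun p _ hp => ?_)) (hcnt i)
      simp only [decide_eq_true_eq] at hp ⊢
      omega
  have hz : eprod B L₂ ∈ Zset B (C j) j := h6 j htail
  refine hz _ hhead ?_
  rw [← eprod_filter]
  exact hEq.symm


structure StG (G : Type*) where
  b : ℕ → G
  c : ℕ → G
  P : ℕ → Set G

section Rec

variable [TopologicalSpace G] [IsTopologicalGroup G] [T1Space G]

/-- the per-index invariant of the recursive construction. -/
def LocalP (a : ℕ → G) (i : ℕ) (s : StG G) : Prop :=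
  (s.b i ≠ 1) ∧ (∃ n, i ≤ n ∧ s.b i = a n) ∧ (∃ n, i ≤ n ∧ s.c i = a n) ∧
  (s.c i ∉ Hset s.b i) ∧ (s.P i ∈ 𝓝 (1 : G)) ∧ (s.P i * s.P i ⊆ Zset s.b (s.c i) i) ∧
  (∀ j, i = j + 1 → s.P i * s.P i ⊆ s.P j) ∧ (∀ z : ℤ, z.natAbs ≤ i → s.b i ^ z ∈ s.P i)

lemma localP_transfer {a : ℕ → G} {i : ℕ} {s s' : StG G}
    (hb : ∀ j, j ≤ i → s'.b j = s.b j) (hc : s'.c i = s.c i)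
    (hP : ∀ j, j ≤ i → s'.P j = s.P j) (h : LocalP a i s) : LocalP a i s' := by
  obtain ⟨h1, h2, h3, h4, h5, h6, h7, h8⟩ := h
  have hbi := hb i le_rfl
  have hPi := hP i le_rfl
  have hHs : Hset s'.b i = Hset s.b i := hset_congr (fun j hj => hb j hj.le)
  have hZs : Zset s'.b (s'.c i) i = Zset s.b (s.c i) i := by
    rw [hc]; exact zset_congr (fun j hj => hb j hj.le)
  refine ⟨by rw [hbi]; exact h1, by rw [hbi]; exact h2, by rw [hc]; exact h3,
    by rw [hc, hHs]; exact h4, by rw [hPi]; exact h5, by rw [hPi, hZs]; exact h6,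
    ?_, by rw [hbi, hPi]; exact h8⟩
  intro j hj
  rw [hPi, hP j (by omega)]
  exact h7 j hj

lemma exists_avoid {a : ℕ → G} (ha : Filter.Tendsto a Filter.atTop (𝓝 1))
    (hinf : {n | a n ≠ 1}.Infinite) {F : Set G} (hF : F.Finite) (N : ℕ) :
    ∃ n, N ≤ n ∧ a n ≠ 1 ∧ a n ∉ F := by
  have hfin : ∀ g : G, g ≠ 1 → {n | a n = g}.Finite := by
    intro g hg
    have hcc : ({g}ᶜ : Set G) ∈ 𝓝 (1 : G) := compl_singleton_mem_nhds (Ne.symm hg)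
    have hev := ha hcc
    rw [Filter.mem_map, Filter.mem_atTop_sets] at hev
    obtain ⟨M, hM⟩ := hev
    refine Set.Finite.subset (Set.finite_Iio M) (fun n hn => ?_)
    by_contra hnM
    exact (hM n (by simpa using hnM)) hn
  have hbad : (⋃ g ∈ F \ {1}, {n | a n = g}).Finite := by
    refine Set.Finite.biUnion hF.diff (fun g hg => hfin g ?_)
    simpa using hg.2
  obtain ⟨n, hn1, hn2⟩ := ((hinf.diff (hbad.union (Set.finite_Iio N))).nonempty)
  simp only [Set.mem_union, Set.mem_Iio, not_or, not_lt, Set.mem_iUnion] at hn2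
  refine ⟨n, hn2.2, hn1, fun hF' => ?_⟩
  exact hn2.1 ⟨a n, by exact ⟨⟨hF', by simpa using hn1⟩, rfl⟩⟩

lemma exists_in_nhds {a : ℕ → G} (ha : Filter.Tendsto a Filter.atTop (𝓝 1))
    (hinf : {n | a n ≠ 1}.Infinite) {R : Set G} (hR : R ∈ 𝓝 (1 : G)) (N : ℕ) :
    ∃ n, N ≤ n ∧ a n ≠ 1 ∧ a n ∈ R := by
  have hev := ha hR
  rw [Filter.mem_map, Filter.mem_atTop_sets] at hev
  obtain ⟨M, hM⟩ := hev
  obtain ⟨n, hn1, hn2, _⟩ := exists_avoid ha hinf (Set.finite_empty) (max N M)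
  exact ⟨n, le_trans (le_max_left _ _) hn1, hn2, hM n (le_trans (le_max_right _ _) hn1)⟩

lemma step_ex {a : ℕ → G} (ha : Filter.Tendsto a Filter.atTop (𝓝 1))
    (hinf : {n | a n ≠ 1}.Infinite) (k : ℕ) (s : StG G) (hs : ∀ i, i < k → LocalP a i s) :
    ∃ s' : StG G, (∀ i, i < k → s'.b i = s.b i ∧ s'.c i = s.c i ∧ s'.P i = s.P i) ∧
      (∀ i, i < k + 1 → LocalP a i s') := by
  -- choose c'
  obtain ⟨nc, hnc, hcne, hcF⟩ := exists_avoid ha hinf (hset_finite s.b k) k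
  set c' := a nc with hc'
  have hZ : Zset s.b c' k ∈ 𝓝 (1 : G) := zset_mem_nhds hcF
  have hprev : {x : G | ∀ j, k = j + 1 → x ∈ s.P j} ∈ 𝓝 (1 : G) := by
    cases k with
    | zero =>
      have : {x : G | ∀ j, 0 = j + 1 → x ∈ s.P j} = Set.univ := by
        ext x; simp
      rw [this]; exact univ_mem
    | succ m =>
      have hPm : s.P m ∈ 𝓝 (1 : G) := (hs m (by omega)).2.2.2.2.1
      refine Filter.mem_of_superset hPm (fun x hx j hj => ?_)
      have : j = m := by omega
      rwa [this]
  obtain ⟨V, hV, hVsplit⟩ := exists_nhds_one_split (inter_mem hZ hprev)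
  obtain ⟨R, hR, hRpow⟩ := exists_pow_nbhd k hV
  obtain ⟨nb, hnb, hbne, hbR⟩ := exists_in_nhds ha hinf hR k
  classical
  refine ⟨⟨Function.update s.b k (a nb), Function.update s.c k c', Function.update s.P k V⟩,
    ?_, ?_⟩
  · intro i hi
    exact ⟨Function.update_of_ne (by omega) _ _, Function.update_of_ne (by omega) _ _,
      Function.update_of_ne (by omega) _ _⟩
  · intro i hi
    rcases Nat.lt_succ_iff_lt_or_eq.mp hi with hik | rfl
    · refine localP_transfer (fun j hj => Function.update_of_ne (by omega) _ _)
        (Function.update_of_ne (by omega) _ _)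
        (fun j hj => Function.update_of_ne (by omega) _ _) (hs i hik)
    · -- the new index
      unfold LocalP
      dsimp only
      have hbk : (Function.update s.b i (a nb)) i = a nb := Function.update_self _ _ _
      have hck : (Function.update s.c i c') i = c' := Function.update_self _ _ _
      have hPk : (Function.update s.P i V) i = V := Function.update_self _ _ _
      have hHs : Hset (Function.update s.b i (a nb)) i = Hset s.b i :=
        hset_congr (fun j hj => Function.update_of_ne (by omega) _ _)
      have hZs : Zset (Function.update s.b i (a nb)) c' i = Zset s.b c' i :=
        zset_congr (fun j hj => Function.update_of_ne (by omega) _ _)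
      have hVZ : V * V ⊆ Zset s.b c' i ∩ {x : G | ∀ j, i = j + 1 → x ∈ s.P j} := by
        rw [Set.mul_subset_iff]
        exact hVsplit
      refine ⟨by rw [hbk]; exact hbne, by rw [hbk]; exact ⟨nb, hnb, rfl⟩,
        by rw [hck]; exact ⟨nc, hnc, rfl⟩, by rw [hck, hHs]; exact hcF,
        by rw [hPk]; exact hV, ?_, ?_, ?_⟩
      · rw [hPk, hck, hZs]
        exact subset_trans hVZ (Set.inter_subset_left)
      · intro j hj
        rw [hPk, Function.update_of_ne (by omega) _ _]
        exact fun x hx => (subset_trans hVZ (Set.inter_subset_right)) hx j hj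
      · intro z hz
        rw [hbk, hPk]
        exact hRpow _ hbR z hz

end Rec


/-- Main construction: from a non-trivially convergent sequence, a strictly finer
non-discrete group topology. -/
theorem core {G : Type*} [CommGroup G] [ts : TopologicalSpace G] [IsTopologicalGroup G]
    [T1Space G] (a : ℕ → G) (ha : Filter.Tendsto a Filter.atTop (𝓝 1))
    (hinf : {n | a n ≠ 1}.Infinite) :
    ∃ t' : TopologicalSpace G, (@IsTopologicalGroup G t' _) ∧ t' ≤ ts ∧ t' ≠ ts ∧ t' ≠ ⊥ := by
  classical
  -- build the recursive data
  choose! step hstep1 hstep2 using step_ex ha hinf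
  obtain ⟨seq, hseq0, hseqS⟩ :
      ∃ seq : ℕ → StG G, (seq 0 = ⟨fun _ => 1, fun _ => 1, fun _ => Set.univ⟩) ∧
        ∀ k, seq (k + 1) = step k (seq k) :=
    ⟨fun k => Nat.rec ⟨fun _ => 1, fun _ => 1, fun _ => Set.univ⟩ (fun k s => step k s) k,
      rfl, fun k => rfl⟩
  have hInv : ∀ k, ∀ i, i < k → LocalP a i (seq k) := by
    intro k
    induction k with
    | zero => intro i hi; omega
    | succ k ih =>
      rw [hseqS k]
      exact hstep2 k (seq k) ih
  have hAg : ∀ k i, i < k → (seq (k + 1)).b i = (seq k).b i ∧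
      (seq (k + 1)).c i = (seq k).c i ∧ (seq (k + 1)).P i = (seq k).P i := by
    intro k i hi
    rw [hseqS k]
    exact hstep1 k (seq k) (hInv k) i hi
  have hAg' : ∀ k k' i, i < k → k ≤ k' → ((seq k').b i = (seq k).b i ∧
      (seq k').c i = (seq k).c i ∧ (seq k').P i = (seq k).P i) := by
    intro k k' i hi hkk
    induction k', hkk using Nat.le_induction with
    | base => exact ⟨rfl, rfl, rfl⟩
    | succ k' hkk ih =>
      obtain ⟨e1, e2, e3⟩ := hAg k' i (by omega)
      exact ⟨e1.trans ih.1, e2.trans ih.2.1, e3.trans ih.2.2⟩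
  set B : ℕ → G := fun i => (seq (i + 1)).b i with hB
  set C : ℕ → G := fun i => (seq (i + 1)).c i with hC
  set Pd : ℕ → Set G := fun i => (seq (i + 1)).P i with hPd
  have hBag : ∀ k i, i < k → (seq k).b i = B i := by
    intro k i hi
    exact (hAg' (i + 1) k i (by omega) (by omega)).1.symm ▸ rfl
  have hPag : ∀ k i, i < k → (seq k).P i = Pd i := by
    intro k i hi
    exact (hAg' (i + 1) k i (by omega) (by omega)).2.2.symm ▸ rfl
  -- extract the global properties
  have hL : ∀ i, LocalP a i (seq (i + 1)) := fun i => hInv (i + 1) i (by omega)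
  have hP1 : ∀ i, B i ≠ 1 := fun i => (hL i).1
  have hP2 : ∀ i, ∃ n, i ≤ n ∧ B i = a n := fun i => (hL i).2.1
  have hP3 : ∀ i, ∃ n, i ≤ n ∧ C i = a n := fun i => (hL i).2.2.1
  have hP5 : ∀ i, Pd i ∈ 𝓝 (1 : G) := fun i => (hL i).2.2.2.2.1
  have hP6 : ∀ i, Pd i * Pd i ⊆ Zset B (C i) i := by
    intro i
    have h := (hL i).2.2.2.2.2.1
    have he : Zset ((seq (i + 1)).b) ((seq (i + 1)).c i) i = Zset B (C i) i :=
      zset_congr (fun j hj => hBag (i + 1) j (by omega))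
    rw [← he]
    exact h
  have hP7 : ∀ i, Pd (i + 1) * Pd (i + 1) ⊆ Pd i := by
    intro i
    have h := (hInv (i + 2) (i + 1) (by omega)).2.2.2.2.2.2.1 i rfl
    rwa [hPag (i + 2) i (by omega)] at h
  have hP8 : ∀ i, ∀ z : ℤ, z.natAbs ≤ i → B i ^ z ∈ Pd i := fun i =>
    (hL i).2.2.2.2.2.2.2
  have hone : ∀ i, (1 : G) ∈ Pd i := fun i => mem_of_mem_nhds (hP5 i)
  have hCW : ∀ j, C j ∉ Wset B 0 := exclusion hone hP6 hP7 hP8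
  -- the new group filter basis
  have hsplitW : ∀ (S : Set G), S ∈ 𝓝 (1 : G) → ∀ m : ℕ,
      ∃ V ∈ 𝓝 (1 : G), (V ∩ Wset B (m + 1)) * (V ∩ Wset B (m + 1)) ⊆ S ∩ Wset B m := by
    intro S hS m
    obtain ⟨V, hV, hVsplit⟩ := exists_nhds_one_split hS
    refine ⟨V, hV, ?_⟩
    rw [Set.mul_subset_iff]
    rintro x ⟨hx1, hx2⟩ y ⟨hy1, hy2⟩
    exact ⟨hVsplit x hx1 y hy1, wset_mul hx2 hy2⟩
  let bFB : GroupFilterBasis G := groupFilterBasisOfComm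
    {S | ∃ U ∈ 𝓝 (1 : G), ∃ m : ℕ, S = U ∩ Wset B m}
    ⟨Set.univ ∩ Wset B 0, Set.univ, univ_mem, 0, rfl⟩
    (by
      rintro x y ⟨U, hU, m, rfl⟩ ⟨U', hU', m', rfl⟩
      refine ⟨(U ∩ U') ∩ Wset B (max m m'), ⟨U ∩ U', inter_mem hU hU', max m m', rfl⟩, ?_⟩
      rintro z ⟨⟨h1, h2⟩, h3⟩
      exact ⟨⟨h1, wset_anti (le_max_left m m') h3⟩, ⟨h2, wset_anti (le_max_right m m') h3⟩⟩)
    (by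
      rintro S ⟨U, hU, m, rfl⟩
      exact ⟨mem_of_mem_nhds hU, one_mem_wset B m⟩)
    (by
      rintro S ⟨U, hU, m, rfl⟩
      obtain ⟨V, hV, hVs⟩ := hsplitW U hU m
      exact ⟨V ∩ Wset B (m + 1), ⟨V, hV, m + 1, rfl⟩, hVs⟩)
    (by
      rintro S ⟨U, hU, m, rfl⟩
      have hIU : (fun x : G => x⁻¹) ⁻¹' U ∈ 𝓝 (1 : G) := by
        have : Filter.Tendsto (fun x : G => x⁻¹) (𝓝 1) (𝓝 1) := by
          simpa using continuous_inv.tendsto (1 : G)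
        exact this hU
      refine ⟨((fun x : G => x⁻¹) ⁻¹' U) ∩ Wset B m, ⟨_, hIU, m, rfl⟩, ?_⟩
      rintro x ⟨h1, h2⟩
      exact ⟨h1, wset_inv h2⟩)
  refine ⟨bFB.topology, bFB.isTopologicalGroup, ?_, ?_, ?_⟩
  · -- finer than the original topology
    refine le_of_nhds_le_nhds (fun x => ?_)
    rw [bFB.nhds_eq, ← map_mul_left_nhds_one x]
    refine Filter.map_mono ?_
    intro S hS
    exact (FilterBasis.mem_filter_iff _).mpr
      ⟨S ∩ Wset B 0, ⟨S, hS, 0, rfl⟩, Set.inter_subset_left⟩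
  · -- not equal to the original topology
    intro h
    have hW0 : Wset B 0 ∈ @nhds G bFB.topology 1 := by
      rw [bFB.nhds_one_eq]
      exact (FilterBasis.mem_filter_iff _).mpr
        ⟨Set.univ ∩ Wset B 0, ⟨Set.univ, univ_mem, 0, rfl⟩, Set.inter_subset_right⟩
    rw [h] at hW0
    have hev := ha hW0
    rw [Filter.mem_map, Filter.mem_atTop_sets] at hev
    obtain ⟨M, hM⟩ := hev
    obtain ⟨n, hn, hCn⟩ := hP3 M
    exact hCW M (hCn ▸ hM n hn)
  · -- not discrete
    intro h
    have hpure : @nhds G ⊥ (1 : G) = pure 1 :=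
      congrFun (@nhds_discrete G ⊥ (discreteTopology_bot G)) 1
    have hmem : {(1 : G)} ∈ @nhds G bFB.topology 1 := by
      rw [h, hpure]
      simp
    rw [bFB.nhds_one_eq] at hmem
    obtain ⟨V, hVsets, hVsub⟩ := (FilterBasis.mem_filter_iff _).mp hmem
    obtain ⟨U, hU, m, rfl⟩ := hVsets
    have hev := ha hU
    rw [Filter.mem_map, Filter.mem_atTop_sets] at hev
    obtain ⟨M, hM⟩ := hev
    obtain ⟨n, hn, hBn⟩ := hP2 (max (2 ^ m) M)
    have hBU : B (max (2 ^ m) M) ∈ U := hBn ▸ hM n (le_trans (le_max_right _ _) hn)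
    have hBW : B (max (2 ^ m) M) ∈ Wset B m := mem_wset_single (le_max_left _ _)
    have : B (max (2 ^ m) M) ∈ ({1} : Set G) := hVsub ⟨hBU, hBW⟩
    exact hP1 _ (by simpa using this)

end MaxTopAux

/-- Let `G` be an abelian group endowed with a maximal group topology
`τ`: a Hausdorff, non-discrete group topology such that the only group topology strictly
finer than `τ` is the discrete topology `⊤`. Then `(G, τ)` has no non-trivial convergent
sequences: every sequence in `G` converging in `(G, τ)` is eventually constant. -/
theorem maximal_topology_no_convergent_sequences {G : Type*} [CommGroup G]
    (τ : GroupTopLattice G) (hH : @T2Space G (topOf τ)) (hnd : τ ≠ ⊤)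
    (hmax : ∀ σ : GroupTopLattice G, τ < σ → σ = ⊤) :
    ∀ (u : ℕ → G) (x : G), Filter.Tendsto u Filter.atTop (@nhds G (topOf τ) x) →
      ∃ N : ℕ, ∀ n : ℕ, N ≤ n → u n = u N := by
  intro u x hux
  by_contra hcon
  push_neg at hcon
  letI ts : TopologicalSpace G := topOf τ
  haveI htg : IsTopologicalGroup G := (ofDual τ).toIsTopologicalGroup
  haveI : T2Space G := hH
  haveI : T1Space G := inferInstance
  set a : ℕ → G := fun n => u n * x⁻¹ with haDef
  have ha : Filter.Tendsto a Filter.atTop (𝓝 (1 : G)) := by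
    have := hux.mul_const x⁻¹
    simpa using this
  have hiff : ∀ n, a n = 1 ↔ u n = x := by
    intro n
    simp [haDef, mul_inv_eq_one]
  have hinf : {n | a n ≠ 1}.Infinite := by
    by_contra hfin
    rw [Set.not_infinite] at hfin
    obtain ⟨M, hM⟩ := hfin.bddAbove
    have hux' : ∀ n, M + 1 ≤ n → u n = x := by
      intro n hn
      by_contra hne
      have : n ∈ {n | a n ≠ 1} := by simp [hiff n, hne]
      have := hM this
      omega
    obtain ⟨n, hn, hune⟩ := hcon (M + 1)
    exact hune ((hux' n hn).trans (hux' (M + 1) le_rfl).symm)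
  obtain ⟨t', htg', hle, hne, hbot⟩ := MaxTopAux.core a ha hinf
  let σ' : GroupTopology G := ⟨t', htg'⟩
  have hlt : τ < toDual σ' := by
    have hlt' : σ' < ofDual τ := by
      refine lt_of_le_of_ne ?_ ?_
      · exact hle
      · intro h
        exact hne (congrArg GroupTopology.toTopologicalSpace h)
    exact hlt'
  have htop := hmax (toDual σ') hlt
  have hσbot : σ' = ⊥ := htop
  exact hbot (congrArg GroupTopology.toTopologicalSpace hσbot)
end

section
/- Let G be an infinite abelian group and let τ be a Hausdorff group topology on G with Property Q. Then the character of (G, τ) is at most |G|: there exists a neighbourhood basis at the identity of (G, τ) whose cardinality is at most the cardinality of G. In particular, if G is countable then (G, τ) is first-countable. -/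
open OrderDual

/-- A group topology is Hausdorff if the corresponding space is `T₂`. -/
def IsHausdorffTop {G : Type*} [Group G] (τ : GroupTopLattice G) : Prop :=
  @T2Space G (topOf τ)

/-- A Hausdorff group topology `τ` has Property Q if every chain in the poset
`{τ' ∈ 𝓛_G : τ' < τ and τ' Hausdorff}` has an upper bound belonging to that set. -/
def HasPropertyQ {G : Type*} [Group G] (τ : GroupTopLattice G) : Prop :=
  ∀ C : Set (GroupTopLattice G),
    C ⊆ {τ' | τ' < τ ∧ IsHausdorffTop τ'} → IsChain (· ≤ ·) C →
      ∃ b, (b < τ ∧ IsHausdorffTop b) ∧ ∀ c ∈ C, c ≤ b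


section AuxiliaryForStatement18


open Filter Set Topology Pointwise

section AuxLemmas

variable {G : Type*} [CommGroup G]

/-- Shrinking lemma in a topological (comm) group. -/
lemma my_shrink [TopologicalSpace G] [IsTopologicalGroup G] :
    ∀ W : Set G, W ∈ 𝓝 (1 : G) →
      ∃ V : Set G, V ∈ 𝓝 (1 : G) ∧ V ⊆ W ∧ V⁻¹ = V ∧ V * V ⊆ W := by
  intro W hW
  obtain ⟨V, hV, hVW⟩ := exists_nhds_split_inv hW
  have h1V : (1 : G) ∈ V := mem_of_mem_nhds hV
  refine ⟨V ∩ V⁻¹, Filter.inter_mem hV (inv_mem_nhds_one G hV), ?_, ?_, ?_⟩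
  · intro x hx
    have := hVW x hx.1 1 h1V
    simpa using this
  · rw [Set.inter_inv, inv_inv, Set.inter_comm]
  · rw [Set.mul_subset_iff]
    intro x hx y hy
    have := hVW x hx.1 y⁻¹ hy.2
    simpa using this

/-- For any group topology `σ` and any `σ`-neighbourhood `U` of `1`, there is a coarser
group topology `p` in which `U` is still a neighbourhood of `1` and whose neighbourhood
filter at `1` has a countable basis. -/
lemma my_piece (σ : GroupTopology G) {U : Set G}
    (hU : U ∈ @nhds G σ.toTopologicalSpace 1) :
    ∃ (p : GroupTopology G) (V : ℕ → Set G),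
      σ.toTopologicalSpace ≤ p.toTopologicalSpace ∧
      U ∈ @nhds G p.toTopologicalSpace 1 ∧
      (@nhds G p.toTopologicalSpace 1).HasBasis (fun _ : ℕ => True) V := by
  letI := σ.toTopologicalSpace
  haveI := σ.toIsTopologicalGroup
  choose sh hmem hsub hsymm hmul using my_shrink (G := G)
  let Vs : ℕ → {W : Set G // W ∈ 𝓝 (1 : G)} := fun n =>
    Nat.rec ⟨sh U hU, hmem U hU⟩ (fun _ q => ⟨sh q.1 q.2, hmem q.1 q.2⟩) n
  have hVsymm : ∀ n, (Vs n).1⁻¹ = (Vs n).1 := by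
    intro n; cases n with
    | zero => exact hsymm U hU
    | succ m => exact hsymm _ _
  have hVmul : ∀ n, (Vs (n + 1)).1 * (Vs (n + 1)).1 ⊆ (Vs n).1 := by
    intro n; exact hmul _ _
  have hVstep : ∀ n, (Vs (n + 1)).1 ⊆ (Vs n).1 := by
    intro n; exact hsub _ _
  have hVanti : Antitone fun n => (Vs n).1 := antitone_nat_of_succ_le hVstep
  have hVsubU : (Vs 0).1 ⊆ U := hsub U hU
  let BG : GroupFilterBasis G := groupFilterBasisOfComm (Set.range fun n => (Vs n).1)
    ⟨_, Set.mem_range_self 0⟩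
    (by rintro _ _ ⟨m, rfl⟩ ⟨n, rfl⟩
        exact ⟨(Vs (max m n)).1, Set.mem_range_self (max m n),
          Set.subset_inter (hVanti (le_max_left m n)) (hVanti (le_max_right m n))⟩)
    (by rintro _ ⟨n, rfl⟩; exact mem_of_mem_nhds (Vs n).2)
    (by rintro _ ⟨n, rfl⟩; exact ⟨(Vs (n + 1)).1, Set.mem_range_self (n + 1), hVmul n⟩)
    (by rintro _ ⟨n, rfl⟩
        refine ⟨(Vs n).1, Set.mem_range_self n, ?_⟩
        intro x hx
        have : x⁻¹ ∈ (Vs n).1⁻¹ := Set.inv_mem_inv.2 hx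
        rwa [hVsymm n] at this)
  have hmemBG : ∀ n, (Vs n).1 ∈ BG := fun n => Set.mem_range_self n
  refine ⟨⟨BG.topology, BG.isTopologicalGroup⟩, fun n => (Vs n).1, ?_, ?_, ?_⟩
  · rw [le_iff_nhds]
    intro x
    rw [(BG.nhds_hasBasis x).ge_iff]
    rintro _ ⟨n, rfl⟩
    have hmap : Filter.map (fun y => x * y) (𝓝 1) = 𝓝 x := by
      simpa [Homeomorph.coe_mulLeft] using (Homeomorph.mulLeft x).map_nhds_eq 1
    rw [← hmap]
    exact Filter.image_mem_map (Vs n).2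
  · exact Filter.mem_of_superset (BG.mem_nhds_one (hmemBG 0)) hVsubU
  · rw [Filter.hasBasis_iff]
    intro t
    rw [BG.nhds_one_hasBasis.mem_iff]
    constructor
    · rintro ⟨_, ⟨n, rfl⟩, h⟩; exact ⟨n, trivial, h⟩
    · rintro ⟨n, -, h⟩; exact ⟨(Vs n).1, hmemBG n, h⟩

/-- A group topology is determined (as far as comparison goes) by its filter of
neighbourhoods of `1`. -/
lemma my_le_of_nhds_le (σ ρ : GroupTopology G)
    (h : @nhds G σ.toTopologicalSpace 1 ≤ @nhds G ρ.toTopologicalSpace 1) : σ ≤ ρ := by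
  rw [← GroupTopology.toTopologicalSpace_le, le_iff_nhds]
  intro x
  have h1 : ∀ μ : GroupTopology G, @nhds G μ.toTopologicalSpace x
      = Filter.map (fun y => x * y) (@nhds G μ.toTopologicalSpace 1) := by
    intro μ
    letI := μ.toTopologicalSpace
    haveI := μ.toIsTopologicalGroup
    simpa [Homeomorph.coe_mulLeft] using ((Homeomorph.mulLeft x).map_nhds_eq 1).symm
  rw [h1 σ, h1 ρ]
  exact Filter.map_mono h

end AuxLemmas

/-- A basis for an infimum of countably-based filters. -/
lemma my_hasBasis_iInf {α P : Type*} {f : P → Filter α} {V : P → ℕ → Set α}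
    (h : ∀ p, (f p).HasBasis (fun _ : ℕ => True) (V p)) :
    (⨅ p, f p).HasBasis
      (· ∈ Set.range fun s : Finset (P × ℕ) => ⋂ q ∈ s, V q.1 q.2) id := by
  classical
  rw [Filter.hasBasis_iff]
  intro t
  constructor
  · intro ht
    obtain ⟨I, hIfin, W, hWmem, -, htW, -⟩ := Filter.mem_iInf'.1 ht
    choose n hn using fun p => ((h p).mem_iff.1 (hWmem p))
    refine ⟨⋂ q ∈ hIfin.toFinset.image (fun p => (p, n p)), V q.1 q.2, ⟨_, rfl⟩, ?_⟩
    intro x hx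
    rw [htW]
    refine Set.mem_biInter fun p hp => ?_
    have hq : ((p, n p) : P × ℕ) ∈ hIfin.toFinset.image (fun p => (p, n p)) :=
      Finset.mem_image_of_mem _ (hIfin.mem_toFinset.2 hp)
    exact (hn p).2 (Set.mem_iInter₂.1 hx _ hq)
  · rintro ⟨b, ⟨s, rfl⟩, hbt⟩
    refine Filter.mem_of_superset ?_ hbt
    refine (Filter.biInter_finset_mem s).2 fun q hq => ?_
    exact Filter.mem_iInf_of_mem q.1 ((h q.1).mem_of_mem trivial)

end AuxiliaryForStatement18

/-- Let `G` be an infinite abelian group and `τ` a Hausdorff group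
topology on `G` with Property Q. Then the character of `(G, τ)` is at most `|G|`: there
is a neighbourhood basis at the identity of `(G, τ)` of cardinality at most `|G|`.
In particular, if `G` is countable then `(G, τ)` is first-countable. -/
theorem character_le_card_of_propertyQ {G : Type*} [CommGroup G] [Infinite G]
    (τ : GroupTopLattice G) (hH : IsHausdorffTop τ) (hQ : HasPropertyQ τ) :
    (∃ B : Set (Set G), (@nhds G (topOf τ) 1).HasBasis (· ∈ B) id ∧
        Cardinal.mk B ≤ Cardinal.mk G) ∧
      (Countable G → @FirstCountableTopology G (topOf τ)) := by
  classical
  set τGT : GroupTopology G := ofDual τ with hτGT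
  have htopOf : topOf τ = τGT.toTopologicalSpace := rfl
  set F : Filter G := @nhds G τGT.toTopologicalSpace 1 with hF
  haveI hT2 : @T2Space G τGT.toTopologicalSpace := hH
  have main : ∃ B : Set (Set G), F.HasBasis (· ∈ B) id ∧ Cardinal.mk B ≤ Cardinal.mk G := by
    by_contra hcon
    push_neg at hcon
    -- the set of cardinalities of bases of `F`
    set 𝒦 : Set Cardinal := {κ | ∃ B : Set (Set G), F.HasBasis (· ∈ B) id ∧ Cardinal.mk B = κ}
      with h𝒦
    have hne : 𝒦.Nonempty := ⟨Cardinal.mk F.sets, F.sets, F.basis_sets, rfl⟩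
    set κ : Cardinal := Cardinal.lt_wf.min 𝒦 hne with hκ
    obtain ⟨B0, hB0, hB0card⟩ : κ ∈ 𝒦 := WellFounded.min_mem _ 𝒦 hne
    have hκmin : ∀ x ∈ 𝒦, ¬x < κ := fun x hx => WellFounded.not_lt_min _ 𝒦 hx
    have hGκ : Cardinal.mk G < κ := by
      rw [← hB0card]; exact hcon B0 hB0
    have hκinf : Cardinal.aleph0 ≤ κ :=
      le_of_lt (lt_of_le_of_lt (Cardinal.infinite_iff.1 ‹Infinite G›) hGκ)
    -- index type of order type the initial ordinal of κ
    set ι := κ.ord.ToType with hι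
    have hmkι : Cardinal.mk ι = κ := Cardinal.mk_ord_toType κ
    obtain ⟨e⟩ : Nonempty (ι ≃ B0) := Cardinal.eq.1 (by rw [hmkι, hB0card])
    -- the pieces
    choose! pc Vf hple hpmem hpbasis using fun (U : Set G) (hU : U ∈ F) => my_piece τGT hU
    -- all relevant neighbourhoods of 1
    set A := {g : G // g ≠ 1} with hA
    set Ug : A → Set G := fun g => {(g : G)}ᶜ with hUg
    have hUgF : ∀ g : A, Ug g ∈ F := by
      intro g
      letI := τGT.toTopologicalSpace
      exact compl_singleton_mem_nhds (Ne.symm g.2)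
    have heF : ∀ j : ι, (e j : Set G) ∈ F := fun j => hB0.mem_of_mem (e j).2
    -- the chain of topologies
    set SIdx : ι → Type _ := fun i => A ⊕ {j : ι // j < i} with hSIdx
    set sU : ∀ i, SIdx i → Set G := fun i x => Sum.elim Ug (fun j => (e j.1 : Set G)) x
      with hsU
    have hsUF : ∀ i x, sU i x ∈ F := by
      rintro i (g | j)
      · exact hUgF g
      · exact heF j.1
    set T : ι → GroupTopology G := fun i => ⨅ x : SIdx i, pc (sU i x) with hT
    have hτleT : ∀ i, τGT ≤ T i := by
      intro i
      refine le_iInf fun x => ?_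
      exact (GroupTopology.toTopologicalSpace_le).1 (hple (sU i x) (hsUF i x))
    have hnhdsT : ∀ i, @nhds G (T i).toTopologicalSpace 1
        = ⨅ x : SIdx i, @nhds G (pc (sU i x)).toTopologicalSpace 1 := by
      intro i
      rw [hT]
      rw [GroupTopology.toTopologicalSpace_iInf, _root_.nhds_iInf]
    -- basis for T i
    set Bs : ∀ i, Set (Set G) := fun i =>
      Set.range fun s : Finset (SIdx i × ℕ) => ⋂ q ∈ s, Vf (sU i q.1) q.2
      with hBs
    have hTbasis : ∀ i, (@nhds G (T i).toTopologicalSpace 1).HasBasis (· ∈ Bs i) id := by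
      intro i
      rw [hnhdsT i]
      exact my_hasBasis_iInf fun x => hpbasis (sU i x) (hsUF i x)
    -- cardinality bound
    have hBscard : ∀ i, Cardinal.mk (Bs i) < κ := by
      intro i
      haveI : Infinite A := by
        rw [hA]
        have : Infinite {g : G // g ≠ 1} := by
          have h1 : ({1}ᶜ : Set G).Infinite := (Set.finite_singleton 1).infinite_compl
          exact (Set.infinite_coe_iff.2 h1)
        exact this
      haveI : Infinite (SIdx i) := by rw [hSIdx]; exact Sum.infinite_of_left
      have h1 : Cardinal.mk (Bs i) ≤ Cardinal.mk (Finset (SIdx i × ℕ)) := by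
        rw [hBs]; exact Cardinal.mk_range_le
      rw [Cardinal.mk_finset_of_infinite] at h1
      have h2 : Cardinal.mk (SIdx i × ℕ) = Cardinal.mk (SIdx i) := by
        rw [Cardinal.mk_prod, Cardinal.mk_nat, Cardinal.lift_aleph0, Cardinal.lift_uzero]
        exact Cardinal.mul_eq_left (Cardinal.infinite_iff.1 ‹_›)
          (Cardinal.infinite_iff.1 ‹_›) Cardinal.aleph0_ne_zero
      rw [h2] at h1
      have h3 : Cardinal.mk (SIdx i) < κ := by
        rw [hSIdx]
        have hAle : Cardinal.mk A < κ :=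
          lt_of_le_of_lt (Cardinal.mk_subtype_le _) hGκ
        have hIio : Cardinal.mk {j : ι // j < i} < κ := Cardinal.mk_Iio_ord_toType i
        calc Cardinal.mk (A ⊕ {j : ι // j < i})
            = Cardinal.mk A + Cardinal.mk {j : ι // j < i} := by
              rw [Cardinal.mk_sum, Cardinal.lift_id, Cardinal.lift_id]
          _ < κ := Cardinal.add_lt_of_lt hκinf hAle hIio
      exact lt_of_le_of_lt h1 h3
    -- each T i is strictly coarser than τ
    have hTne : ∀ i, T i ≠ τGT := by
      intro i hEq
      have : F.HasBasis (· ∈ Bs i) id := by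
        rw [hF, ← hEq]; exact hTbasis i
      exact hκmin _ ⟨Bs i, this, rfl⟩ (hBscard i)
    have hTlt : ∀ i, τGT < T i := fun i => lt_of_le_of_ne (hτleT i) (Ne.symm (hTne i))
    -- each T i is Hausdorff
    have hTH : ∀ i, @T2Space G (T i).toTopologicalSpace := by
      intro i
      letI := (T i).toTopologicalSpace
      haveI := (T i).toIsTopologicalGroup
      refine IsTopologicalGroup.t2Space_of_one_sep fun x hx => ?_
      refine ⟨Ug ⟨x, hx⟩, ?_, ?_⟩
      · have : @nhds G (T i).toTopologicalSpace 1 ≤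
            @nhds G (pc (sU i (Sum.inl ⟨x, hx⟩))).toTopologicalSpace 1 := by
          rw [hnhdsT i]; exact iInf_le _ _
        exact this (hpmem _ (hsUF i (Sum.inl ⟨x, hx⟩)))
      · simp [hUg]
    -- the chain
    set C : Set (GroupTopLattice G) := Set.range fun i : ι => toDual (T i) with hC
    have hTanti : ∀ i j : ι, i ≤ j → T j ≤ T i := by
      intro i j hij
      refine le_iInf fun x => ?_
      have : pc (sU i x) = pc (sU j (Sum.map id (fun s => ⟨s.1, lt_of_lt_of_le s.2 hij⟩) x)) := by
        cases x with
        | inl g => rfl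
        | inr s => rfl
      rw [this]
      exact iInf_le _ _
    have hCsub : C ⊆ {τ' | τ' < τ ∧ IsHausdorffTop τ'} := by
      rintro _ ⟨i, rfl⟩
      constructor
      · exact (OrderDual.ofDual_lt_ofDual (a := τ) (b := toDual (T i))).1 (hTlt i)
      · exact hTH i
    have hCchain : IsChain (· ≤ ·) C := by
      rintro _ ⟨i, rfl⟩ _ ⟨j, rfl⟩ -
      rcases le_total i j with h | h
      · exact Or.inl ((OrderDual.toDual_le_toDual).2 (hTanti i j h))
      · exact Or.inr ((OrderDual.toDual_le_toDual).2 (hTanti j i h))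
    obtain ⟨b, ⟨hbτ, -⟩, hub⟩ := hQ C hCsub hCchain
    have hbT : ∀ i, ofDual b ≤ T i := by
      intro i
      exact (OrderDual.ofDual_le_ofDual (a := b) (b := toDual (T i))).1
        (hub _ ⟨i, rfl⟩)
    -- b is finer than τ : contradiction
    haveI : NoMaxOrder ι := Cardinal.noMaxOrder hκinf
    have hble : ofDual b ≤ τGT := by
      refine my_le_of_nhds_le _ _ ?_
      intro s hs
      obtain ⟨v, hv, hvs⟩ := hB0.mem_iff.1 hs
      set j : ι := e.symm ⟨v, hv⟩ with hj
      obtain ⟨i, hi⟩ := exists_gt j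
      have h1 : @nhds G (ofDual b).toTopologicalSpace 1 ≤
          @nhds G (T i).toTopologicalSpace 1 := nhds_mono (hbT i)
      have h2 : @nhds G (T i).toTopologicalSpace 1 ≤
          @nhds G (pc (sU i (Sum.inr ⟨j, hi⟩))).toTopologicalSpace 1 := by
        rw [hnhdsT i]; exact iInf_le _ _
      refine h1 (h2 (Filter.mem_of_superset (hpmem _ (hsUF i (Sum.inr ⟨j, hi⟩))) ?_))
      have hred : sU i (Sum.inr ⟨j, hi⟩) = (e j : Set G) := rfl
      have hev : (e j : Set G) = v := by rw [hj]; simp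
      rw [hred, hev]
      exact hvs
    have hτltb : τGT < ofDual b := (OrderDual.ofDual_lt_ofDual (a := τ) (b := b)).1 hbτ
    exact absurd hble (not_le_of_gt hτltb)
  refine ⟨main, fun hcnt => ?_⟩
  obtain ⟨B, hB, hBcard⟩ := main
  haveI hcntB : Countable B :=
    Cardinal.mk_le_aleph0_iff.1 (le_trans hBcard (Cardinal.mk_le_aleph0))
  have hB' : F.HasBasis (fun _ : B => True) (fun b => (b : Set G)) := by
    rw [Filter.hasBasis_iff]
    intro t
    rw [hB.mem_iff]
    constructor
    · rintro ⟨v, hv, hvt⟩; exact ⟨⟨v, hv⟩, trivial, hvt⟩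
    · rintro ⟨v, -, hvt⟩; exact ⟨v.1, v.2, hvt⟩
  haveI hFcg : F.IsCountablyGenerated := hB'.isCountablyGenerated
  letI := τGT.toTopologicalSpace
  haveI := τGT.toIsTopologicalGroup
  refine ⟨fun x => ?_⟩
  change (nhds x).IsCountablyGenerated
  rw [← nhds_translation_mul_inv x]
  exact Filter.comap.isCountablyGenerated _ _
end
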